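/- arXiv:2101.07510 — 6 statements merged into one kernel-verified Lean document; each statement's English description precedes it below -/
import Mathlib

section
/- Let Δ' ⊆ Δ and let δ ∈ V∨ be dominant. Suppose ν ∈ V∨ is such that δ − ν = Σ_{γ ∈ Δ'} d_γ · γ∨ with d_γ > 0 for every γ ∈ Δ'. Let α ∈ Δ ∖ Δ' be a simple root that is a neighbour of Δ' in the Dynkin diagram, i.e. ⟨α, γ∨⟩ < 0 for some γ ∈ Δ'. Then ⟨α, ν⟩ > 0. (Key intermediate claim in the proof of Lemma 7.4 of the paper.) -/
open Module

/-- Data of a reduced crystallographic root system `Φ` spanning a finite-dimensional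
`ℚ`-vector space `V`, with a fixed base `Δ` of simple roots, set of positive roots
`pos`, coroots `coroot α` in the dual space `V∨`, and Weyl group `W` (generated by the
reflections in the roots). The pairing `⟨x, f⟩` of `x ∈ V` with `f ∈ V∨` is `f x`. -/
structure RootSystemData (V : Type) [AddCommGroup V] [Module ℚ V] [FiniteDimensional ℚ V] where
  /-- the (finite) set of roots -/
  Φ : Finset V
  /-- the base of simple roots -/
  Δ : Finset V
  /-- the set of positive roots -/
  pos : Finset V
  /-- the coroot `α∨ ∈ V∨` associated with a root `α` -/
  coroot : V → Module.Dual ℚ V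
  /-- the Weyl group, as a group of linear automorphisms of `V` -/
  W : Subgroup (V ≃ₗ[ℚ] V)
  span_Φ : Submodule.span ℚ (Φ : Set V) = ⊤
  zero_notin : (0:V) ∉ Φ
  Δ_sub : Δ ⊆ Φ
  Δ_indep : LinearIndependent ℚ (Subtype.val : {x // x ∈ Δ} → V)
  pos_sub : pos ⊆ Φ
  mem_pos_iff : ∀ β ∈ Φ, (β ∈ pos ↔ ∃ c : V → ℚ, (∀ α, 0 ≤ c α) ∧ β = ∑ α ∈ Δ, c α • α)
  pos_or_neg : ∀ β ∈ Φ, β ∈ pos ∨ -β ∈ pos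
  coroot_self : ∀ α, α ∈ Φ → coroot α α = 2
  crystallographic : ∀ α ∈ Φ, ∀ β ∈ Φ, ∃ n : ℤ, coroot α β = (n:ℚ)
  reduced : ∀ α ∈ Φ, ∀ c : ℚ, c • α ∈ Φ → c = 1 ∨ c = -1
  reflect_root : ∀ α ∈ Φ, ∀ β ∈ Φ, β - coroot α β • α ∈ Φ
  reflect_coroot : ∀ α ∈ Φ, ∀ β ∈ Φ, ∀ x : V,
    coroot (β - coroot α β • α) x = coroot β (x - coroot α x • α)
  weyl_gen : W = Subgroup.closure
    { w : V ≃ₗ[ℚ] V | ∃ α, ∃ hα : α ∈ Φ, w = Module.reflection (coroot_self α hα) }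

namespace RootSystemData

variable {V : Type} [AddCommGroup V] [Module ℚ V] [FiniteDimensional ℚ V] (R : RootSystemData V)

/-- The (contragredient) action of a linear automorphism `w` of `V` on the dual space `V∨`:
`⟨x, w(ν)⟩ = ⟨w⁻¹(x), ν⟩`, so that `⟨w(x), w(ν)⟩ = ⟨x, ν⟩`. -/
noncomputable def dAct (w : V ≃ₗ[ℚ] V) (ν : Module.Dual ℚ V) : Module.Dual ℚ V :=
  ν.comp (w.symm : V →ₗ[ℚ] V)

/-- `ν ∈ V∨` is dominant if `⟨α, ν⟩ ≥ 0` for all simple roots `α ∈ Δ`. -/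
def IsDominant (ν : Module.Dual ℚ V) : Prop := ∀ α ∈ R.Δ, 0 ≤ ν α

/-- `ν ≤ ν'` iff `ν' − ν` is a non-negative rational linear combination of the positive
coroots `{β∨ : β ∈ Φ⁺}`. -/
def le (ν ν' : Module.Dual ℚ V) : Prop :=
  ∃ c : V → ℚ, (∀ β, 0 ≤ c β) ∧ ν' - ν = ∑ β ∈ R.pos, c β • R.coroot β

end RootSystemData

lemma coroot_nonpos_of_ne {V : Type} [AddCommGroup V] [Module ℚ V]
    [FiniteDimensional ℚ V] (R : RootSystemData V)
    {α β : V} (hα : α ∈ R.Δ) (hβ : β ∈ R.Δ) (hne : α ≠ β) : R.coroot β α ≤ 0 := by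
  classical
  by_contra hc
  push_neg at hc
  set c : ℚ := R.coroot β α with hcdef
  have hαΦ : α ∈ R.Φ := R.Δ_sub hα
  have hβΦ : β ∈ R.Φ := R.Δ_sub hβ
  have hγΦ : α - c • β ∈ R.Φ := R.reflect_root β hβΦ α hαΦ
  have hindep := Fintype.linearIndependent_iff.mp R.Δ_indep
  rcases R.pos_or_neg _ hγΦ with hpos | hpos
  · obtain ⟨e, he0, heq⟩ := (R.mem_pos_iff _ (R.pos_sub hpos)).mp hpos
    set g : {x // x ∈ R.Δ} → ℚ := fun σ =>
      (if (σ : V) = α then 1 else 0) - (if (σ : V) = β then c else 0) - e σ with hg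
    have hsum : ∑ σ : {x // x ∈ R.Δ}, g σ • (σ : V) = 0 := by
      simp only [hg, sub_smul, ite_smul, one_smul, zero_smul, Finset.sum_sub_distrib]
      rw [Finset.sum_coe_sort R.Δ (fun x => if x = α then x else 0),
        Finset.sum_coe_sort R.Δ (fun x => if x = β then c • x else 0),
        Finset.sum_coe_sort R.Δ (fun x => e x • x),
        Finset.sum_ite_eq' R.Δ α (fun x => x),
        Finset.sum_ite_eq' R.Δ β (fun x => c • x)]
      simp only [hα, hβ, if_true, ← heq]
      abel
    have hzero := hindep g hsum ⟨β, hβ⟩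
    simp only [hg, if_neg (Ne.symm hne), if_pos rfl, if_true] at hzero
    have : e β = -c := by linarith
    have := he0 β
    linarith
  · rw [neg_sub] at hpos
    obtain ⟨e, he0, heq⟩ := (R.mem_pos_iff _ (R.pos_sub hpos)).mp hpos
    set g : {x // x ∈ R.Δ} → ℚ := fun σ =>
      (if (σ : V) = β then c else 0) - (if (σ : V) = α then 1 else 0) - e σ with hg
    have hsum : ∑ σ : {x // x ∈ R.Δ}, g σ • (σ : V) = 0 := by
      simp only [hg, sub_smul, ite_smul, one_smul, zero_smul, Finset.sum_sub_distrib]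
      rw [Finset.sum_coe_sort R.Δ (fun x => if x = β then c • x else 0),
        Finset.sum_coe_sort R.Δ (fun x => if x = α then x else 0),
        Finset.sum_coe_sort R.Δ (fun x => e x • x),
        Finset.sum_ite_eq' R.Δ β (fun x => c • x),
        Finset.sum_ite_eq' R.Δ α (fun x => x)]
      simp only [hα, hβ, if_true, ← heq]
      abel
    have hzero := hindep g hsum ⟨α, hα⟩
    simp only [hg, if_neg hne, if_pos rfl, if_true] at hzero
    have : e α = -1 := by linarith
    have := he0 α
    linarith

/-- Intermediate claim in the proof of Lemma 7.4: let `Δ' ⊆ Δ`, let `δ ∈ V∨` be dominant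
and suppose `δ − ν = Σ_{γ ∈ Δ'} d_γ · γ∨` with `d_γ > 0` for all `γ ∈ Δ'`. If `α ∈ Δ ∖ Δ'`
is a neighbour of `Δ'` in the Dynkin diagram (`⟨α, γ∨⟩ < 0` for some `γ ∈ Δ'`), then
`⟨α, ν⟩ > 0`. -/
theorem pos_pairing_of_dynkin_neighbour {V : Type} [AddCommGroup V] [Module ℚ V]
    [FiniteDimensional ℚ V] (R : RootSystemData V)
    (Δ' : Finset V) (hΔ' : Δ' ⊆ R.Δ)
    (δ : Module.Dual ℚ V) (hδ : R.IsDominant δ)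
    (ν : Module.Dual ℚ V) (d : V → ℚ) (hd : ∀ γ ∈ Δ', 0 < d γ)
    (heq : δ - ν = ∑ γ ∈ Δ', d γ • R.coroot γ)
    (α : V) (hα : α ∈ R.Δ) (hα' : α ∉ Δ')
    (hnb : ∃ γ ∈ Δ', R.coroot γ α < 0) :
    0 < ν α := by
  have hval : δ α - ν α = ∑ γ ∈ Δ', d γ * R.coroot γ α := by
    have := congrArg (fun f : Module.Dual ℚ V => f α) heq
    simpa using this
  have hsum : ∑ γ ∈ Δ', d γ * R.coroot γ α < 0 := by
    obtain ⟨γ₀, hγ₀, hγ₀neg⟩ := hnb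
    calc ∑ γ ∈ Δ', d γ * R.coroot γ α < ∑ _γ ∈ Δ', (0:ℚ) := by
          refine Finset.sum_lt_sum (fun γ hγ => ?_) ⟨γ₀, hγ₀, ?_⟩
          · have hne : α ≠ γ := fun h => hα' (h ▸ hγ)
            have := coroot_nonpos_of_ne R hα (hΔ' hγ) hne
            exact mul_nonpos_of_nonneg_of_nonpos (hd γ hγ).le this
          · exact mul_neg_of_pos_of_neg (hd γ₀ hγ₀) hγ₀neg
      _ = 0 := Finset.sum_const_zero
  have hδα := hδ α hα
  linarith
end

section
/- Let δ ∈ V∨ be dominant and let ν₁, ν₂ ∈ V∨ be Hodge–Newton indecomposable with respect to δ, with ν₁ − ν₂ lying in the ℚ-span of the coroots. Suppose ν' ∈ V∨ is a least upper bound of {ν₁, ν₂} in the set of dominant elements of V∨ partially ordered by ≤. Then ν' ≤ δ and ν' is Hodge–Newton indecomposable with respect to δ. (Combinatorial content of Lemma 7.6 of the paper: the join of two Hodge–Newton indecomposable classes is Hodge–Newton indecomposable.) -/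
open Module

namespace RootSystemData

variable {V : Type} [AddCommGroup V] [Module ℚ V] [FiniteDimensional ℚ V] (R : RootSystemData V)

/-- The Hodge–Newton decomposability condition for `ν` with respect to `δ`: there is a
proper subset `Δ' ⊊ Δ` containing `{α ∈ Δ : ⟨α, ν⟩ = 0}` such that `δ − ν` lies in the
`ℚ`-span of `{α∨ : α ∈ Δ'}`. -/
def HNCond (δ ν : Module.Dual ℚ V) : Prop :=
  ∃ Δ' : Finset V, Δ' ⊆ R.Δ ∧ Δ' ≠ R.Δ ∧ (∀ α ∈ R.Δ, ν α = 0 → α ∈ Δ') ∧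
    δ - ν ∈ Submodule.span ℚ (R.coroot '' (Δ' : Set V))

/-- `ν` is Hodge–Newton indecomposable with respect to a dominant `δ`: `ν` is dominant,
`ν ≤ δ`, and the Hodge–Newton decomposability condition fails. -/
def HNIndecomposable (δ ν : Module.Dual ℚ V) : Prop :=
  R.IsDominant ν ∧ R.le ν δ ∧ ¬ R.HNCond δ ν

end RootSystemData
namespace RootSystemData

variable {V : Type} [AddCommGroup V] [Module ℚ V] [FiniteDimensional ℚ V] (R : RootSystemData V)

lemma sum_smul_eq_zero {f : V → ℚ} (h : ∑ α ∈ R.Δ, f α • α = 0) : ∀ α ∈ R.Δ, f α = 0 := by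
  classical
  have h' : ∑ i : {x // x ∈ R.Δ}, f i.val • i.val = 0 := by
    rw [Finset.sum_coe_sort R.Δ (fun a => f a • a)] at *
    exact h
  have := Fintype.linearIndependent_iff.mp R.Δ_indep (fun i => f i.val) h'
  intro α hα
  exact this ⟨α, hα⟩

lemma coeff_unique {f g : V → ℚ}
    (h : ∑ α ∈ R.Δ, f α • α = ∑ α ∈ R.Δ, g α • α) : ∀ α ∈ R.Δ, f α = g α := by
  have h0 : ∑ α ∈ R.Δ, (f α - g α) • α = 0 := by
    simp only [sub_smul, Finset.sum_sub_distrib, h, sub_self]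
  intro α hα
  have := R.sum_smul_eq_zero h0 α hα
  linarith

lemma neg_notin_pos {β : V} (hβ : β ∈ R.pos) : -β ∉ R.pos := by
  intro hnβ
  obtain ⟨c, hc0, hcs⟩ := (R.mem_pos_iff β (R.pos_sub hβ)).1 hβ
  obtain ⟨d, hd0, hds⟩ := (R.mem_pos_iff (-β) (R.pos_sub hnβ)).1 hnβ
  have h0 : ∑ α ∈ R.Δ, (c α + d α) • α = 0 := by
    simp only [add_smul, Finset.sum_add_distrib, ← hcs, ← hds, add_neg_cancel]
  have hβ0 : β = 0 := by
    rw [hcs]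
    apply Finset.sum_eq_zero
    intro α hα
    have := R.sum_smul_eq_zero h0 α hα
    have : c α = 0 := by have := hc0 α; have := hd0 α; linarith
    simp [this]
  exact R.zero_notin (hβ0 ▸ R.pos_sub hβ)

lemma pos_of_coeff_pos {β : V} (hβ : β ∈ R.Φ) (f : V → ℚ)
    (hf : β = ∑ α ∈ R.Δ, f α • α) {α₀ : V} (hα₀ : α₀ ∈ R.Δ) (hfα₀ : 0 < f α₀) :
    β ∈ R.pos := by
  rcases R.pos_or_neg β hβ with h | h
  · exact h
  · obtain ⟨d, hd0, hds⟩ := (R.mem_pos_iff (-β) (R.pos_sub h)).1 h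
    have h0 : ∑ α ∈ R.Δ, (f α + d α) • α = 0 := by
      simp only [add_smul, Finset.sum_add_distrib, ← hf, ← hds, add_neg_cancel]
    have := R.sum_smul_eq_zero h0 α₀ hα₀
    have := hd0 α₀
    linarith

lemma Δ_sub_pos : R.Δ ⊆ R.pos := by
  classical
  intro α hα
  rw [R.mem_pos_iff α (R.Δ_sub hα)]
  exact ⟨fun x => if x = α then 1 else 0, fun x => by positivity,
    by simp [ite_smul, hα]⟩

lemma coeff_nonneg_of_pos {β : V} (hβ : β ∈ R.pos) {f : V → ℚ}
    (hf : β = ∑ α ∈ R.Δ, f α • α) : ∀ α ∈ R.Δ, 0 ≤ f α := by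
  obtain ⟨c, hc0, hcs⟩ := (R.mem_pos_iff β (R.pos_sub hβ)).1 hβ
  intro α hα
  have := R.coeff_unique (hcs.symm.trans hf) α hα
  rw [← this]; exact hc0 α

lemma cartan_nonpos {α γ : V} (hα : α ∈ R.Δ) (hγ : γ ∈ R.Δ) (hne : γ ≠ α) :
    R.coroot α γ ≤ 0 := by
  classical
  set n := R.coroot α γ with hn
  have hroot : γ - n • α ∈ R.Φ := R.reflect_root α (R.Δ_sub hα) γ (R.Δ_sub hγ)
  set f : V → ℚ := fun x => (if x = γ then 1 else 0) - (if x = α then n else 0) with hfdef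
  have hsum : γ - n • α = ∑ a ∈ R.Δ, f a • a := by
    simp only [hfdef, sub_smul, Finset.sum_sub_distrib, ite_smul, zero_smul]
    rw [Finset.sum_ite_eq' R.Δ γ (fun x => (1:ℚ) • x), Finset.sum_ite_eq' R.Δ α (fun x => n • x)]
    simp [hα, hγ]
  have hfγ : 0 < f γ := by simp [hfdef, hne]
  have hpos : γ - n • α ∈ R.pos := R.pos_of_coeff_pos hroot f hsum hγ hfγ
  have := R.coeff_nonneg_of_pos hpos hsum α hα
  simp only [hfdef] at this
  rw [if_neg (Ne.symm hne), if_pos trivial] at this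
  linarith

end RootSystemData
namespace RootSystemData

variable {V : Type} [AddCommGroup V] [Module ℚ V] [FiniteDimensional ℚ V] (R : RootSystemData V)

lemma coroot_pos_symm {α β : V} (hα : α ∈ R.Φ) (hβ : β ∈ R.Φ)
    (h : 0 < R.coroot β α) : 0 < R.coroot α β := by
  classical
  by_contra hb'
  push_neg at hb'
  set a := R.coroot β α with ha
  set b := R.coroot α β with hbdef
  set γ := α - a • β with hγdef
  have hγ : γ ∈ R.Φ := R.reflect_root β hβ α hα
  have hαγ : R.coroot α γ = 2 - a * b := by
    have h1 : R.coroot α γ = R.coroot α α - a * R.coroot α β := by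
      simp [hγdef, map_sub, map_smul, smul_eq_mul]
    rw [h1, R.coroot_self α hα, ← hbdef]
  have hγα : R.coroot γ α = 2 - a * b := by
    have h1 := R.reflect_coroot β hβ α hα α
    rw [← ha, ← hγdef] at h1
    rw [h1, hαγ]
  set m := 2 - a * b with hmdef
  have hm2 : 2 ≤ m := by nlinarith
  by_cases hdep : ∃ k : ℚ, γ = k • α
  · obtain ⟨k, hk⟩ := hdep
    rcases R.reduced α hα k (hk ▸ hγ) with h1 | h1
    · rw [h1, one_smul] at hk
      have h0 : a • β = 0 := by
        have h2 : α - a • β = α := by rw [← hγdef, hk]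
        exact sub_eq_self.mp h2
      rcases smul_eq_zero.mp h0 with h2 | h2
      · exact absurd h2 (ne_of_gt h)
      · exact R.zero_notin (h2 ▸ hβ)
    · rw [h1] at hk
      have h0 : β = (a⁻¹ * 2) • α := by
        have h3 : α - a • β = -α := by rw [← hγdef, hk, neg_smul, one_smul]
        have h5 := congrArg (fun x => a⁻¹ • (α - x)) h3
        simp only [sub_sub_cancel, sub_neg_eq_add, smul_smul, ← two_smul ℚ α] at h5
        rwa [inv_mul_cancel₀ h.ne', one_smul] at h5
      rcases R.reduced α hα (a⁻¹ * 2) (h0 ▸ hβ) with h2 | h2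
      · have hba : b = 2 := by
          have ha2 : a = 2 := by
            field_simp at h2; linarith
          have hβα : β = α := by rw [h0, ha2]; norm_num
          rw [hbdef, hβα, R.coroot_self α hα]
        rw [hba] at hb'; linarith
      · have hpos2 : 0 < a⁻¹ * 2 := by positivity
        rw [h2] at hpos2; linarith
  · -- independent case: build an infinite family of roots
    set s : ℕ → ℚ × ℚ := fun n => Nat.rec ((1:ℚ), (0:ℚ))
      (fun _ p => (-p.1 - m * p.2, m * p.1 + (m * m - 1) * p.2)) n with hsdef
    have hs0 : s 0 = (1, 0) := rfl
    have hsucc : ∀ n, s (n+1) = (-(s n).1 - m * (s n).2, m * (s n).1 + (m*m-1) * (s n).2) :=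
      fun n => rfl
    set v : ℕ → V := fun n => (s n).1 • α + (s n).2 • γ with hvdef
    have hb2 : ∀ n, (s n).2 + m ≤ (s (n+1)).2 ∧ 0 ≤ (s n).2 := by
      intro n; induction n with
      | zero => simp [hsucc, hs0]
      | succ n ih =>
        have hrec : (s (n+2)).2 = (m*m-2) * (s (n+1)).2 - (s n).2 := by
          simp only [hsucc]; ring
        refine ⟨?_, by nlinarith [ih.1, ih.2]⟩
        rw [hrec]
        nlinarith [ih.1, ih.2, hm2,
          mul_le_mul_of_nonneg_left ih.1 (show (0:ℚ) ≤ m*m-3 by nlinarith),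
          mul_nonneg (show (0:ℚ) ≤ m*m-4 by nlinarith) (show (0:ℚ) ≤ (s n).2 + m by linarith)]
    have bmono : StrictMono (fun n => (s n).2) :=
      strictMono_nat_of_lt_succ (fun n => by have := (hb2 n).1; linarith)
    have hcαγ : R.coroot α γ = m := hαγ
    have hcγα : R.coroot γ α = m := hγα
    have hv : ∀ n, v n ∈ R.Φ := by
      intro n; induction n with
      | zero => simpa [hvdef, hs0] using hα
      | succ n ih =>
        have h1 : v n - R.coroot α (v n) • α ∈ R.Φ := R.reflect_root α hα (v n) ih
        have h2 := R.reflect_root γ hγ _ h1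
        have heq : (v n - R.coroot α (v n) • α) - R.coroot γ (v n - R.coroot α (v n) • α) • γ
            = v (n+1) := by
          simp only [hvdef, hsucc, map_add, map_sub, map_smul, smul_eq_mul, hcαγ, hcγα,
            R.coroot_self α hα, R.coroot_self γ hγ]
          module
        rwa [heq] at h2
    have hinj : Function.Injective v := by
      intro i j hij
      by_contra hne2
      wlog hlt : i < j generalizing i j
      · exact this hij.symm (Ne.symm hne2) (by omega)
      have hbij : (s i).2 < (s j).2 := bmono hlt
      apply hdep
      refine ⟨((s j).2 - (s i).2)⁻¹ * ((s i).1 - (s j).1), ?_⟩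
      have h3 : ((s j).2 - (s i).2) • γ = ((s i).1 - (s j).1) • α := by
        simp only [hvdef] at hij
        rw [sub_smul, sub_smul, sub_eq_sub_iff_add_eq_add]
        rw [hij]; abel
      have := congrArg (fun x => ((s j).2 - (s i).2)⁻¹ • x) h3
      simpa [smul_smul, inv_mul_cancel₀ (sub_ne_zero.mpr (ne_of_gt hbij))] using this
    exact absurd (Set.infinite_of_injective_forall_mem hinj (fun n => Finset.mem_coe.mpr (hv n)))
      (R.Φ.finite_toSet).not_infinite

end RootSystemData
namespace RootSystemData

variable {V : Type} [AddCommGroup V] [Module ℚ V] [FiniteDimensional ℚ V] (R : RootSystemData V)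

open scoped Classical in
lemma ind_sum {γ : V} (hγ : γ ∈ R.Δ) (t : ℚ) :
    ∑ a ∈ R.Δ, (if a = γ then t else 0) • a = t • γ := by
  simp [ite_smul, Finset.sum_ite_eq', hγ]

open scoped Classical in
lemma ind_sum_coroot {α : V} (hα : α ∈ R.Δ) (t : ℚ) :
    ∑ γ ∈ R.Δ, (if γ = α then t else 0) • R.coroot γ = t • R.coroot α := by
  simp [ite_smul, Finset.sum_ite_eq', hα]

lemma reflect_simple_pos {γ β : V} (hγ : γ ∈ R.Δ) (hβ : β ∈ R.pos) (hne : β ≠ γ) :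
    β - R.coroot γ β • γ ∈ R.pos ∧ β - R.coroot γ β • γ ≠ γ := by
  classical
  obtain ⟨c, hc0, hcs⟩ := (R.mem_pos_iff β (R.pos_sub hβ)).1 hβ
  set n := R.coroot γ β with hn
  have hroot : β - n • γ ∈ R.Φ := R.reflect_root γ (R.Δ_sub hγ) β (R.pos_sub hβ)
  have hex : ∃ α ∈ R.Δ, α ≠ γ ∧ 0 < c α := by
    by_contra hno
    push_neg at hno
    have hβγ : β = c γ • γ := by
      rw [hcs, Finset.sum_eq_single γ]
      · intro b hb hbne
        have h0 : c b = 0 := le_antisymm (hno b hb hbne) (hc0 b)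
        rw [h0, zero_smul]
      · intro hγ'; exact absurd hγ hγ'
    rcases R.reduced γ (R.Δ_sub hγ) (c γ) (hβγ ▸ R.pos_sub hβ) with h1 | h1
    · exact hne (by rw [hβγ, h1, one_smul])
    · have := hc0 γ; rw [h1] at this; linarith
  obtain ⟨α, hαΔ, hαγ, hcα⟩ := hex
  set f : V → ℚ := fun x => c x - (if x = γ then n else 0) with hf
  have hsum : β - n • γ = ∑ a ∈ R.Δ, f a • a := by
    simp only [hf, sub_smul, Finset.sum_sub_distrib, ← hcs]
    rw [R.ind_sum hγ n]
  have hpos : β - n • γ ∈ R.pos := by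
    apply R.pos_of_coeff_pos hroot f hsum hαΔ
    simp only [hf, if_neg hαγ, sub_zero]
    exact hcα
  refine ⟨hpos, fun hEq => ?_⟩
  have hgam : ∑ a ∈ R.Δ, f a • a = ∑ a ∈ R.Δ, (fun x => if x = γ then (1:ℚ) else 0) a • a := by
    rw [← hsum, hEq]
    rw [show (∑ a ∈ R.Δ, (fun x => if x = γ then (1:ℚ) else 0) a • a) = (1:ℚ) • γ from R.ind_sum hγ 1]
    rw [one_smul]
  have h6 := R.coeff_unique hgam α hαΔ
  simp only [hf, if_neg hαγ, sub_zero] at h6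
  rw [h6] at hcα
  exact lt_irrefl 0 hcα

lemma coroot_rho {γ : V} (hγ : γ ∈ R.Δ) : R.coroot γ (∑ β ∈ R.pos, β) = 2 := by
  classical
  have hγΦ := R.Δ_sub hγ
  have hγp : γ ∈ R.pos := R.Δ_sub_pos hγ
  rw [← Finset.add_sum_erase _ _ hγp, map_add, R.coroot_self γ hγΦ, map_sum]
  have hmap : ∀ β ∈ R.pos.erase γ, β - R.coroot γ β • γ ∈ R.pos.erase γ := by
    intro β hβ
    obtain ⟨h1, h2⟩ := R.reflect_simple_pos hγ (Finset.mem_of_mem_erase hβ) (Finset.ne_of_mem_erase hβ)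
    exact Finset.mem_erase.mpr ⟨h2, h1⟩
  have hinv : ∀ β ∈ R.pos.erase γ,
      (β - R.coroot γ β • γ) - R.coroot γ (β - R.coroot γ β • γ) • γ = β := by
    intro β _
    simp only [map_sub, map_smul, smul_eq_mul, R.coroot_self γ hγΦ]
    module
  have hre : ∑ β ∈ R.pos.erase γ, R.coroot γ β
      = ∑ β ∈ R.pos.erase γ, R.coroot γ (β - R.coroot γ β • γ) := by
    exact Finset.sum_nbij' (fun β => β - R.coroot γ β • γ) (fun β => β - R.coroot γ β • γ)
      hmap hmap hinv hinv (fun β hβ => rfl) |>.symm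
  have hneg : ∀ β ∈ R.pos.erase γ, R.coroot γ (β - R.coroot γ β • γ) = - R.coroot γ β := by
    intro β _
    simp only [map_sub, map_smul, smul_eq_mul, R.coroot_self γ hγΦ]
    ring
  rw [Finset.sum_congr rfl hneg] at hre
  rw [Finset.sum_neg_distrib] at hre
  have hT : ∑ β ∈ R.pos.erase γ, R.coroot γ β = 0 := by linarith [hre]
  rw [hT, add_zero]

lemma zero_combo {z : V → ℚ} (hz : ∀ γ, 0 ≤ z γ)
    (h : ∑ γ ∈ R.Δ, z γ • R.coroot γ = 0) : ∀ α ∈ R.Δ, z α = 0 := by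
  have hev : ∑ γ ∈ R.Δ, z γ * R.coroot γ (∑ β ∈ R.pos, β) = 0 := by
    have h1 := congrArg (fun φ : Module.Dual ℚ V => φ (∑ β ∈ R.pos, β)) h
    simpa only [LinearMap.coe_sum, Finset.sum_apply, LinearMap.smul_apply, smul_eq_mul,
      LinearMap.zero_apply] using h1
  have h2 : ∑ γ ∈ R.Δ, z γ * 2 = 0 := by
    rw [← hev]
    exact Finset.sum_congr rfl (fun γ hγ => by rw [R.coroot_rho hγ])
  have h3 := (Finset.sum_eq_zero_iff_of_nonneg (fun γ _ => by linarith [hz γ])).1 h2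
  intro α hα
  have := h3 α hα
  linarith

lemma coroot_pos_combo : ∀ β ∈ R.pos, ∃ x : V → ℚ, (∀ γ, 0 ≤ x γ) ∧
    R.coroot β = ∑ γ ∈ R.Δ, x γ • R.coroot γ := by
  classical
  have hchoice : ∀ β : V, ∃ cb : V → ℚ,
      β ∈ R.pos → ((∀ α, 0 ≤ cb α) ∧ β = ∑ α ∈ R.Δ, cb α • α) := by
    intro β
    by_cases hβ : β ∈ R.pos
    · obtain ⟨cb, h1, h2⟩ := (R.mem_pos_iff β (R.pos_sub hβ)).1 hβ
      exact ⟨cb, fun _ => ⟨h1, h2⟩⟩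
    · exact ⟨0, fun hc => absurd hc hβ⟩
  choose c hc using hchoice
  set ht : V → ℚ := fun β => ∑ α ∈ R.Δ, c β α with htdef
  suffices H : ∀ n : ℕ, ∀ β ∈ R.pos, (R.pos.filter (fun β' => ht β' < ht β)).card = n →
      ∃ x : V → ℚ, (∀ γ, 0 ≤ x γ) ∧ R.coroot β = ∑ γ ∈ R.Δ, x γ • R.coroot γ by
    intro β hβ; exact H _ β hβ rfl
  intro n
  induction n using Nat.strong_induction_on with
  | _ n ih =>
  intro β hβ hcard
  have hβΦ := R.pos_sub hβ
  by_cases hβΔ : β ∈ R.Δ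
  · refine ⟨fun x => if x = β then 1 else 0, fun x => by positivity, ?_⟩
    rw [R.ind_sum_coroot hβΔ 1, one_smul]
  · obtain ⟨hc0, hcs⟩ := hc β hβ
    have h2 : ∑ a ∈ R.Δ, c β a * R.coroot β a = 2 := by
      have h1 : R.coroot β β = R.coroot β (∑ a ∈ R.Δ, c β a • a) := by rw [← hcs]
      rw [map_sum] at h1
      simp only [map_smul, smul_eq_mul] at h1
      rw [← h1, R.coroot_self β hβΦ]
    have hex : ∃ a ∈ R.Δ, 0 < c β a ∧ 0 < R.coroot β a := by
      by_contra hno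
      push_neg at hno
      have hle : ∑ a ∈ R.Δ, c β a * R.coroot β a ≤ 0 := by
        apply Finset.sum_nonpos
        intro a haΔ
        rcases lt_or_eq_of_le (hc0 a) with hpos | h0
        · exact mul_nonpos_iff.mpr (Or.inl ⟨le_of_lt hpos, hno a haΔ hpos⟩)
        · rw [← h0, zero_mul]
      linarith
    obtain ⟨α, hαΔ, hcα, hba⟩ := hex
    have hαΦ := R.Δ_sub hαΔ
    have hab : 0 < R.coroot α β := R.coroot_pos_symm hαΦ hβΦ hba
    set nn := R.coroot α β with hnn
    set β' := β - nn • α with hβ'def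
    have hβ'Φ : β' ∈ R.Φ := R.reflect_root α hαΦ β hβΦ
    have hexγ : ∃ γ₀ ∈ R.Δ, γ₀ ≠ α ∧ 0 < c β γ₀ := by
      by_contra hno
      push_neg at hno
      have hβα : β = c β α • α := by
        conv_lhs => rw [hcs]
        exact Finset.sum_eq_single α
          (fun b hb hbne => by
            have h0 : c β b = 0 := le_antisymm (hno b hb hbne) (hc0 b)
            rw [h0, zero_smul])
          (fun hα' => absurd hαΔ hα')
      obtain ⟨k, hk⟩ : ∃ k : ℚ, β = k • α := ⟨c β α, hβα⟩
      rcases R.reduced α hαΦ k (by rwa [hk] at hβΦ) with h1 | h1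
      · exact hβΔ (by rw [hk, h1, one_smul]; exact hαΔ)
      · rw [h1, neg_one_smul] at hk
        have hnp : -β ∈ R.pos := by rw [hk, neg_neg]; exact R.Δ_sub_pos hαΔ
        exact R.neg_notin_pos hβ hnp
    obtain ⟨γ₀, hγ₀Δ, hγ₀α, hcγ₀⟩ := hexγ
    set f : V → ℚ := fun x => c β x - (if x = α then nn else 0) with hfdef
    have hsum' : β' = ∑ a ∈ R.Δ, f a • a := by
      simp only [hβ'def, hfdef, sub_smul, Finset.sum_sub_distrib, ← hcs]
      rw [R.ind_sum hαΔ nn]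
    have hβ'pos : β' ∈ R.pos := by
      apply R.pos_of_coeff_pos hβ'Φ f hsum' hγ₀Δ
      simp only [hfdef, if_neg hγ₀α, sub_zero]
      exact hcγ₀
    obtain ⟨hc0', hcs'⟩ := hc β' hβ'pos
    have hcoef : ∀ a ∈ R.Δ, c β' a = f a := R.coeff_unique (hcs'.symm.trans hsum')
    have hht : ht β' = ht β - nn := by
      simp only [htdef]
      rw [Finset.sum_congr rfl hcoef]
      simp only [hfdef, Finset.sum_sub_distrib]
      rw [Finset.sum_ite_eq' R.Δ α (fun _ => nn), if_pos hαΔ]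
    have hlt : ht β' < ht β := by rw [hht]; linarith
    have hcard' : (R.pos.filter (fun y => ht y < ht β')).card < n := by
      rw [← hcard]
      apply Finset.card_lt_card
      rw [Finset.ssubset_iff_of_subset (fun y hy => by
        rw [Finset.mem_filter] at *
        exact ⟨hy.1, lt_trans hy.2 hlt⟩)]
      exact ⟨β', Finset.mem_filter.mpr ⟨hβ'pos, hlt⟩,
        fun hmem => absurd (Finset.mem_filter.mp hmem).2 (lt_irrefl _)⟩
    obtain ⟨x, hx0, hxs⟩ := ih _ hcard' β' hβ'pos rfl
    set e := R.coroot β α with hedef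
    have hcor : R.coroot β = R.coroot β' + e • R.coroot α := by
      apply LinearMap.ext
      intro w
      have h5 := R.reflect_coroot α hαΦ β hβΦ w
      rw [← hnn, ← hβ'def] at h5
      simp only [LinearMap.add_apply, LinearMap.smul_apply, smul_eq_mul, h5, map_sub, map_smul,
        hedef]
      ring
    refine ⟨fun γ => x γ + (if γ = α then e else 0), ?_, ?_⟩
    · intro γ
      apply add_nonneg (hx0 γ)
      by_cases hh : γ = α
      · rw [if_pos hh]; linarith
      · rw [if_neg hh]
    · rw [hcor, hxs]
      simp only [add_smul, Finset.sum_add_distrib, R.ind_sum_coroot hαΔ]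

end RootSystemData
namespace RootSystemData

variable {V : Type} [AddCommGroup V] [Module ℚ V] [FiniteDimensional ℚ V] (R : RootSystemData V)

lemma sum_pos_combo {cc : V → ℚ} (hcc : ∀ β, 0 ≤ cc β) :
    ∃ w : V → ℚ, (∀ γ, 0 ≤ w γ) ∧
      ∑ β ∈ R.pos, cc β • R.coroot β = ∑ γ ∈ R.Δ, w γ • R.coroot γ := by
  classical
  choose! x hx0 hxs using R.coroot_pos_combo
  refine ⟨fun γ => ∑ β ∈ R.pos, cc β * x β γ,
    fun γ => Finset.sum_nonneg (fun β hβ => mul_nonneg (hcc β) (hx0 β hβ γ)), ?_⟩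
  rw [Finset.sum_congr rfl (fun β hβ => by rw [hxs β hβ] :
    ∀ β ∈ R.pos, cc β • R.coroot β = cc β • ∑ γ ∈ R.Δ, x β γ • R.coroot γ)]
  rw [Finset.sum_congr rfl (fun β _ => Finset.smul_sum :
    ∀ β ∈ R.pos, cc β • ∑ γ ∈ R.Δ, x β γ • R.coroot γ
      = ∑ γ ∈ R.Δ, cc β • (x β γ • R.coroot γ))]
  rw [Finset.sum_comm]
  exact Finset.sum_congr rfl (fun γ _ => by
    rw [Finset.sum_smul]
    exact Finset.sum_congr rfl (fun β _ => (smul_smul _ _ _)))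

lemma le_of_Δ_combo {ν ν' : Module.Dual ℚ V} {w : V → ℚ} (hw : ∀ γ, 0 ≤ w γ)
    (h : ν' - ν = ∑ γ ∈ R.Δ, w γ • R.coroot γ) : R.le ν ν' := by
  classical
  refine ⟨fun β => if β ∈ R.Δ then w β else 0,
    fun β => by by_cases hb : β ∈ R.Δ <;> simp [hb, hw β], ?_⟩
  have h1 : ∑ β ∈ R.pos, (if β ∈ R.Δ then w β else 0) • R.coroot β
      = ∑ β ∈ R.Δ, (if β ∈ R.Δ then w β else 0) • R.coroot β :=
    (Finset.sum_subset R.Δ_sub_pos (fun β _ hβ => by rw [if_neg hβ, zero_smul])).symm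
  rw [h, h1]
  exact (Finset.sum_congr rfl (fun γ hγ => by rw [if_pos hγ])).symm

lemma span_coroot_combo {Δ' : Finset V} {μ : Module.Dual ℚ V}
    (h : μ ∈ Submodule.span ℚ (R.coroot '' (Δ' : Set V))) :
    ∃ e : V → ℚ, μ = ∑ γ ∈ Δ', e γ • R.coroot γ := by
  classical
  let T : (V → ℚ) →ₗ[ℚ] Module.Dual ℚ V :=
    { toFun := fun w => ∑ γ ∈ Δ', w γ • R.coroot γ
      map_add' := fun u v => by
        simp only [Pi.add_apply, add_smul, Finset.sum_add_distrib]
      map_smul' := fun r u => by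
        simp only [Pi.smul_apply, smul_eq_mul, mul_smul, ← Finset.smul_sum, RingHom.id_apply] }
  have hle : Submodule.span ℚ (R.coroot '' (Δ' : Set V)) ≤ LinearMap.range T := by
    rw [Submodule.span_le]
    rintro _ ⟨γ, hγ, rfl⟩
    refine ⟨fun v => if v = γ then 1 else 0, ?_⟩
    show ∑ γ' ∈ Δ', (if γ' = γ then (1:ℚ) else 0) • R.coroot γ' = R.coroot γ
    simp [ite_smul, Finset.sum_ite_eq', Finset.mem_coe.mp hγ]
  obtain ⟨w, hw⟩ := hle h
  exact ⟨w, hw.symm⟩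

lemma combo_mem_span {s t : Finset V} (hst : s ⊆ t) (e : V → ℚ) :
    (∑ γ ∈ s, e γ • R.coroot γ) ∈ Submodule.span ℚ (R.coroot '' (t : Set V)) :=
  Submodule.sum_mem _ (fun γ hγ => Submodule.smul_mem _ _
    (Submodule.subset_span ⟨γ, Finset.mem_coe.mpr (hst hγ), rfl⟩))

end RootSystemData
/-- Lemma 7.6: let `δ` be dominant, let `ν₁, ν₂` be Hodge–Newton indecomposable with
respect to `δ` with `ν₁ − ν₂` in the `ℚ`-span of the coroots, and let `ν'` be a least
upper bound of `{ν₁, ν₂}` among dominant elements with respect to `≤`. Then `ν' ≤ δ` and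
`ν'` is Hodge–Newton indecomposable with respect to `δ`. -/
theorem join_hodgeNewton_indecomposable {V : Type} [AddCommGroup V] [Module ℚ V]
    [FiniteDimensional ℚ V] (R : RootSystemData V)
    (δ : Module.Dual ℚ V) (hδ : R.IsDominant δ)
    (ν₁ ν₂ : Module.Dual ℚ V)
    (h1 : R.HNIndecomposable δ ν₁) (h2 : R.HNIndecomposable δ ν₂)
    (hdiff : ν₁ - ν₂ ∈ Submodule.span ℚ (R.coroot '' (R.Φ : Set V)))
    (ν' : Module.Dual ℚ V) (hdom : R.IsDominant ν')
    (hub1 : R.le ν₁ ν') (hub2 : R.le ν₂ ν')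
    (hlub : ∀ ν'' : Module.Dual ℚ V, R.IsDominant ν'' → R.le ν₁ ν'' → R.le ν₂ ν'' →
      R.le ν' ν'') :
    R.le ν' δ ∧ R.HNIndecomposable δ ν' := by
  classical
  have hled : R.le ν' δ := hlub δ hδ h1.2.1 h2.2.1
  refine ⟨hled, hdom, hled, ?_⟩
  rintro ⟨Δ', hsub, hne, hzero, hspan⟩
  obtain ⟨α₀, hα₀Δ, hα₀Δ'⟩ := Finset.exists_of_ssubset (hsub.ssubset_of_ne hne)
  have hα₀Φ : α₀ ∈ R.Φ := R.Δ_sub hα₀Δ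
  have hν'α₀ : 0 < ν' α₀ :=
    lt_of_le_of_ne (hdom α₀ hα₀Δ) (fun h0 => hα₀Δ' (hzero α₀ hα₀Δ h0.symm))
  obtain ⟨c1, hc10, hc1s⟩ := hub1
  obtain ⟨x, hx0, hxs⟩ := R.sum_pos_combo hc10
  have hxeq : ν' - ν₁ = ∑ γ ∈ R.Δ, x γ • R.coroot γ := by rw [hc1s, hxs]
  obtain ⟨c2, hc20, hc2s⟩ := hub2
  obtain ⟨y, hy0, hys⟩ := R.sum_pos_combo hc20
  have hyeq : ν' - ν₂ = ∑ γ ∈ R.Δ, y γ • R.coroot γ := by rw [hc2s, hys]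
  obtain ⟨e, hespan⟩ := R.span_coroot_combo hspan
  have hΔ'sub : Δ' ⊆ R.Δ.erase α₀ := fun γ hγ =>
    Finset.mem_erase.mpr ⟨fun hEq => hα₀Δ' (hEq ▸ hγ), hsub hγ⟩
  -- key contradiction builder
  have key : ∀ ν : Module.Dual ℚ V, R.HNIndecomposable δ ν →
      ∀ z : V → ℚ, (∀ γ, 0 ≤ z γ) → ν' - ν = ∑ γ ∈ R.Δ, z γ • R.coroot γ →
      z α₀ = 0 → False := by
    intro ν hν z hz0 hzs hzα₀
    refine hν.2.2 ⟨R.Δ.erase α₀, Finset.erase_subset _ _, ?_, ?_, ?_⟩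
    · intro hEq
      exact (Finset.notMem_erase α₀ R.Δ) (by rw [hEq]; exact hα₀Δ)
    · intro γ hγΔ hγ0
      rw [Finset.mem_erase]
      refine ⟨?_, hγΔ⟩
      rintro rfl
      have hval : ν γ = ν' γ - ∑ a ∈ R.Δ, z a * R.coroot a γ := by
        have h5 := congrArg (fun φ : Module.Dual ℚ V => φ γ) hzs
        simp only [LinearMap.sub_apply, LinearMap.coe_sum, Finset.sum_apply,
          LinearMap.smul_apply, smul_eq_mul] at h5
        linarith
      have hsle : ∑ a ∈ R.Δ, z a * R.coroot a γ ≤ 0 := by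
        apply Finset.sum_nonpos
        intro a haΔ
        by_cases haγ : γ = a
        · rw [← haγ, hzα₀, zero_mul]
        · exact mul_nonpos_iff.mpr (Or.inl ⟨hz0 a, R.cartan_nonpos haΔ hα₀Δ haγ⟩)
      rw [hγ0] at hval
      linarith
    · have hsplit : δ - ν = (δ - ν') + (ν' - ν) := by abel
      rw [hsplit, hespan, hzs]
      apply Submodule.add_mem
      · exact R.combo_mem_span hΔ'sub e
      · have hz' : ∑ γ ∈ R.Δ, z γ • R.coroot γ = ∑ γ ∈ R.Δ.erase α₀, z γ • R.coroot γ := by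
          rw [← Finset.add_sum_erase R.Δ (fun γ => z γ • R.coroot γ) hα₀Δ, hzα₀, zero_smul,
            zero_add]
        rw [hz']
        exact R.combo_mem_span (Finset.Subset.refl _) z
  by_cases hx0α : x α₀ = 0
  · exact (key ν₁ h1 x hx0 hxeq hx0α).elim
  by_cases hy0α : y α₀ = 0
  · exact (key ν₂ h2 y hy0 hyeq hy0α).elim
  have hxpos : 0 < x α₀ := lt_of_le_of_ne (hx0 α₀) (Ne.symm hx0α)
  have hypos : 0 < y α₀ := lt_of_le_of_ne (hy0 α₀) (Ne.symm hy0α)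
  set t := min (min (x α₀) (y α₀)) (ν' α₀ / 2) with htdef
  have ht0 : 0 < t := lt_min (lt_min hxpos hypos) (by linarith)
  have htx : t ≤ x α₀ := le_trans (min_le_left _ _) (min_le_left _ _)
  have hty : t ≤ y α₀ := le_trans (min_le_left _ _) (min_le_right _ _)
  have hth : t ≤ ν' α₀ / 2 := min_le_right _ _
  set ν'' := ν' - t • R.coroot α₀ with hν''def
  have hdom'' : R.IsDominant ν'' := by
    intro γ hγΔ
    simp only [hν''def, LinearMap.sub_apply, LinearMap.smul_apply, smul_eq_mul]
    by_cases hγα : γ = α₀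
    · rw [hγα, R.coroot_self α₀ hα₀Φ]
      linarith
    · have hc := R.cartan_nonpos hα₀Δ hγΔ hγα
      have hd := hdom γ hγΔ
      have hprod : t * R.coroot α₀ γ ≤ 0 := mul_nonpos_iff.mpr (Or.inl ⟨ht0.le, hc⟩)
      linarith
  have hub1'' : R.le ν₁ ν'' := by
    refine R.le_of_Δ_combo (w := fun γ => x γ - if γ = α₀ then t else 0) ?_ ?_
    · intro γ
      show 0 ≤ x γ - if γ = α₀ then t else 0
      by_cases hγα : γ = α₀
      · rw [if_pos hγα, hγα]; linarith
      · rw [if_neg hγα, sub_zero]; exact hx0 γ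
    · have hsp : ν'' - ν₁ = (ν' - ν₁) - t • R.coroot α₀ := by rw [hν''def]; abel
      rw [hsp, hxeq]
      simp only [sub_smul, Finset.sum_sub_distrib, R.ind_sum_coroot hα₀Δ]
  have hub2'' : R.le ν₂ ν'' := by
    refine R.le_of_Δ_combo (w := fun γ => y γ - if γ = α₀ then t else 0) ?_ ?_
    · intro γ
      show 0 ≤ y γ - if γ = α₀ then t else 0
      by_cases hγα : γ = α₀
      · rw [if_pos hγα, hγα]; linarith
      · rw [if_neg hγα, sub_zero]; exact hy0 γ
    · have hsp : ν'' - ν₂ = (ν' - ν₂) - t • R.coroot α₀ := by rw [hν''def]; abel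
      rw [hsp, hyeq]
      simp only [sub_smul, Finset.sum_sub_distrib, R.ind_sum_coroot hα₀Δ]
  obtain ⟨cc, hcc0, hcceq⟩ := hlub ν'' hdom'' hub1'' hub2''
  have hccsum : ∑ β ∈ R.pos, cc β • R.coroot β + t • R.coroot α₀ = 0 := by
    rw [← hcceq, hν''def]
    abel
  obtain ⟨w, hw0, hwsum⟩ := R.sum_pos_combo hcc0
  have hzero0 : ∑ γ ∈ R.Δ, (w γ + if γ = α₀ then t else 0) • R.coroot γ = 0 := by
    simp only [add_smul, Finset.sum_add_distrib, R.ind_sum_coroot hα₀Δ]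
    rw [← hwsum]
    exact hccsum
  have hz := R.zero_combo (z := fun γ => w γ + if γ = α₀ then t else 0)
    (fun γ => add_nonneg (hw0 γ) (by
      by_cases hh : γ = α₀
      · rw [if_pos hh]; exact ht0.le
      · rw [if_neg hh]))
    hzero0 α₀ hα₀Δ
  norm_num at hz
  linarith [hw0 α₀]
end

section
/- For every χ ∈ V∨, the set D(χ) = {ν ∈ V∨ : ν is dominant and χ ≤ ν} is nonempty and has a least element ν(χ), i.e. an element of D(χ) which is ≤ every element of D(χ). Moreover ν(χ) ≤ χ_dom, where χ_dom denotes the unique dominant element in the Weyl group orbit of χ. (Combinatorial content of Lemma 6.1 of the paper: the set B(G, ≥ w₀(λ)) has a unique minimal element b(λ), and b(λ) ≤ the class of λ(ξ).) -/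
open Module

namespace RootSystemData

variable {V : Type} [AddCommGroup V] [Module ℚ V] [FiniteDimensional ℚ V] (R : RootSystemData V)

open Finset Classical

variable {β γ δ x y : V}

lemma root_ne_zero (h : β ∈ R.Φ) : β ≠ 0 := fun e => R.zero_notin (e ▸ h)

/-- uniqueness of coefficients over Δ -/
lemma coeff_eq {c c' : V → ℚ} (h : ∑ α ∈ R.Δ, c α • α = ∑ α ∈ R.Δ, c' α • α) :
    ∀ α ∈ R.Δ, c α = c' α := by
  have hli := Fintype.linearIndependent_iff.mp R.Δ_indep
  intro α hα
  have key := hli (fun a : {x // x ∈ R.Δ} => c a.1 - c' a.1) ?_ ⟨α, hα⟩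
  · simpa [sub_eq_zero] using key
  · rw [Finset.univ_eq_attach, Finset.sum_attach R.Δ (fun x => (c x - c' x) • x)]
    simp only [sub_smul, Finset.sum_sub_distrib, h, sub_self]

lemma pos_coeff (h : β ∈ R.pos) :
    ∃ c : V → ℚ, (∀ α, 0 ≤ c α) ∧ β = ∑ α ∈ R.Δ, c α • α :=
  (R.mem_pos_iff β (R.pos_sub h)).mp h

lemma neg_rep {c' : V → ℚ} (hrep : -β = ∑ α ∈ R.Δ, c' α • α) :
    β = ∑ α ∈ R.Δ, (fun a => -c' a) α • α := by
  have : β = -∑ α ∈ R.Δ, c' α • α := by rw [← hrep, neg_neg]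
  rw [this, ← Finset.sum_neg_distrib]
  exact Finset.sum_congr rfl (fun a _ => by simp [neg_smul])

/-- a root having a representation with some strictly positive coefficient is positive -/
lemma mem_pos_of_coeff (hβ : β ∈ R.Φ) {c : V → ℚ} (hc : β = ∑ α ∈ R.Δ, c α • α)
    (hγ : γ ∈ R.Δ) (hcγ : 0 < c γ) : β ∈ R.pos := by
  rcases R.pos_or_neg β hβ with h | h
  · exact h
  · exfalso
    obtain ⟨c', hc', hrep⟩ := R.pos_coeff h
    have := R.coeff_eq (hc ▸ R.neg_rep hrep) γ hγ
    have := hc' γ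
    linarith

lemma pos_neg_not_pos (h : β ∈ R.pos) : -β ∉ R.pos := by
  intro h'
  obtain ⟨c, hc, hrep⟩ := R.pos_coeff h
  obtain ⟨c', hc', hrep'⟩ := R.pos_coeff h'
  have key := R.coeff_eq (hrep ▸ R.neg_rep hrep')
  have hz : β = 0 := by
    rw [hrep]
    apply Finset.sum_eq_zero
    intro α hα
    have h1 := key α hα
    have h2 := hc α; have h3 := hc' α
    have : c α = 0 := by linarith
    rw [this, zero_smul]
  exact R.root_ne_zero (R.pos_sub h) hz

lemma simple_mem_pos (h : γ ∈ R.Δ) : γ ∈ R.pos := by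
  rw [R.mem_pos_iff γ (R.Δ_sub h)]
  refine ⟨fun a => if a = γ then 1 else 0, fun a => by dsimp only; split <;> norm_num, ?_⟩
  have hs : ∀ a ∈ R.Δ, (fun a => if a = γ then (1:ℚ) else 0) a • a = if a = γ then a else 0 := by
    intro a _; dsimp only; split <;> simp
  rw [Finset.sum_congr rfl hs, Finset.sum_ite_eq' R.Δ γ (fun a => a)]
  simp [h]

/-- the reflection in a root (junk value `1` off `Φ`) -/
noncomputable def sRef (α : V) : V ≃ₗ[ℚ] V :=
  if h : α ∈ R.Φ then Module.reflection (R.coroot_self α h) else LinearEquiv.refl ℚ V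

lemma sRef_apply (h : β ∈ R.Φ) (x : V) : R.sRef β x = x - R.coroot β x • β := by
  have e : R.sRef β = Module.reflection (R.coroot_self β h) := dif_pos h
  rw [e]
  exact Module.reflection_apply x (R.coroot_self β h)

lemma sRef_mem_W (h : β ∈ R.Φ) : R.sRef β ∈ R.W := by
  rw [R.weyl_gen]
  have e : R.sRef β = Module.reflection (R.coroot_self β h) := dif_pos h
  rw [e]
  exact Subgroup.subset_closure ⟨β, h, rfl⟩

lemma sRef_sRef (h : β ∈ R.Φ) (x : V) : R.sRef β (R.sRef β x) = x := by
  have e : R.sRef β = Module.reflection (R.coroot_self β h) := dif_pos h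
  rw [e]
  exact Module.involutive_reflection (R.coroot_self β h) x

lemma sRef_root_mem (hβ : β ∈ R.Φ) (hγ : γ ∈ R.Φ) : R.sRef β γ ∈ R.Φ := by
  rw [R.sRef_apply hβ]; exact R.reflect_root β hβ γ hγ

lemma coroot_sRef (hβ : β ∈ R.Φ) (hγ : γ ∈ R.Φ) (x : V) :
    R.coroot (R.sRef β γ) x = R.coroot γ (R.sRef β x) := by
  rw [R.sRef_apply hβ γ, R.sRef_apply hβ x]
  exact R.reflect_coroot β hβ γ hγ x

lemma sRef_apply_self (h : β ∈ R.Φ) : R.sRef β β = -β := by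
  rw [R.sRef_apply h, R.coroot_self β h, two_smul]; abel

lemma coroot_neg (h : β ∈ R.Φ) (x : V) : R.coroot (-β) x = -(R.coroot β x) := by
  have h2 : R.sRef β β = -β := R.sRef_apply_self h
  have := R.coroot_sRef h h x
  rw [h2] at this
  rw [this, R.sRef_apply h, map_sub, map_smul, R.coroot_self β h]
  simp; ring

lemma neg_root_mem (h : β ∈ R.Φ) : -β ∈ R.Φ := by
  have := R.sRef_root_mem h h; rwa [R.sRef_apply_self h] at this

lemma sRef_neg (h : β ∈ R.Φ) : R.sRef (-β) = R.sRef β := by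
  apply LinearEquiv.toLinearMap_injective
  apply LinearMap.ext; intro x
  simp only [LinearEquiv.coe_coe]
  rw [R.sRef_apply (R.neg_root_mem h), R.sRef_apply h, R.coroot_neg h]
  module

/-- Lemma A: a simple reflection permutes the positive roots other than itself -/
lemma sRef_simple_pos (hγ : γ ∈ R.Δ) (hβ : β ∈ R.pos) (hne : β ≠ γ) :
    R.sRef γ β ∈ R.pos ∧ R.sRef γ β ≠ γ := by
  have hγΦ : γ ∈ R.Φ := R.Δ_sub hγ
  have hβΦ : β ∈ R.Φ := R.pos_sub hβ
  obtain ⟨c, hc, hrep⟩ := R.pos_coeff hβ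
  -- find a coordinate off γ which is positive
  have hex : ∃ δ ∈ R.Δ, δ ≠ γ ∧ 0 < c δ := by
    by_contra hno
    push_neg at hno
    have hzero : ∀ δ ∈ R.Δ, δ ≠ γ → c δ = 0 := fun δ h1 h2 => le_antisymm (hno δ h1 h2) (hc δ)
    have : β = c γ • γ := by
      rw [hrep]
      rw [Finset.sum_eq_single_of_mem γ hγ]
      intro δ h1 h2
      rw [hzero δ h1 h2, zero_smul]
    rcases R.reduced γ hγΦ (c γ) (this ▸ hβΦ) with h1 | h1
    · exact hne (by rw [this, h1, one_smul])
    · have : β = -γ := by rw [this, h1]; module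
      have hγp := R.simple_mem_pos hγ
      exact R.pos_neg_not_pos hγp (this ▸ hβ)
  obtain ⟨δ, hδ, hδγ, hcδ⟩ := hex
  set k := R.coroot γ β with hk
  set c' : V → ℚ := fun a => c a - (if a = γ then k else 0) with hc'
  have hrep' : R.sRef γ β = ∑ α ∈ R.Δ, c' α • α := by
    rw [R.sRef_apply hγΦ, hrep]
    have : ∀ a ∈ R.Δ, c' a • a = c a • a - (if a = γ then k • a else 0) := by
      intro a _
      rw [hc']; dsimp only
      split <;> simp [sub_smul]
    rw [Finset.sum_congr rfl this, Finset.sum_sub_distrib,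
      Finset.sum_ite_eq' R.Δ γ (fun a => k • a), if_pos hγ, ← hrep]
  have hmem : R.sRef γ β ∈ R.Φ := R.sRef_root_mem hγΦ hβΦ
  have hc'δ : 0 < c' δ := by rw [hc']; simp [if_neg hδγ, hcδ]
  have hpos : R.sRef γ β ∈ R.pos := R.mem_pos_of_coeff hmem hrep' hδ hc'δ
  refine ⟨hpos, ?_⟩
  intro he
  -- γ = ∑ c' which has coefficient c δ > 0 at δ ≠ γ: contradiction with indicator rep
  have hrepγ : γ = ∑ α ∈ R.Δ, (fun a => if a = γ then (1:ℚ) else 0) α • α := by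
    have hs : ∀ a ∈ R.Δ, (fun a => if a = γ then (1:ℚ) else 0) a • a = if a = γ then a else 0 := by
      intro a _; dsimp only; split <;> simp
    rw [Finset.sum_congr rfl hs, Finset.sum_ite_eq' R.Δ γ (fun a => a), if_pos hγ]
  have heq : ∑ α ∈ R.Δ, c' α • α = ∑ α ∈ R.Δ, (fun a => if a = γ then (1:ℚ) else 0) α • α := by
    rw [← hrep', he]; exact hrepγ
  have := R.coeff_eq heq δ hδ
  simp only [if_neg hδγ] at this
  linarith

/-- the sum over positive roots of `⟨α, β∨⟩` equals 2 for `α` simple -/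
lemma sum_coroot_eval (hγ : γ ∈ R.Δ) : ∑ β ∈ R.pos, R.coroot β γ = 2 := by
  have hγΦ : γ ∈ R.Φ := R.Δ_sub hγ
  have hγp : γ ∈ R.pos := R.simple_mem_pos hγ
  rw [← Finset.add_sum_erase R.pos _ hγp, R.coroot_self γ hγΦ]
  have hz : ∑ β ∈ R.pos.erase γ, R.coroot β γ = 0 := by
    apply Finset.sum_involution (fun β hβ => R.sRef γ β)
    · intro β hβ
      have hβp : β ∈ R.pos := Finset.mem_of_mem_erase hβ
      have hβγ : β ≠ γ := Finset.ne_of_mem_erase hβ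
      have := R.coroot_sRef hγΦ (R.pos_sub hβp) γ
      rw [this, R.sRef_apply_self hγΦ, map_neg]
      ring
    · intro β hβ h0
      intro he
      have hβp : β ∈ R.pos := Finset.mem_of_mem_erase hβ
      apply h0
      have h2 := R.coroot_sRef hγΦ (R.pos_sub hβp) γ
      rw [he, R.sRef_apply_self hγΦ, map_neg] at h2
      linarith
    · intro β hβ
      have hβp : β ∈ R.pos := Finset.mem_of_mem_erase hβ
      have hβγ : β ≠ γ := Finset.ne_of_mem_erase hβ
      obtain ⟨h1, h2⟩ := R.sRef_simple_pos hγ hβp hβγ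
      exact Finset.mem_erase.mpr ⟨h2, h1⟩
    · intro β hβ
      exact R.sRef_sRef hγΦ β
  rw [hz]; ring

/-- evaluation of a simple coroot on the sum of positive roots equals 2 -/
lemma coroot_eval_sum (hγ : γ ∈ R.Δ) : R.coroot γ (∑ β ∈ R.pos, β) = 2 := by
  have hγΦ : γ ∈ R.Φ := R.Δ_sub hγ
  have hγp : γ ∈ R.pos := R.simple_mem_pos hγ
  rw [map_sum, ← Finset.add_sum_erase R.pos _ hγp, R.coroot_self γ hγΦ]
  have hz : ∑ β ∈ R.pos.erase γ, R.coroot γ β = 0 := by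
    apply Finset.sum_involution (fun β hβ => R.sRef γ β)
    · intro β hβ
      rw [R.sRef_apply hγΦ, map_sub, map_smul, R.coroot_self γ hγΦ]
      simp; ring
    · intro β hβ h0 he
      apply h0
      have : R.coroot γ (R.sRef γ β) = -(R.coroot γ β) := by
        rw [R.sRef_apply hγΦ, map_sub, map_smul, R.coroot_self γ hγΦ]; simp; ring
      rw [he] at this
      linarith
    · intro β hβ
      have hβp : β ∈ R.pos := Finset.mem_of_mem_erase hβ
      have hβγ : β ≠ γ := Finset.ne_of_mem_erase hβ
      obtain ⟨h1, h2⟩ := R.sRef_simple_pos hγ hβp hβγ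
      exact Finset.mem_erase.mpr ⟨h2, h1⟩
    · intro β hβ
      exact R.sRef_sRef hγΦ β
  rw [hz]; ring

lemma W_image_root {w : V ≃ₗ[ℚ] V} (hw : w ∈ R.W) : Finset.image (w ·) R.Φ = R.Φ := by
  have himg : ∀ u : V ≃ₗ[ℚ] V, (∀ β ∈ R.Φ, u β ∈ R.Φ) → Finset.image (u ·) R.Φ = R.Φ := by
    intro u hu
    apply Finset.eq_of_subset_of_card_le
    · intro x hx
      obtain ⟨β, hβ, rfl⟩ := Finset.mem_image.mp hx
      exact hu β hβ
    · rw [Finset.card_image_of_injective _ u.injective]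
  rw [R.weyl_gen] at hw
  induction hw using Subgroup.closure_induction with
  | mem x hx =>
      obtain ⟨α, hα, rfl⟩ := hx
      apply himg
      intro β hβ
      exact R.reflect_root α hα β hβ
  | one => apply himg; intro β hβ; exact hβ
  | mul x y hx hy ihx ihy =>
      apply himg
      intro β hβ
      have h1 : y β ∈ R.Φ := by
        rw [← ihy]; exact Finset.mem_image_of_mem _ hβ
      have h2 : x (y β) ∈ R.Φ := by
        rw [← ihx]; exact Finset.mem_image_of_mem _ h1
      exact h2
  | inv x hx ihx =>
      apply himg
      intro β hβ
      rw [← ihx] at hβ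
      obtain ⟨γ, hγ, he⟩ := Finset.mem_image.mp hβ
      have he' : x γ = β := he
      have hxi : x⁻¹ (x γ) = γ := x.symm_apply_apply γ
      rw [← he', hxi]
      exact hγ

lemma W_root_mem {w : V ≃ₗ[ℚ] V} (hw : w ∈ R.W) (hβ : β ∈ R.Φ) : w β ∈ R.Φ := by
  rw [← R.W_image_root hw]; exact Finset.mem_image_of_mem _ hβ

lemma W_finite : Finite {w : V ≃ₗ[ℚ] V // w ∈ R.W} := by
  have : ∀ w : {w : V ≃ₗ[ℚ] V // w ∈ R.W}, ∀ β : {x // x ∈ R.Φ}, w.1 β.1 ∈ R.Φ :=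
    fun w β => R.W_root_mem w.2 β.2
  let F : {w : V ≃ₗ[ℚ] V // w ∈ R.W} → ({x // x ∈ R.Φ} → {x // x ∈ R.Φ}) :=
    fun w β => ⟨w.1 β.1, this w β⟩
  have hinj : Function.Injective F := by
    intro w w' he
    have : ∀ β ∈ R.Φ, w.1 β = w'.1 β := by
      intro β hβ
      have := congrFun he ⟨β, hβ⟩
      exact congrArg Subtype.val this
    have : (w.1 : V →ₗ[ℚ] V) = (w'.1 : V →ₗ[ℚ] V) :=
      LinearMap.ext_on R.span_Φ (fun x hx => this x hx)
    exact Subtype.ext (LinearEquiv.toLinearMap_injective this)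
  exact Finite.of_injective F hinj

/-- an auxiliary positive definite symmetric bilinear pairing -/
noncomputable def B0 (R : RootSystemData V) (x y : V) : ℚ :=
  let _ := R
  ∑ i, (Module.finBasis ℚ V).repr x i * (Module.finBasis ℚ V).repr y i

lemma B0_symm (x y : V) : R.B0 x y = R.B0 y x := by
  unfold B0; exact Finset.sum_congr rfl (fun i _ => mul_comm _ _)

lemma B0_self_nonneg (x : V) : 0 ≤ B0 (R := R) x x :=
  Finset.sum_nonneg (fun i _ => mul_self_nonneg _)

lemma B0_self_pos (hx : x ≠ 0) : 0 < B0 (R := R) x x := by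
  apply Finset.sum_pos'
  · exact fun i _ => mul_self_nonneg _
  · have hr : (Module.finBasis ℚ V).repr x ≠ 0 :=
      fun h0 => hx ((Module.finBasis ℚ V).repr.map_eq_zero_iff.mp h0)
    obtain ⟨i, hi⟩ := Finsupp.ne_iff.mp hr
    refine ⟨i, Finset.mem_univ i, mul_self_pos.mpr (by simpa using hi)⟩

noncomputable instance : Fintype {w : V ≃ₗ[ℚ] V // w ∈ R.W} :=
  @Fintype.ofFinite _ R.W_finite

/-- the `W`-invariant positive definite symmetric pairing -/
noncomputable def B (x y : V) : ℚ :=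
  ∑ w : {w : V ≃ₗ[ℚ] V // w ∈ R.W}, B0 (R := R) (w.1 x) (w.1 y)

lemma B_symm (x y : V) : R.B x y = R.B y x :=
  Finset.sum_congr rfl (fun w _ => B0_symm (R := R) _ _)

lemma B_self_nonneg (x : V) : 0 ≤ R.B x x :=
  Finset.sum_nonneg (fun w _ => B0_self_nonneg (R := R) _)

lemma B_self_pos (hx : x ≠ 0) : 0 < R.B x x := by
  apply Finset.sum_pos'
  · exact fun w _ => B0_self_nonneg (R := R) _
  · refine ⟨⟨1, R.W.one_mem⟩, Finset.mem_univ _, ?_⟩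
    simpa using B0_self_pos (R := R) hx

lemma B_inv {w : V ≃ₗ[ℚ] V} (hw : w ∈ R.W) (x y : V) : R.B (w x) (w y) = R.B x y := by
  unfold B
  exact Fintype.sum_equiv (Equiv.mulRight (⟨w, hw⟩ : R.W)) _ _ (fun u => rfl)

lemma B_add_left (x y z : V) : R.B (x + y) z = R.B x z + R.B y z := by
  unfold B
  rw [← Finset.sum_add_distrib]
  apply Finset.sum_congr rfl
  intro w _
  unfold B0
  rw [← Finset.sum_add_distrib]
  apply Finset.sum_congr rfl
  intro i _
  rw [map_add, map_add, Finsupp.add_apply, add_mul]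

lemma B_smul_left (c : ℚ) (x z : V) : R.B (c • x) z = c * R.B x z := by
  unfold B
  rw [Finset.mul_sum]
  apply Finset.sum_congr rfl
  intro w _
  unfold B0
  rw [Finset.mul_sum]
  apply Finset.sum_congr rfl
  intro i _
  rw [map_smul, map_smul, Finsupp.smul_apply]
  simp [mul_assoc]

lemma B_sum_left {s : Finset V} (f : V → ℚ) (z : V) :
    R.B (∑ a ∈ s, f a • a) z = ∑ a ∈ s, f a * R.B a z := by
  classical
  induction s using Finset.induction with
  | empty => simp [B, B0]
  | insert _ _ hni ih =>
      rw [Finset.sum_insert hni, Finset.sum_insert hni, R.B_add_left, R.B_smul_left, ih]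

lemma B_neg_left (x z : V) : R.B (-x) z = -R.B x z := by
  have := R.B_smul_left (-1) x z; simpa using this

lemma B_sub_left (x y z : V) : R.B (x - y) z = R.B x z - R.B y z := by
  rw [sub_eq_add_neg, R.B_add_left, R.B_neg_left, ← sub_eq_add_neg]

lemma B_root_pos (hβ : β ∈ R.Φ) : 0 < R.B β β := R.B_self_pos (R.root_ne_zero hβ)

/-- the key formula `⟨x, β∨⟩ B(β,β) = 2 B(x,β)` -/
lemma coroot_B (hβ : β ∈ R.Φ) (x : V) : R.coroot β x * R.B β β = 2 * R.B x β := by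
  have hinv := R.B_inv (R.sRef_mem_W hβ) x β
  rw [R.sRef_apply_self hβ] at hinv
  have h2 : R.B (R.sRef β x) (-β) = -R.B (R.sRef β x) β := by
    rw [R.B_symm _ (-β), R.B_neg_left, R.B_symm]
  rw [h2] at hinv
  rw [R.sRef_apply hβ] at hinv
  have h3 : R.B (x - R.coroot β x • β) β = R.B x β - R.coroot β x * R.B β β := by
    rw [R.B_sub_left, R.B_smul_left]
  rw [h3] at hinv
  linarith

/-- off-diagonal entries of the Cartan matrix are nonpositive -/
lemma coroot_simple_nonpos (hβ : β ∈ R.Δ) (hγ : γ ∈ R.Δ) (hne : γ ≠ β) :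
    R.coroot β γ ≤ 0 := by
  by_contra hpos
  push_neg at hpos
  set k := R.coroot β γ with hk
  have hβΦ : β ∈ R.Φ := R.Δ_sub hβ
  have hγΦ : γ ∈ R.Φ := R.Δ_sub hγ
  have hmem : γ - k • β ∈ R.Φ := R.reflect_root β hβΦ γ hγΦ
  set c : V → ℚ := fun a => (if a = γ then 1 else 0) - k * (if a = β then 1 else 0) with hc
  have hrep : γ - k • β = ∑ α ∈ R.Δ, c α • α := by
    have : ∀ a ∈ R.Δ, c a • a
        = (if a = γ then a else 0) - k • (if a = β then a else 0) := by
      intro a _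
      rw [hc]; dsimp only
      by_cases h1 : a = γ <;> by_cases h2 : a = β <;>
        simp [h1, h2, sub_smul, smul_smul]
    rw [Finset.sum_congr rfl this, Finset.sum_sub_distrib,
      Finset.sum_ite_eq' R.Δ γ (fun a => a), if_pos hγ, ← Finset.smul_sum,
      Finset.sum_ite_eq' R.Δ β (fun a => a), if_pos hβ]
  have hβγ : β ≠ γ := fun e => hne e.symm
  rcases R.pos_or_neg _ hmem with h | h
  · obtain ⟨c', hc', hrep'⟩ := R.pos_coeff h
    have h1 := R.coeff_eq (hrep ▸ hrep') β hβ
    rw [hc] at h1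
    norm_num [hβγ] at h1
    have h2 := hc' β
    nlinarith
  · obtain ⟨c', hc', hrep'⟩ := R.pos_coeff h
    have hrep2 := R.neg_rep (β := γ - k • β) hrep'
    have h1 := R.coeff_eq (hrep ▸ hrep2) γ hγ
    rw [hc] at h1
    norm_num [hne] at h1
    have h2 := hc' γ
    nlinarith

/-- every positive coroot is a nonnegative combination of simple coroots -/
lemma coroot_decomp (hβ : β ∈ R.pos) :
    ∃ e : V → ℚ, (∀ a, 0 ≤ e a) ∧ ∀ x, R.coroot β x = ∑ α ∈ R.Δ, e α * R.coroot α x := by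
  have hβΦ : β ∈ R.Φ := R.pos_sub hβ
  obtain ⟨c, hc, hrep⟩ := R.pos_coeff hβ
  have hBβ : 0 < R.B β β := R.B_root_pos hβΦ
  refine ⟨fun α => c α * R.B α α / R.B β β,
    fun α => div_nonneg (mul_nonneg (hc α) (R.B_self_nonneg α)) hBβ.le, ?_⟩
  intro x
  have h1 : R.coroot β x = 2 * R.B x β / R.B β β := by
    field_simp
    linarith [R.coroot_B hβΦ x]
  have h2 : R.B x β = ∑ α ∈ R.Δ, c α * R.B α x := by
    rw [R.B_symm x β]
    calc R.B β x = R.B (∑ α ∈ R.Δ, c α • α) x := by rw [← hrep]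
    _ = ∑ α ∈ R.Δ, c α * R.B α x := R.B_sum_left c x
  rw [h1, h2, Finset.mul_sum, Finset.sum_div]
  apply Finset.sum_congr rfl
  intro α hα
  have h4 := R.coroot_B (R.Δ_sub hα) x
  have h5 : c α * R.B α α / R.B β β * R.coroot α x
      = c α * (R.coroot α x * R.B α α) / R.B β β := by ring
  dsimp only
  rw [h5, h4, R.B_symm α x]
  ring

/-- `le` in terms of simple coroots -/
lemma le_iff' (ν ν' : Module.Dual ℚ V) :
    R.le ν ν' ↔ ∃ d : V → ℚ, (∀ a, 0 ≤ d a) ∧ ν' - ν = ∑ α ∈ R.Δ, d α • R.coroot α := by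
  constructor
  · rintro ⟨c, hc, hrep⟩
    set E : V → V → ℚ := fun β =>
      if h : β ∈ R.pos then Classical.choose (R.coroot_decomp h) else 0 with hE
    have hEspec : ∀ β (h : β ∈ R.pos), (∀ a, 0 ≤ E β a) ∧
        ∀ x, R.coroot β x = ∑ α ∈ R.Δ, E β α * R.coroot α x := by
      intro β h
      have := Classical.choose_spec (R.coroot_decomp h)
      rw [hE]; simp only [dif_pos h]
      exact this
    refine ⟨fun α => ∑ β ∈ R.pos, c β * E β α, ?_, ?_⟩
    · intro α
      apply Finset.sum_nonneg
      intro β hβ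
      exact mul_nonneg (hc β) ((hEspec β hβ).1 α)
    · apply LinearMap.ext
      intro x
      rw [hrep]
      rw [LinearMap.sum_apply, LinearMap.sum_apply]
      have lhs : ∀ β ∈ R.pos, (c β • R.coroot β) x = ∑ α ∈ R.Δ, c β * (E β α * R.coroot α x) := by
        intro β hβ
        rw [LinearMap.smul_apply, smul_eq_mul, (hEspec β hβ).2 x, Finset.mul_sum]
      rw [Finset.sum_congr rfl lhs, Finset.sum_comm]
      apply Finset.sum_congr rfl
      intro α hα
      rw [LinearMap.smul_apply, smul_eq_mul, Finset.sum_mul]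
      apply Finset.sum_congr rfl
      intro β hβ
      ring
  · rintro ⟨d, hd, hrep⟩
    refine ⟨fun β => if β ∈ R.Δ then d β else 0, ?_, ?_⟩
    · intro β; dsimp only; split
      · exact hd β
      · exact le_refl 0
    · have hsub : R.Δ ⊆ R.pos := fun a ha => R.simple_mem_pos ha
      have he : ∑ β ∈ R.pos, (fun β => if β ∈ R.Δ then d β else 0) β • R.coroot β
          = ∑ β ∈ R.Δ, (fun β => if β ∈ R.Δ then d β else 0) β • R.coroot β :=
        (Finset.sum_subset hsub (fun β _ hβΔ => by dsimp only; rw [if_neg hβΔ, zero_smul])).symm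
      rw [hrep, he]
      exact Finset.sum_congr rfl (fun α hα => by dsimp only; rw [if_pos hα])

lemma le_rfl' (ν : Module.Dual ℚ V) : R.le ν ν :=
  ⟨fun _ => 0, fun _ => le_refl 0, by simp⟩

lemma le_trans' {ν₁ ν₂ ν₃ : Module.Dual ℚ V} (h1 : R.le ν₁ ν₂) (h2 : R.le ν₂ ν₃) :
    R.le ν₁ ν₃ := by
  obtain ⟨c, hc, hrep⟩ := h1
  obtain ⟨c', hc', hrep'⟩ := h2
  refine ⟨fun β => c β + c' β, fun β => add_nonneg (hc β) (hc' β), ?_⟩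
  have : ν₃ - ν₁ = (ν₃ - ν₂) + (ν₂ - ν₁) := by abel
  rw [this, hrep, hrep', ← Finset.sum_add_distrib]
  apply Finset.sum_congr rfl
  intro β hβ
  rw [add_smul]
  abel

lemma le_single {ν : Module.Dual ℚ V} (hα : γ ∈ R.Δ) {t : ℚ} (ht : 0 ≤ t) :
    R.le ν (ν + t • R.coroot γ) := by
  rw [R.le_iff']
  refine ⟨fun a => if a = γ then t else 0, fun a => by dsimp only; split <;> simp [ht], ?_⟩
  have hss : ∀ a ∈ R.Δ, (fun a => if a = γ then t else 0) a • R.coroot a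
      = if a = γ then t • R.coroot a else 0 := by
    intro a _; dsimp only; split
    · rfl
    · rw [zero_smul]
  rw [Finset.sum_congr rfl hss, Finset.sum_ite_eq' R.Δ γ (fun a => t • R.coroot a), if_pos hα]
  abel

/-- Key matrix lemma: a linear system `M d ≥ c`, `d ≥ 0` over a "symmetrizable positive
definite Z-matrix" `M` has a least solution as soon as it has one. -/
lemma schur_least : ∀ (J : Finset V) (M : V → V → ℚ) (D : V → ℚ) (c : V → ℚ),
    (∀ i ∈ J, 0 < D i) →
    (∀ i ∈ J, ∀ j ∈ J, i ≠ j → M i j ≤ 0) →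
    (∀ i ∈ J, ∀ j ∈ J, M i j * D j = M j i * D i) →
    (∀ u : V → ℚ, (∃ i ∈ J, u i ≠ 0) →
      0 < ∑ i ∈ J, ∑ j ∈ J, u i * u j * (M i j * D j)) →
    (∃ d : V → ℚ, (∀ i, 0 ≤ d i) ∧ ∀ i ∈ J, c i ≤ ∑ j ∈ J, M i j * d j) →
    ∃ m : V → ℚ, (∀ i, 0 ≤ m i) ∧ (∀ i, i ∉ J → m i = 0) ∧
      (∀ i ∈ J, c i ≤ ∑ j ∈ J, M i j * m j) ∧
      ∀ d : V → ℚ, (∀ i, 0 ≤ d i) → (∀ i ∈ J, c i ≤ ∑ j ∈ J, M i j * d j) →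
        ∀ i ∈ J, m i ≤ d i := by
  intro J
  induction J using Finset.strongInduction with
  | _ J ih =>
  intro M D c hD hoff hsym hquad hsol
  obtain ⟨d₀, hd₀, hd₀c⟩ := hsol
  by_cases hc0 : ∀ i ∈ J, c i ≤ 0
  · refine ⟨0, fun i => le_refl 0, fun i _ => rfl, ?_, ?_⟩
    · intro i hi
      simpa using hc0 i hi
    · intro d hd _ i _
      exact hd i
  · push_neg at hc0
    obtain ⟨α, hαJ, hcα⟩ := hc0
    have hDα := hD α hαJ
    have hDαne : D α ≠ 0 := ne_of_gt hDα
    -- the diagonal entry at α is positive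
    have hMαα : 0 < M α α := by
      have key : ∑ i ∈ J, ∑ j ∈ J,
          (if i = α then (1:ℚ) else 0) * (if j = α then (1:ℚ) else 0) * (M i j * D j)
          = M α α * D α := by
        rw [Finset.sum_eq_single_of_mem α hαJ]
        · rw [Finset.sum_eq_single_of_mem α hαJ]
          · simp
          · intro j _ hjα; simp [hjα]
        · intro i _ hiα
          apply Finset.sum_eq_zero; intro j _; simp [hiα]
      have hq := hquad (fun i => if i = α then 1 else 0) ⟨α, hαJ, by simp⟩
      rw [key] at hq
      by_contra hle
      push_neg at hle
      have := mul_nonpos_of_nonpos_of_nonneg hle hDα.le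
      linarith
    have hMααne : M α α ≠ 0 := ne_of_gt hMαα
    set J' := J.erase α with hJ'
    have hJJ' : J' ⊂ J := Finset.erase_ssubset hαJ
    have hαJ' : α ∉ J' := Finset.notMem_erase α J
    have hins : insert α J' = J := Finset.insert_erase hαJ
    have hmemJ : ∀ i ∈ J', i ∈ J := fun i hi => Finset.mem_of_mem_erase hi
    have hneα : ∀ i ∈ J', i ≠ α := fun i hi => Finset.ne_of_mem_erase hi
    have splitJ : ∀ f : V → ℚ, ∑ j ∈ J, f j = f α + ∑ j ∈ J', f j := by
      intro f; rw [← hins, Finset.sum_insert hαJ']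
    set M' : V → V → ℚ := fun i j => M i j - M i α * M α j / M α α with hM'
    set c' : V → ℚ := fun i => c i - M i α * c α / M α α with hc'
    have hexpM' : ∀ (d : V → ℚ), ∀ i, ∑ j ∈ J', M' i j * d j
        = (∑ j ∈ J', M i j * d j) - M i α / M α α * (∑ j ∈ J', M α j * d j) := by
      intro d i
      rw [Finset.mul_sum, ← Finset.sum_sub_distrib]
      apply Finset.sum_congr rfl
      intro j _
      rw [hM']; dsimp only; ring
    -- restriction of a solution to the reduced system
    have hrestrict : ∀ d : V → ℚ, (∀ i, 0 ≤ d i) → (∀ i ∈ J, c i ≤ ∑ j ∈ J, M i j * d j) →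
        ∀ i ∈ J', c' i ≤ ∑ j ∈ J', M' i j * d j := by
      intro d hd hdc i hi
      have hiJ : i ∈ J := hmemJ i hi
      have hiα : i ≠ α := hneα i hi
      have hrowi : c i ≤ M i α * d α + ∑ j ∈ J', M i j * d j := by
        have := hdc i hiJ; rwa [splitJ (fun j => M i j * d j)] at this
      have hrowα : c α ≤ M α α * d α + ∑ j ∈ J', M α j * d j := by
        have := hdc α hαJ; rwa [splitJ (fun j => M α j * d j)] at this
      have hMiα : M i α ≤ 0 := hoff i hiJ α hαJ hiα
      rw [hexpM' d i, hc']
      set A := ∑ j ∈ J', M i j * d j with hA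
      set Bs := ∑ j ∈ J', M α j * d j with hBs
      have h1 : M i α * d α ≤ M i α * ((c α - Bs) / M α α) := by
        apply mul_le_mul_of_nonpos_left _ hMiα
        rw [div_le_iff₀ hMαα]
        linarith
      have h2 : M i α * ((c α - Bs) / M α α) = M i α * c α / M α α - M i α / M α α * Bs := by
        field_simp
      dsimp only
      linarith
    have hD' : ∀ i ∈ J', 0 < D i := fun i hi => hD i (hmemJ i hi)
    have hoff' : ∀ i ∈ J', ∀ j ∈ J', i ≠ j → M' i j ≤ 0 := by
      intro i hi j hj hij
      have h1 : M i j ≤ 0 := hoff i (hmemJ i hi) j (hmemJ j hj) hij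
      have h2 : M i α ≤ 0 := hoff i (hmemJ i hi) α hαJ (hneα i hi)
      have h3 : M α j ≤ 0 := hoff α hαJ j (hmemJ j hj) (fun e => hneα j hj e.symm)
      have h4 : 0 ≤ M i α * M α j := by nlinarith
      have h5 : 0 ≤ M i α * M α j / M α α := div_nonneg h4 hMαα.le
      rw [hM']; dsimp only; linarith
    have hsym' : ∀ i ∈ J', ∀ j ∈ J', M' i j * D j = M' j i * D i := by
      intro i hi j hj
      have e0 := hsym i (hmemJ i hi) j (hmemJ j hj)
      have e1 := hsym α hαJ j (hmemJ j hj)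
      have e2 := hsym α hαJ i (hmemJ i hi)
      rw [hM']; dsimp only
      linear_combination e0 - (M i α / M α α) * e1 + (M j α / M α α) * e2
    have hquad' : ∀ u : V → ℚ, (∃ i ∈ J', u i ≠ 0) →
        0 < ∑ i ∈ J', ∑ j ∈ J', u i * u j * (M' i j * D j) := by
      intro u hu
      obtain ⟨i0, hi0, hu0⟩ := hu
      set T := ∑ j ∈ J', u j * (M α j * D j) with hT
      set Q := ∑ i ∈ J', ∑ j ∈ J', u i * u j * (M i j * D j) with hQ
      set t : ℚ := -T / (M α α * D α) with ht
      set v : V → ℚ := fun i => if i = α then t else u i with hv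
      have hvα : v α = t := if_pos rfl
      have hvJ' : ∀ j ∈ J', v j = u j := fun j hj => if_neg (hneα j hj)
      have hq := hquad v ⟨i0, hmemJ i0 hi0, by rw [hvJ' i0 hi0]; exact hu0⟩
      -- expand the quadratic form of the extension v over J
      have hexp : ∑ i ∈ J, ∑ j ∈ J, v i * v j * (M i j * D j)
          = t * t * (M α α * D α) + 2 * (t * T) + Q := by
        rw [splitJ (fun i => ∑ j ∈ J, v i * v j * (M i j * D j)),
          splitJ (fun j => v α * v j * (M α j * D j))]
        have hrowα : ∑ j ∈ J', v α * v j * (M α j * D j) = t * T := by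
          rw [hT, Finset.mul_sum]
          apply Finset.sum_congr rfl
          intro j hj
          rw [hvJ' j hj, hvα]; ring
        have hrows : ∀ i ∈ J', ∑ j ∈ J, v i * v j * (M i j * D j)
            = u i * t * (M i α * D α) + ∑ j ∈ J', u i * u j * (M i j * D j) := by
          intro i hi
          rw [splitJ (fun j => v i * v j * (M i j * D j)), hvα, hvJ' i hi]
          congr 1
          apply Finset.sum_congr rfl
          intro j hj
          rw [hvJ' j hj]
        rw [Finset.sum_congr rfl hrows, Finset.sum_add_distrib]
        have hcol : ∑ i ∈ J', u i * t * (M i α * D α) = t * T := by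
          rw [hT, Finset.mul_sum]
          apply Finset.sum_congr rfl
          intro i hi
          have e := hsym α hαJ i (hmemJ i hi)
          linear_combination (-(u i * t)) * e
        rw [hrowα, hcol, hvα, ← hQ]
        ring
      have hval : t * t * (M α α * D α) + 2 * (t * T) = -(T / D α * T / M α α) := by
        rw [ht]; field_simp; ring
      have hrow2 : ∀ i ∈ J', ∑ j ∈ J', u i * u j * (M' i j * D j)
          = (∑ j ∈ J', u i * u j * (M i j * D j)) - u i * M i α / M α α * T := by
        intro i _
        rw [hT, Finset.mul_sum, ← Finset.sum_sub_distrib]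
        apply Finset.sum_congr rfl
        intro j _
        rw [hM']; dsimp only; ring
      have hcoef : ∑ i ∈ J', u i * M i α = T / D α := by
        rw [hT, Finset.sum_div]
        apply Finset.sum_congr rfl
        intro i hi
        have e := hsym α hαJ i (hmemJ i hi)
        rw [eq_div_iff hDαne]
        linear_combination (-(u i)) * e
      have hQ2 : ∑ i ∈ J', ∑ j ∈ J', u i * u j * (M' i j * D j)
          = Q - T / D α * T / M α α := by
        rw [Finset.sum_congr rfl hrow2, Finset.sum_sub_distrib, ← hQ]
        congr 1
        have : ∑ i ∈ J', u i * M i α / M α α * T = (∑ i ∈ J', u i * M i α) * T / M α α := by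
          rw [Finset.sum_mul, Finset.sum_div]
          apply Finset.sum_congr rfl
          intro i _; ring
        rw [this, hcoef]
      rw [hQ2]
      rw [hexp, hval] at hq
      linarith
    obtain ⟨m', hm'0, hm'off, hm'c, hm'least⟩ :=
      ih J' hJJ' M' D c' hD' hoff' hsym' hquad' ⟨d₀, hd₀, hrestrict d₀ hd₀ hd₀c⟩
    set φ : ℚ := (c α - ∑ j ∈ J', M α j * m' j) / M α α with hφ
    have hsumnp : ∑ j ∈ J', M α j * m' j ≤ 0 := by
      apply Finset.sum_nonpos
      intro j hj
      exact mul_nonpos_of_nonpos_of_nonneg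
        (hoff α hαJ j (hmemJ j hj) (fun e => hneα j hj e.symm)) (hm'0 j)
    have hφpos : 0 < φ := div_pos (by linarith) hMαα
    set m : V → ℚ := fun i => if i = α then φ else m' i with hm
    have hmα : m α = φ := if_pos rfl
    have hmJ' : ∀ j ∈ J', m j = m' j := fun j hj => if_neg (hneα j hj)
    have hrowsplit : ∀ i, ∑ j ∈ J, M i j * m j
        = M i α * φ + ∑ j ∈ J', M i j * m' j := by
      intro i
      rw [splitJ (fun j => M i j * m j), hmα]
      congr 1
      apply Finset.sum_congr rfl
      intro j hj
      rw [hmJ' j hj]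
    have hφMαα : M α α * φ = c α - ∑ j ∈ J', M α j * m' j := by
      rw [hφ, mul_div_cancel₀ _ hMααne]
    refine ⟨m, ?_, ?_, ?_, ?_⟩
    · intro i
      rw [hm]; dsimp only
      split
      · exact hφpos.le
      · exact hm'0 i
    · intro i hi
      have hiα : i ≠ α := fun e => hi (e ▸ hαJ)
      have hiJ' : i ∉ J' := fun h => hi (hmemJ i h)
      rw [hm]; dsimp only
      rw [if_neg hiα]
      exact hm'off i hiJ'
    · intro i hiJ
      rw [hrowsplit i]
      by_cases hiα : i = α
      · subst hiα
        linarith [hφMαα]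
      · have hiJ' : i ∈ J' := Finset.mem_erase.mpr ⟨hiα, hiJ⟩
        have h1 := hm'c i hiJ'
        rw [hexpM' m' i, hc'] at h1
        have hφeq : M i α * φ = M i α * c α / M α α
            - M i α / M α α * (∑ j ∈ J', M α j * m' j) := by
          rw [hφ]; field_simp
        dsimp only at h1
        linarith
    · intro d hd hdc i hiJ
      have hld := hm'least d hd (hrestrict d hd hdc)
      by_cases hiα : i = α
      · subst hiα
        rw [hmα]
        have hsumle : ∑ j ∈ J', M i j * d j ≤ ∑ j ∈ J', M i j * m' j := by
          apply Finset.sum_le_sum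
          intro j hj
          exact mul_le_mul_of_nonpos_left (hld j hj)
            (hoff i hαJ j (hmemJ j hj) (fun e => hneα j hj e.symm))
        have hrowαd : c i ≤ M i i * d i + ∑ j ∈ J', M i j * d j := by
          have := hdc i hαJ; rwa [splitJ (fun j => M i j * d j)] at this
        rw [hφ, div_le_iff₀ hMαα]
        nlinarith
      · have hiJ' : i ∈ J' := Finset.mem_erase.mpr ⟨hiα, hiJ⟩
        rw [hmJ' i hiJ']
        exact hld i hiJ'

lemma rho_decomp : ∃ dρ : V → ℚ, (∀ a, 0 ≤ dρ a) ∧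
    ∀ γ ∈ R.Δ, ∑ α ∈ R.Δ, R.coroot α γ * dρ α = 2 := by
  set E : V → V → ℚ := fun β =>
    if h : β ∈ R.pos then Classical.choose (R.coroot_decomp h) else 0 with hE
  have hEspec : ∀ β (h : β ∈ R.pos), (∀ a, 0 ≤ E β a) ∧
      ∀ x, R.coroot β x = ∑ α ∈ R.Δ, E β α * R.coroot α x := by
    intro β h
    have := Classical.choose_spec (R.coroot_decomp h)
    rw [hE]; simp only [dif_pos h]
    exact this
  refine ⟨fun a => ∑ β ∈ R.pos, E β a, ?_, ?_⟩
  · intro a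
    exact Finset.sum_nonneg (fun β hβ => (hEspec β hβ).1 a)
  · intro γ hγ
    have h2 := R.sum_coroot_eval hγ
    calc ∑ α ∈ R.Δ, R.coroot α γ * ∑ β ∈ R.pos, E β α
        = ∑ α ∈ R.Δ, ∑ β ∈ R.pos, E β α * R.coroot α γ := by
          apply Finset.sum_congr rfl
          intro α _
          rw [Finset.mul_sum]
          exact Finset.sum_congr rfl (fun β _ => by ring)
      _ = ∑ β ∈ R.pos, ∑ α ∈ R.Δ, E β α * R.coroot α γ := Finset.sum_comm
      _ = ∑ β ∈ R.pos, R.coroot β γ := by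
          apply Finset.sum_congr rfl
          intro β hβ
          exact ((hEspec β hβ).2 γ).symm
      _ = 2 := h2

/-- parts (1) and (2): existence of a least dominant element above `χ` -/
lemma exists_least_main (χ : Module.Dual ℚ V) :
    ∃ ν₀ : Module.Dual ℚ V, (R.IsDominant ν₀ ∧ R.le χ ν₀) ∧
      ∀ ν : Module.Dual ℚ V, R.IsDominant ν → R.le χ ν → R.le ν₀ ν := by
  obtain ⟨dρ, hdρ0, hdρ⟩ := R.rho_decomp
  set M : V → V → ℚ := fun i j => R.coroot j i with hM
  set D : V → ℚ := fun j => R.B j j with hD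
  set c : V → ℚ := fun i => -χ i with hc
  have hDpos : ∀ i ∈ R.Δ, 0 < D i := fun i hi => R.B_root_pos (R.Δ_sub hi)
  have hoff : ∀ i ∈ R.Δ, ∀ j ∈ R.Δ, i ≠ j → M i j ≤ 0 :=
    fun i hi j hj hij => R.coroot_simple_nonpos hj hi hij
  have hS : ∀ i ∈ R.Δ, ∀ j ∈ R.Δ, M i j * D j = 2 * R.B i j := by
    intro i hi j hj
    exact R.coroot_B (R.Δ_sub hj) i
  have hsym : ∀ i ∈ R.Δ, ∀ j ∈ R.Δ, M i j * D j = M j i * D i := by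
    intro i hi j hj
    rw [hS i hi j hj, hS j hj i hi, R.B_symm i j]
  have hquad : ∀ u : V → ℚ, (∃ i ∈ R.Δ, u i ≠ 0) →
      0 < ∑ i ∈ R.Δ, ∑ j ∈ R.Δ, u i * u j * (M i j * D j) := by
    intro u ⟨i0, hi0, hu0⟩
    set z := ∑ i ∈ R.Δ, u i • i with hz
    have hzne : z ≠ 0 := by
      intro h0
      have : ∑ α ∈ R.Δ, u α • α = ∑ α ∈ R.Δ, (fun _ => (0:ℚ)) α • α := by
        rw [← hz, h0]; simp
      exact hu0 (R.coeff_eq this i0 hi0)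
    have hkey : ∑ i ∈ R.Δ, ∑ j ∈ R.Δ, u i * u j * (M i j * D j) = 2 * R.B z z := by
      have hrow : ∀ i ∈ R.Δ, ∑ j ∈ R.Δ, u i * u j * (M i j * D j)
          = 2 * (u i * R.B z i) := by
        intro i hi
        have hzi : R.B z i = ∑ j ∈ R.Δ, u j * R.B j i := R.B_sum_left u i
        rw [hzi, Finset.mul_sum, Finset.mul_sum]
        apply Finset.sum_congr rfl
        intro j hj
        rw [hS i hi j hj, R.B_symm i j]
        ring
      rw [Finset.sum_congr rfl hrow, ← Finset.mul_sum]
      have : R.B z z = ∑ i ∈ R.Δ, u i * R.B z i := by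
        calc R.B z z = ∑ i ∈ R.Δ, u i * R.B i z := R.B_sum_left u z
          _ = ∑ i ∈ R.Δ, u i * R.B z i :=
              Finset.sum_congr rfl (fun i _ => by rw [R.B_symm i z])
      rw [this]
    rw [hkey]
    have := R.B_self_pos hzne
    linarith
  have hsol : ∃ d : V → ℚ, (∀ i, 0 ≤ d i) ∧ ∀ i ∈ R.Δ, c i ≤ ∑ j ∈ R.Δ, M i j * d j := by
    set t : ℚ := (∑ γ ∈ R.Δ, |χ γ|) / 2 with ht
    have ht0 : 0 ≤ t := by
      rw [ht]
      apply div_nonneg _ (by norm_num)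
      exact Finset.sum_nonneg (fun γ _ => abs_nonneg _)
    refine ⟨fun a => t * dρ a, fun a => mul_nonneg ht0 (hdρ0 a), ?_⟩
    intro i hi
    have hrow : ∑ j ∈ R.Δ, M i j * (t * dρ j) = t * 2 := by
      rw [← hdρ i hi, Finset.mul_sum]
      exact Finset.sum_congr rfl (fun j _ => by rw [hM]; ring)
    rw [hrow, hc]
    have h1 : |χ i| ≤ ∑ γ ∈ R.Δ, |χ γ| :=
      Finset.single_le_sum (fun γ _ => abs_nonneg (χ γ)) hi
    have h2 := neg_abs_le (χ i)
    rw [ht]; dsimp only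
    linarith
  obtain ⟨m, hm0, hmoff, hmc, hmleast⟩ :=
    schur_least R.Δ M D c hDpos hoff hsym hquad hsol
  set ν₀ : Module.Dual ℚ V := χ + ∑ α ∈ R.Δ, m α • R.coroot α with hν₀
  have hν₀eval : ∀ x, ν₀ x = χ x + ∑ α ∈ R.Δ, m α * R.coroot α x := by
    intro x
    rw [hν₀, LinearMap.add_apply, LinearMap.sum_apply]
    congr 1
    try exact Finset.sum_congr rfl (fun α _ => by rw [LinearMap.smul_apply, smul_eq_mul])
  refine ⟨ν₀, ⟨?_, ?_⟩, ?_⟩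
  · intro γ hγ
    rw [hν₀eval γ]
    have := hmc γ hγ
    rw [hc] at this
    have he : ∑ j ∈ R.Δ, M γ j * m j = ∑ α ∈ R.Δ, m α * R.coroot α γ :=
      Finset.sum_congr rfl (fun j _ => by rw [hM]; ring)
    dsimp only at this
    linarith [he ▸ this]
  · rw [R.le_iff']
    exact ⟨m, hm0, by rw [hν₀]; abel⟩
  · intro ν hνdom hνle
    obtain ⟨d, hd0, hdrep⟩ := (R.le_iff' χ ν).mp hνle
    have hνeval : ∀ x, ν x = χ x + ∑ α ∈ R.Δ, d α * R.coroot α x := by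
      intro x
      have : ν x - χ x = (∑ α ∈ R.Δ, d α • R.coroot α) x := by
        rw [← hdrep]; rfl
      rw [LinearMap.sum_apply] at this
      have h2 : ∑ α ∈ R.Δ, (d α • R.coroot α) x = ∑ α ∈ R.Δ, d α * R.coroot α x :=
        Finset.sum_congr rfl (fun α _ => by rw [LinearMap.smul_apply, smul_eq_mul])
      linarith [h2 ▸ this]
    have hdc : ∀ i ∈ R.Δ, c i ≤ ∑ j ∈ R.Δ, M i j * d j := by
      intro i hi
      have h1 := hνdom i hi
      rw [hνeval i] at h1
      have he : ∑ j ∈ R.Δ, M i j * d j = ∑ α ∈ R.Δ, d α * R.coroot α i :=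
        Finset.sum_congr rfl (fun j _ => by rw [hM]; ring)
      rw [hc, he]
      dsimp only
      linarith
    have hld := hmleast d hd0 hdc
    rw [R.le_iff']
    refine ⟨fun a => if a ∈ R.Δ then d a - m a else 0, ?_, ?_⟩
    · intro a; dsimp only; split
      · rename_i h; linarith [hld a h]
      · exact le_refl 0
    · have : ν - ν₀ = ∑ α ∈ R.Δ, (d α - m α) • R.coroot α := by
        have h1 : ν - ν₀ = (ν - χ) - (ν₀ - χ) := by abel
        rw [h1, hdrep, hν₀, add_sub_cancel_left, ← Finset.sum_sub_distrib]
        exact Finset.sum_congr rfl (fun α _ => by rw [sub_smul])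
      rw [this]
      exact Finset.sum_congr rfl (fun α hα => by dsimp only; rw [if_pos hα])

/-- product of reflections along a list of roots -/
noncomputable def wProd (l : List V) : V ≃ₗ[ℚ] V := (l.map R.sRef).prod

/-- a word in the simple reflections -/
def isWord (l : List V) : Prop := ∀ a ∈ l, a ∈ R.Δ

lemma wProd_nil : R.wProd [] = 1 := rfl

lemma wProd_cons (a : V) (l : List V) : R.wProd (a :: l) = R.sRef a * R.wProd l := by
  unfold wProd; rw [List.map_cons, List.prod_cons]

lemma wProd_append (l l' : List V) : R.wProd (l ++ l') = R.wProd l * R.wProd l' := by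
  unfold wProd; rw [List.map_append, List.prod_append]

lemma wProd_singleton (a : V) : R.wProd [a] = R.sRef a := by
  rw [wProd_cons, wProd_nil, mul_one]

lemma wProd_mem_W {l : List V} (hl : ∀ a ∈ l, a ∈ R.Φ) : R.wProd l ∈ R.W := by
  induction l with
  | nil => exact R.W.one_mem
  | cons a l ih =>
      rw [R.wProd_cons]
      exact R.W.mul_mem (R.sRef_mem_W (hl a (List.mem_cons_self)))
        (ih (fun b hb => hl b (List.mem_cons_of_mem a hb)))

lemma isWord_mem_Φ {l : List V} (hl : R.isWord l) : ∀ a ∈ l, a ∈ R.Φ :=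
  fun a ha => R.Δ_sub (hl a ha)

lemma wProd_root {l : List V} (hl : R.isWord l) (hβ : β ∈ R.Φ) : R.wProd l β ∈ R.Φ :=
  R.W_root_mem (R.wProd_mem_W (R.isWord_mem_Φ hl)) hβ

lemma sRef_mul_self (h : α ∈ R.Φ) : R.sRef α * R.sRef α = 1 :=
  LinearEquiv.ext (fun x => R.sRef_sRef h x)

lemma sRef_inv (h : α ∈ R.Φ) : (R.sRef α)⁻¹ = R.sRef α :=
  inv_eq_of_mul_eq_one_right (R.sRef_mul_self h)

/-- conjugation formula for a single reflection -/
lemma sRef_conj_single (ha : α ∈ R.Φ) (hγ : γ ∈ R.Φ) :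
    R.sRef (R.sRef α γ) = R.sRef α * R.sRef γ * (R.sRef α)⁻¹ := by
  rw [R.sRef_inv ha]
  apply LinearEquiv.ext
  intro x
  have hmem : R.sRef α γ ∈ R.Φ := R.sRef_root_mem ha hγ
  have h1 : R.sRef (R.sRef α γ) x = x - R.coroot γ (R.sRef α x) • R.sRef α γ := by
    rw [R.sRef_apply hmem, R.coroot_sRef ha hγ]
  rw [h1]
  show _ = R.sRef α (R.sRef γ (R.sRef α x))
  rw [R.sRef_apply hγ (R.sRef α x), map_sub, map_smul, R.sRef_sRef ha x]

/-- conjugation formula for words -/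
lemma sRef_conj {l : List V} (hl : ∀ a ∈ l, a ∈ R.Φ) (hβ : β ∈ R.Φ) :
    R.sRef (R.wProd l β) = R.wProd l * R.sRef β * (R.wProd l)⁻¹ := by
  induction l with
  | nil => rw [wProd_nil]; simp
  | cons a l ih =>
      have haΦ : a ∈ R.Φ := hl a (List.mem_cons_self)
      have hl' : ∀ b ∈ l, b ∈ R.Φ := fun b hb => hl b (List.mem_cons_of_mem a hb)
      have hwβ : R.wProd l β ∈ R.Φ := R.W_root_mem (R.wProd_mem_W hl') hβ
      rw [R.wProd_cons]
      have happ : (R.sRef a * R.wProd l) β = R.sRef a (R.wProd l β) := rfl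
      rw [happ, R.sRef_conj_single haΦ hwβ, ih hl']
      rw [mul_inv_rev]
      group

lemma wProd_reverse_inv {l : List V} (hl : ∀ a ∈ l, a ∈ R.Φ) :
    (R.wProd l)⁻¹ = R.wProd l.reverse := by
  induction l with
  | nil => rw [List.reverse_nil, wProd_nil]; exact inv_one
  | cons a l ih =>
      have haΦ : a ∈ R.Φ := hl a (List.mem_cons_self)
      have hl' : ∀ b ∈ l, b ∈ R.Φ := fun b hb => hl b (List.mem_cons_of_mem a hb)
      rw [R.wProd_cons, List.reverse_cons, R.wProd_append, mul_inv_rev, ih hl',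
        R.wProd_singleton, R.sRef_inv haΦ]

/-- the descent (exchange) lemma -/
lemma descent : ∀ l : List V, R.isWord l → ∀ α, α ∈ R.Δ → -(R.wProd l α) ∈ R.pos →
    ∃ l' : List V, R.isWord l' ∧ l'.length + 1 = l.length ∧
      R.wProd l * R.sRef α = R.wProd l' := by
  intro l
  induction l with
  | nil =>
      intro _ α hα hneg
      rw [wProd_nil] at hneg
      have : (1 : V ≃ₗ[ℚ] V) α = α := rfl
      rw [this] at hneg
      exact absurd hneg (R.pos_neg_not_pos (R.simple_mem_pos hα))
  | cons γ l ih =>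
      intro hw α hα hneg
      have hγΔ : γ ∈ R.Δ := hw γ (List.mem_cons_self)
      have hγΦ : γ ∈ R.Φ := R.Δ_sub hγΔ
      have hw' : R.isWord l := fun b hb => hw b (List.mem_cons_of_mem γ hb)
      have hαΦ : α ∈ R.Φ := R.Δ_sub hα
      set β' := R.wProd l α with hβ'
      have hβ'Φ : β' ∈ R.Φ := R.wProd_root hw' hαΦ
      have happ : R.wProd (γ :: l) α = R.sRef γ β' := by
        rw [R.wProd_cons]; rfl
      rcases R.pos_or_neg β' hβ'Φ with hp | hn
      · -- β' positive; then β' = γ necessarily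
        have hβγ : β' = γ := by
          by_contra hne
          have := (R.sRef_simple_pos hγΔ hp hne).1
          rw [← happ] at this
          exact R.pos_neg_not_pos this hneg
        refine ⟨l, hw', rfl, ?_⟩
        have hconj : R.sRef γ = R.wProd l * R.sRef α * (R.wProd l)⁻¹ := by
          rw [← hβγ, hβ']
          exact R.sRef_conj (R.isWord_mem_Φ hw') hαΦ
        rw [R.wProd_cons, hconj]
        have hαα := R.sRef_mul_self hαΦ
        have key : R.wProd l * R.sRef α * (R.wProd l)⁻¹ * R.wProd l * R.sRef α
            = R.wProd l * (R.sRef α * R.sRef α) := by group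
        rw [key, hαα, mul_one]
      · -- wProd l α is negative: use the inductive hypothesis
        obtain ⟨l'', hw'', hlen, heq⟩ := ih hw' α hα hn
        refine ⟨γ :: l'', fun b hb => ?_, by simp [← hlen], ?_⟩
        · rcases List.mem_cons.mp hb with h | h
          · exact h ▸ hγΔ
          · exact hw'' b h
        · rw [R.wProd_cons, mul_assoc, heq, R.wProd_cons]

/-- a word fixing nothing negative is the identity -/
lemma word_fix : ∀ n : ℕ, ∀ l : List V, l.length ≤ n → R.isWord l →
    (∀ α ∈ R.Δ, -(R.wProd l α) ∉ R.pos) → R.wProd l = 1 := by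
  intro n
  induction n with
  | zero =>
      intro l hlen _ _
      rw [List.length_eq_zero_iff.mp (Nat.le_zero.mp hlen)]
      rfl
  | succ n ihn =>
      intro l hlen hw hno
      rcases List.eq_nil_or_concat l with rfl | ⟨l', α, rfl⟩
      · rfl
      · simp only [List.concat_eq_append] at hlen hw hno ⊢
        have hαΔ : α ∈ R.Δ := hw α (by simp)
        have hαΦ : α ∈ R.Φ := R.Δ_sub hαΔ
        have hw' : R.isWord l' := fun b hb => hw b (by simp [hb])
        set w := R.wProd (l' ++ [α]) with hwdef
        have hwsplit : w = R.wProd l' * R.sRef α := by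
          rw [hwdef, R.wProd_append, R.wProd_singleton]
        have hβΦ : w α ∈ R.Φ := R.wProd_root hw hαΦ
        have hβpos : w α ∈ R.pos := by
          rcases R.pos_or_neg _ hβΦ with h | h
          · exact h
          · exact absurd h (hno α hαΔ)
        have hvα : R.wProd l' α = -(w α) := by
          have h1 : R.wProd l' = w * R.sRef α := by
            rw [hwsplit, mul_assoc, R.sRef_mul_self hαΦ, mul_one]
          rw [h1]
          show w (R.sRef α α) = -(w α)
          rw [R.sRef_apply_self hαΦ, map_neg]
        have hneg : -(R.wProd l' α) ∈ R.pos := by rw [hvα, neg_neg]; exact hβpos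
        obtain ⟨l'', hw'', hlen'', heq⟩ := R.descent l' hw' α hαΔ hneg
        have hwl'' : R.wProd l'' = w := by
          rw [← heq, hwsplit]
        have hlen2 : l''.length ≤ n := by
          have h1 : l'.length + 1 = (l' ++ [α]).length := by simp
          omega
        have := ihn l'' hlen2 hw'' (by rw [hwl'']; exact hno)
        rw [← hwl'', this]

lemma dAct_one (ν : Module.Dual ℚ V) : dAct (1 : V ≃ₗ[ℚ] V) ν = ν := rfl

lemma dAct_mul (u v : V ≃ₗ[ℚ] V) (ν : Module.Dual ℚ V) :
    dAct (u * v) ν = dAct u (dAct v ν) := rfl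

lemma dAct_sRef (hα : α ∈ R.Φ) (ν : Module.Dual ℚ V) :
    dAct (R.sRef α) ν = ν - ν α • R.coroot α := by
  have e : R.sRef α = Module.reflection (R.coroot_self α hα) := dif_pos hα
  apply LinearMap.ext
  intro x
  have h1 : dAct (R.sRef α) ν x = ν ((R.sRef α).symm x) := rfl
  rw [h1, e, Module.reflection_symm, ← e, R.sRef_apply hα, map_sub, map_smul]
  rw [LinearMap.sub_apply, LinearMap.smul_apply]
  simp only [smul_eq_mul]
  ring

lemma dominant_nonneg_pos {ν : Module.Dual ℚ V} (hdom : R.IsDominant ν)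
    (hβ : β ∈ R.pos) : 0 ≤ ν β := by
  obtain ⟨c, hc, hrep⟩ := R.pos_coeff hβ
  rw [hrep, map_sum]
  apply Finset.sum_nonneg
  intro α hα
  rw [map_smul, smul_eq_mul]
  exact mul_nonneg (hc α) (hdom α hα)

/-- uniqueness: a word carrying a dominant element to a dominant element fixes it -/
lemma word_dominant_fix : ∀ n : ℕ, ∀ l : List V, l.length ≤ n → R.isWord l →
    ∀ μ : Module.Dual ℚ V, R.IsDominant μ → R.IsDominant (dAct (R.wProd l) μ) →
      dAct (R.wProd l) μ = μ := by
  intro n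
  induction n with
  | zero =>
      intro l hlen _ μ _ _
      rw [List.length_eq_zero_iff.mp (Nat.le_zero.mp hlen)]
      rfl
  | succ n ihn =>
      intro l hlen hw μ hμ hμ'
      set w := R.wProd l with hwdef
      by_cases hno : ∀ α ∈ R.Δ, -(w α) ∉ R.pos
      · have h0 : w = 1 := by
          rw [hwdef]
          exact R.word_fix (n+1) l hlen hw (by rw [← hwdef]; exact hno)
        rw [h0]
        rfl
      · push_neg at hno
        obtain ⟨α, hαΔ, hneg⟩ := hno
        have hαΦ : α ∈ R.Φ := R.Δ_sub hαΔ
        have hμα : μ α = 0 := by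
          have h1 : dAct w μ (w α) = μ α := by
            show μ (w.symm (w α)) = μ α
            rw [w.symm_apply_apply]
          have h2 : 0 ≤ dAct w μ (-(w α)) := R.dominant_nonneg_pos hμ' hneg
          rw [map_neg] at h2
          have h3 := hμ α hαΔ
          linarith [h1 ▸ h2]
        have hfix : dAct (R.sRef α) μ = μ := by
          rw [R.dAct_sRef hαΦ, hμα, zero_smul, sub_zero]
        obtain ⟨l'', hw'', hlen'', heq⟩ := R.descent l hw α hαΔ hneg
        have h4 : dAct (R.wProd l'') μ = dAct w μ := by
          rw [← heq, dAct_mul, hfix]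
        have hlen2 : l''.length ≤ n := by omega
        have := ihn l'' hlen2 hw'' μ hμ (by rw [h4]; exact hμ')
        rw [← h4, this]

/-- chosen coefficients of a positive root -/
noncomputable def coFn (R : RootSystemData V) (β : V) : V → ℚ :=
  if h : β ∈ R.pos then Classical.choose (R.pos_coeff h) else 0

/-- height of a positive root -/
noncomputable def htOf (R : RootSystemData V) (β : V) : ℚ := ∑ α ∈ R.Δ, R.coFn β α

lemma coFn_spec (h : β ∈ R.pos) :
    (∀ a, 0 ≤ R.coFn β a) ∧ β = ∑ α ∈ R.Δ, R.coFn β α • α := by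
  unfold coFn
  rw [dif_pos h]
  exact Classical.choose_spec (R.pos_coeff h)

lemma htOf_rep (h : β ∈ R.pos) {c : V → ℚ} (hrep : β = ∑ α ∈ R.Δ, c α • α) :
    R.htOf β = ∑ α ∈ R.Δ, c α := by
  unfold htOf
  apply Finset.sum_congr rfl
  intro α hα
  exact R.coeff_eq (((R.coFn_spec h).2).symm.trans hrep) α hα

lemma pos_orbit : ∀ n : ℕ, ∀ β, β ∈ R.pos →
    (R.pos.filter (fun δ => R.htOf δ < R.htOf β)).card < n →
    ∃ l : List V, ∃ α, R.isWord l ∧ α ∈ R.Δ ∧ R.wProd l α = β := by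
  intro n
  induction n with
  | zero => intro β _ h; omega
  | succ n ihn =>
      intro β hβ hcard
      have hβΦ : β ∈ R.Φ := R.pos_sub hβ
      obtain ⟨hc0, hrep⟩ := R.coFn_spec hβ
      set c := R.coFn β with hcdef
      have hBβ : 0 < R.B β β := R.B_root_pos hβΦ
      have hsum : R.B β β = ∑ α ∈ R.Δ, c α * R.B α β := by
        have := R.B_sum_left (s := R.Δ) c β
        rw [← hrep] at this
        exact this
      have hex : ∃ α ∈ R.Δ, 0 < c α * R.B α β := by
        by_contra h
        push_neg at h
        have := Finset.sum_nonpos h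
        linarith
      obtain ⟨α, hαΔ, hterm⟩ := hex
      have hαΦ : α ∈ R.Φ := R.Δ_sub hαΔ
      have hcα : 0 < c α := by
        rcases (hc0 α).lt_or_eq with h | h
        · exact h
        · rw [← h, zero_mul] at hterm; exact absurd hterm (lt_irrefl 0)
      have hBαβ : 0 < R.B α β := by nlinarith
      by_cases hβα : β = α
      · exact ⟨[], α, fun _ h => absurd h List.not_mem_nil, hαΔ, by rw [hβα]; rfl⟩
      · set k := R.coroot α β with hkdef
        have hk : 0 < k := by
          have h1 := R.coroot_B hαΦ β
          have hBαα := R.B_root_pos hαΦ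
          have h2 : R.B β α = R.B α β := R.B_symm β α
          nlinarith
        set γ := R.sRef α β with hγdef
        have hγpos : γ ∈ R.pos := (R.sRef_simple_pos hαΔ hβ hβα).1
        have h1 : γ = β - k • α := by rw [hγdef, R.sRef_apply hαΦ β, hkdef]
        have hrepγ : γ = ∑ a ∈ R.Δ, (fun a => c a - (if a = α then k else 0)) a • a := by
          have hs : ∀ a ∈ R.Δ, (fun a => c a - (if a = α then k else 0)) a • a
              = c a • a - (if a = α then k • a else 0) := by
            intro a _
            dsimp only
            split <;> simp [sub_smul]
          rw [h1, Finset.sum_congr rfl hs, Finset.sum_sub_distrib,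
            Finset.sum_ite_eq' R.Δ α (fun a => k • a), if_pos hαΔ, ← hrep]
        have hhtγ : R.htOf γ = R.htOf β - k := by
          rw [R.htOf_rep hγpos hrepγ, R.htOf_rep hβ hrep]
          simp [Finset.sum_sub_distrib, Finset.sum_ite_eq', hαΔ]
        have hlt : R.htOf γ < R.htOf β := by rw [hhtγ]; linarith
        have hγf : γ ∈ R.pos.filter (fun δ => R.htOf δ < R.htOf β) :=
          Finset.mem_filter.mpr ⟨hγpos, hlt⟩
        have hsub : R.pos.filter (fun δ => R.htOf δ < R.htOf γ)
            ⊆ R.pos.filter (fun δ => R.htOf δ < R.htOf β) := by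
          intro δ hδ
          have hm := Finset.mem_filter.mp hδ
          exact Finset.mem_filter.mpr ⟨hm.1, lt_trans hm.2 hlt⟩
        have hγnotin : γ ∉ R.pos.filter (fun δ => R.htOf δ < R.htOf γ) := by
          intro h
          exact absurd (Finset.mem_filter.mp h).2 (lt_irrefl _)
        have hcard2 : (R.pos.filter (fun δ => R.htOf δ < R.htOf γ)).card < n := by
          have hss : (R.pos.filter (fun δ => R.htOf δ < R.htOf γ)).card
              < (R.pos.filter (fun δ => R.htOf δ < R.htOf β)).card :=
            Finset.card_lt_card ((Finset.ssubset_iff_of_subset hsub).mpr ⟨γ, hγf, hγnotin⟩)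
          omega
        obtain ⟨l, α', hl, hα', heq⟩ := ihn γ hγpos hcard2
        refine ⟨α :: l, α', ?_, hα', ?_⟩
        · intro b hb
          rcases List.mem_cons.mp hb with h | h
          · exact h ▸ hαΔ
          · exact hl b h
        · rw [R.wProd_cons]
          show R.sRef α (R.wProd l α') = β
          rw [heq, hγdef]
          exact R.sRef_sRef hαΦ β

lemma reflection_eq_word (hβ : β ∈ R.Φ) :
    ∃ l : List V, R.isWord l ∧ R.sRef β = R.wProd l := by
  have main : ∀ δ, δ ∈ R.pos → ∃ l : List V, R.isWord l ∧ R.sRef δ = R.wProd l := by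
    intro δ hδ
    obtain ⟨l, α, hl, hα, heq⟩ := R.pos_orbit
      ((R.pos.filter (fun x => R.htOf x < R.htOf δ)).card + 1) δ hδ (by omega)
    refine ⟨l ++ [α] ++ l.reverse, ?_, ?_⟩
    · intro b hb
      simp only [List.mem_append, List.mem_reverse, List.mem_singleton] at hb
      rcases hb with (h | h) | h
      · exact hl b h
      · exact h ▸ hα
      · exact hl b h
    · rw [← heq, R.sRef_conj (R.isWord_mem_Φ hl) (R.Δ_sub hα)]
      rw [R.wProd_append, R.wProd_append, R.wProd_singleton,
        R.wProd_reverse_inv (R.isWord_mem_Φ hl)]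
  rcases R.pos_or_neg β hβ with h | h
  · exact main β h
  · obtain ⟨l, hl, heq⟩ := main (-β) h
    exact ⟨l, hl, by rw [← heq, R.sRef_neg hβ]⟩

lemma mem_W_word {w : V ≃ₗ[ℚ] V} (hw : w ∈ R.W) :
    ∃ l : List V, R.isWord l ∧ w = R.wProd l := by
  rw [R.weyl_gen] at hw
  induction hw using Subgroup.closure_induction with
  | mem x hx =>
      obtain ⟨α, hα, rfl⟩ := hx
      have e : R.sRef α = Module.reflection (R.coroot_self α hα) := dif_pos hα
      rw [← e]
      exact R.reflection_eq_word hα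
  | one => exact ⟨[], fun _ h => absurd h List.not_mem_nil, rfl⟩
  | mul x y hx hy ihx ihy =>
      obtain ⟨lx, hlx, rfl⟩ := ihx
      obtain ⟨ly, hly, rfl⟩ := ihy
      refine ⟨lx ++ ly, ?_, (R.wProd_append lx ly).symm⟩
      intro b hb
      rcases List.mem_append.mp hb with h | h
      · exact hlx b h
      · exact hly b h
  | inv x hx ihx =>
      obtain ⟨lx, hlx, rfl⟩ := ihx
      refine ⟨lx.reverse, ?_, R.wProd_reverse_inv (R.isWord_mem_Φ hlx)⟩
      intro b hb
      exact hlx b (List.mem_reverse.mp hb)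

/-- the (finite) orbit of `χ` under the contragredient Weyl action -/
noncomputable def orbitF (R : RootSystemData V) (χ : Module.Dual ℚ V) :
    Finset (Module.Dual ℚ V) :=
  @Finset.image _ _ (Classical.decEq _)
    (fun w : {w : V ≃ₗ[ℚ] V // w ∈ R.W} => dAct w.1 χ) Finset.univ

lemma mem_orbitF {χ ν : Module.Dual ℚ V} :
    ν ∈ R.orbitF χ ↔ ∃ w ∈ R.W, dAct w χ = ν := by
  unfold orbitF
  constructor
  · intro h
    obtain ⟨w, _, he⟩ := Finset.mem_image.mp h
    exact ⟨w.1, w.2, he⟩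
  · intro ⟨w, hw, he⟩
    exact Finset.mem_image.mpr ⟨⟨w, hw⟩, Finset.mem_univ _, he⟩

lemma orbitF_closed {χ ν : Module.Dual ℚ V} {w : V ≃ₗ[ℚ] V}
    (hν : ν ∈ R.orbitF χ) (hw : w ∈ R.W) : dAct w ν ∈ R.orbitF χ := by
  obtain ⟨u, hu, rfl⟩ := R.mem_orbitF.mp hν
  exact R.mem_orbitF.mpr ⟨w * u, R.W.mul_mem hw hu, (dAct_mul w u χ)⟩

lemma raise (χ : Module.Dual ℚ V) : ∀ n : ℕ, ∀ ν ∈ R.orbitF χ,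
    ((R.orbitF χ).filter (fun ξ => ν (∑ β ∈ R.pos, β) < ξ (∑ β ∈ R.pos, β))).card < n →
    ∃ ν' ∈ R.orbitF χ, R.IsDominant ν' ∧ R.le ν ν' := by
  intro n
  induction n with
  | zero => intro ν _ h; omega
  | succ n ihn =>
      intro ν hν hcard
      by_cases hdom : R.IsDominant ν
      · exact ⟨ν, hν, hdom, R.le_rfl' ν⟩
      · have hex : ∃ α ∈ R.Δ, ν α < 0 := by
          by_contra h
          push_neg at h
          exact hdom h
        obtain ⟨α, hαΔ, hνα⟩ := hex
        have hαΦ : α ∈ R.Φ := R.Δ_sub hαΔ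
        set ν'' := dAct (R.sRef α) ν with hν''def
        have hν''mem : ν'' ∈ R.orbitF χ := R.orbitF_closed hν (R.sRef_mem_W hαΦ)
        have hν''eq : ν'' = ν - ν α • R.coroot α := by
          rw [hν''def, R.dAct_sRef hαΦ]
        have hle : R.le ν ν'' := by
          have := R.le_single (ν := ν) hαΔ (t := -(ν α)) (by linarith)
          have he : ν + (-(ν α)) • R.coroot α = ν'' := by
            rw [hν''eq, neg_smul, ← sub_eq_add_neg]
          rwa [he] at this
        set v₀ := ∑ β ∈ R.pos, β with hv₀
        have hf : ν'' v₀ = ν v₀ - 2 * ν α := by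
          rw [hν''eq, LinearMap.sub_apply, LinearMap.smul_apply, smul_eq_mul,
            R.coroot_eval_sum hαΔ]
          ring
        have hflt : ν v₀ < ν'' v₀ := by rw [hf]; linarith
        have hsub : (R.orbitF χ).filter (fun ξ => ν'' v₀ < ξ v₀)
            ⊆ (R.orbitF χ).filter (fun ξ => ν v₀ < ξ v₀) := by
          intro ξ hξ
          have hm := Finset.mem_filter.mp hξ
          exact Finset.mem_filter.mpr ⟨hm.1, lt_trans hflt hm.2⟩
        have hin : ν'' ∈ (R.orbitF χ).filter (fun ξ => ν v₀ < ξ v₀) :=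
          Finset.mem_filter.mpr ⟨hν''mem, hflt⟩
        have hnotin : ν'' ∉ (R.orbitF χ).filter (fun ξ => ν'' v₀ < ξ v₀) := by
          intro h
          exact absurd (Finset.mem_filter.mp h).2 (lt_irrefl _)
        have hcard2 : ((R.orbitF χ).filter (fun ξ => ν'' v₀ < ξ v₀)).card < n := by
          have hss := Finset.card_lt_card
            ((Finset.ssubset_iff_of_subset hsub).mpr ⟨ν'', hin, hnotin⟩)
          omega
        obtain ⟨ν', hν'mem, hν'dom, hν'le⟩ := ihn ν'' hν''mem hcard2
        exact ⟨ν', hν'mem, hν'dom, R.le_trans' hle hν'le⟩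

lemma dominant_orbit_le (χ : Module.Dual ℚ V) (χdom : Module.Dual ℚ V)
    (hdom : R.IsDominant χdom) (horb : ∃ w ∈ R.W, dAct w χ = χdom) :
    R.le χ χdom := by
  obtain ⟨w, hw, hwχ⟩ := horb
  have hχorb : χ ∈ R.orbitF χ := R.mem_orbitF.mpr ⟨1, R.W.one_mem, rfl⟩
  obtain ⟨ν', hν'mem, hν'dom, hν'le⟩ := R.raise χ
    (((R.orbitF χ).filter (fun ξ =>
      χ (∑ β ∈ R.pos, β) < ξ (∑ β ∈ R.pos, β))).card + 1) χ hχorb (by omega)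
  -- ν' = dAct u χ and χ = dAct w⁻¹ χdom, so ν' = dAct (u * w⁻¹) χdom
  obtain ⟨u, hu, huχ⟩ := R.mem_orbitF.mp hν'mem
  have hχeq : dAct w⁻¹ χdom = χ := by
    rw [← hwχ, ← dAct_mul, inv_mul_cancel]
    rfl
  have hcomb : dAct (u * w⁻¹) χdom = ν' := by
    rw [dAct_mul, hχeq, huχ]
  obtain ⟨l, hl, hleq⟩ := R.mem_W_word (R.W.mul_mem hu (R.W.inv_mem hw))
  have hfix := R.word_dominant_fix l.length l (le_refl _) hl χdom hdom
    (by rw [← hleq, hcomb]; exact hν'dom)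
  rw [← hleq, hcomb] at hfix
  rw [← hfix]
  exact hν'le

end RootSystemData

/-- Lemma 6.1 (combinatorial content): for every `χ ∈ V∨`, the set
`D(χ) = {ν ∈ V∨ : ν dominant, χ ≤ ν}` is nonempty and has a least element `ν(χ)`;
moreover `ν(χ) ≤ χ_dom` for the unique dominant element `χ_dom` in the Weyl group
orbit of `χ`. -/
theorem exists_least_dominant_above {V : Type} [AddCommGroup V] [Module ℚ V]
    [FiniteDimensional ℚ V] (R : RootSystemData V) (χ : Module.Dual ℚ V) :
    ∃ ν₀ : Module.Dual ℚ V,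
      (R.IsDominant ν₀ ∧ R.le χ ν₀) ∧
      (∀ ν : Module.Dual ℚ V, R.IsDominant ν → R.le χ ν → R.le ν₀ ν) ∧
      (∀ χdom : Module.Dual ℚ V, R.IsDominant χdom →
        (∃ w ∈ R.W, RootSystemData.dAct w χ = χdom) → R.le ν₀ χdom) := by
  obtain ⟨ν₀, ⟨hdom, hle⟩, hleast⟩ := R.exists_least_main χ
  refine ⟨ν₀, ⟨hdom, hle⟩, hleast, ?_⟩
  intro χdom hχdom horb
  exact hleast χdom hχdom (R.dominant_orbit_le χ χdom hχdom horb)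
end

section
/- Let χ ∈ V∨ and let ν ∈ V∨ be dominant with χ ≤ ν. Then ν is the least element of the set {ν' ∈ V∨ : ν' dominant, χ ≤ ν'} if and only if ⟨ω_α, ν − χ⟩ = 0 for every simple root α ∈ Δ with ⟨α, ν⟩ > 0, where ω_α denotes the fundamental weight associated to α. (Combinatorial content of Lemma 6.2(1) of the paper, characterizing the Newton point of b(λ).) -/
open Module

/-- Lemma 6.2(1) (combinatorial content): let `χ ∈ V∨` and let `ν ∈ V∨` be dominant with
`χ ≤ ν`. Then `ν` is the least element of `{ν' ∈ V∨ : ν' dominant, χ ≤ ν'}` if and only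
if `⟨ω_α, ν − χ⟩ = 0` for every simple root `α` with `⟨α, ν⟩ > 0`, where `ω_α ∈ V` are
the fundamental weights, dual to the simple coroots. -/
theorem least_dominant_above_iff_fundamental_weights {V : Type} [AddCommGroup V]
    [Module ℚ V] [FiniteDimensional ℚ V] (R : RootSystemData V)
    (ω : V → V) (hω1 : ∀ α ∈ R.Δ, R.coroot α (ω α) = 1)
    (hω0 : ∀ α ∈ R.Δ, ∀ β ∈ R.Δ, α ≠ β → R.coroot β (ω α) = 0)
    (χ ν : Module.Dual ℚ V) (hν : R.IsDominant ν) (hχν : R.le χ ν) :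
    (∀ ν' : Module.Dual ℚ V, R.IsDominant ν' → R.le χ ν' → R.le ν ν') ↔
      (∀ α ∈ R.Δ, 0 < ν α → (ν - χ) (ω α) = 0) := by
  classical
  have hΔΦ : ∀ α ∈ R.Δ, α ∈ R.Φ := fun α h => R.Δ_sub h
  -- simple roots are positive
  have hΔpos : ∀ α ∈ R.Δ, α ∈ R.pos := by
    intro α hα
    refine (R.mem_pos_iff α (hΔΦ α hα)).mpr
      ⟨fun β => if β = α then 1 else 0, fun β => by dsimp only; split <;> norm_num, ?_⟩
    simp [ite_smul, Finset.sum_ite_eq', hα]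
  -- extracting coefficients from linear independence of Δ
  have hindep : ∀ f : V → ℚ, (∑ δ ∈ R.Δ, f δ • δ) = 0 → ∀ δ ∈ R.Δ, f δ = 0 := by
    intro f hf δ hδ
    have h0 : ∑ x : {x // x ∈ R.Δ}, f x.1 • x.1 = 0 := by
      rw [Finset.univ_eq_attach, Finset.sum_attach R.Δ (fun δ => f δ • δ)]; exact hf
    exact Fintype.linearIndependent_iff.mp R.Δ_indep (fun x => f x.1) h0 ⟨δ, hδ⟩
  -- off-diagonal entries of the Cartan matrix are nonpositive
  have hneg : ∀ α ∈ R.Δ, ∀ β ∈ R.Δ, β ≠ α → R.coroot α β ≤ 0 := by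
    intro α hα β hβ hne
    by_contra hpos'
    push_neg at hpos'
    set m := R.coroot α β with hm
    have hroot : β - m • α ∈ R.Φ := R.reflect_root α (hΔΦ α hα) β (hΔΦ β hβ)
    rcases R.pos_or_neg _ hroot with h | h
    · obtain ⟨c, hc0, hcsum⟩ := (R.mem_pos_iff _ (R.pos_sub h)).mp h
      have hz : (∑ δ ∈ R.Δ,
          (c δ - (if δ = β then 1 else 0) + (if δ = α then m else 0)) • δ) = 0 := by
        simp only [sub_smul, add_smul, ite_smul, zero_smul, one_smul,
          Finset.sum_add_distrib, Finset.sum_sub_distrib, Finset.sum_ite_eq', hα, hβ,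
          if_true, ← hcsum]
        abel
      have := hindep _ hz α hα
      rw [if_neg (fun h' : α = β => hne (h'.symm)), if_pos rfl] at this
      have := hc0 α
      linarith
    · obtain ⟨c, hc0, hcsum⟩ := (R.mem_pos_iff _ (R.pos_sub h)).mp h
      have hβα : -(β - m • α) = m • α - β := by abel
      rw [hβα] at hcsum
      have hz : (∑ δ ∈ R.Δ,
          (c δ + (if δ = β then 1 else 0) - (if δ = α then m else 0)) • δ) = 0 := by
        simp only [sub_smul, add_smul, ite_smul, zero_smul, one_smul,
          Finset.sum_add_distrib, Finset.sum_sub_distrib, Finset.sum_ite_eq', hα, hβ,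
          if_true, ← hcsum]
        abel
      have := hindep _ hz β hβ
      rw [if_pos rfl, if_neg hne] at this
      have := hc0 β
      linarith
  -- Δ spans V
  have hΔspan : Submodule.span ℚ (R.Δ : Set V) = ⊤ := by
    rw [← top_le_iff, ← R.span_Φ, Submodule.span_le]
    intro β hβ
    have hposmem : ∀ γ ∈ R.pos, γ ∈ Submodule.span ℚ (R.Δ : Set V) := by
      intro γ hγ
      obtain ⟨c, hc0, hcs⟩ := (R.mem_pos_iff γ (R.pos_sub hγ)).mp hγ
      rw [hcs]
      exact Submodule.sum_mem _ fun δ hδ =>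
        Submodule.smul_mem _ _ (Submodule.subset_span hδ)
    rcases R.pos_or_neg β hβ with h | h
    · exact hposmem β h
    · have := hposmem _ h
      simpa using Submodule.neg_mem _ this
  -- a basis from Δ, to count dimension
  let bΔ : Basis {x // x ∈ R.Δ} ℚ V :=
    Basis.mk R.Δ_indep (by rw [Subtype.range_coe]; exact hΔspan.ge)
  have hcard : Fintype.card {x // x ∈ R.Δ} = Module.finrank ℚ V :=
    (Module.finrank_eq_card_basis bΔ).symm
  -- the fundamental weights are linearly independent and span
  have hωindep : LinearIndependent ℚ (fun x : {x // x ∈ R.Δ} => ω x.1) := by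
    rw [Fintype.linearIndependent_iff]
    intro g hg i
    have h0 : R.coroot i.1 (∑ j : {x // x ∈ R.Δ}, g j • ω j.1) = 0 := by rw [hg]; simp
    rw [map_sum] at h0
    rw [Finset.sum_eq_single i] at h0
    · rw [map_smul, hω1 i.1 i.2, smul_eq_mul, mul_one] at h0
      exact h0
    · intro j _ hji
      rw [map_smul, hω0 j.1 j.2 i.1 i.2 (fun h => hji (Subtype.ext h)), smul_eq_mul,
        mul_zero]
    · intro h
      exact absurd (Finset.mem_univ i) h
  have hωspan : Submodule.span ℚ (Set.range fun x : {x // x ∈ R.Δ} => ω x.1) = ⊤ :=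
    hωindep.span_eq_top_of_card_eq_finrank' hcard
  let bω : Basis {x // x ∈ R.Δ} ℚ V := Basis.mk hωindep hωspan.ge
  have hbω : ∀ i : {x // x ∈ R.Δ}, bω i = ω i.1 := fun i => Basis.mk_apply _ _ i
  -- every functional expands through the fundamental weights and simple coroots
  have hrepr : ∀ (w : V) (μ : Module.Dual ℚ V),
      μ w = ∑ α ∈ R.Δ, μ (ω α) * R.coroot α w := by
    intro w μ
    have hsum : ∑ i : {x // x ∈ R.Δ}, bω.repr w i • bω i = w := bω.sum_repr w
    have hco : ∀ j : {x // x ∈ R.Δ}, R.coroot j.1 w = bω.repr w j := by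
      intro j
      conv_lhs => rw [← hsum]
      rw [map_sum, Finset.sum_eq_single j]
      · rw [hbω, map_smul, hω1 j.1 j.2, smul_eq_mul, mul_one]
      · intro i _ hij
        rw [hbω, map_smul, hω0 i.1 i.2 j.1 j.2 (fun h => hij (Subtype.ext h)),
          smul_eq_mul, mul_zero]
      · intro h
        exact absurd (Finset.mem_univ j) h
    have : μ w = ∑ i : {x // x ∈ R.Δ}, μ (ω i.1) * R.coroot i.1 w := by
      conv_lhs => rw [← hsum, map_sum]
      refine Finset.sum_congr rfl fun i _ => ?_
      rw [hbω, map_smul, smul_eq_mul, hco i, mul_comm]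
    rw [this, Finset.univ_eq_attach,
      Finset.sum_attach R.Δ (fun α => μ (ω α) * R.coroot α w)]
  have hexp : ∀ μ : Module.Dual ℚ V, μ = ∑ α ∈ R.Δ, μ (ω α) • R.coroot α := by
    intro μ
    ext w
    rw [hrepr w μ]
    rw [LinearMap.sum_apply]
    refine Finset.sum_congr rfl fun α _ => ?_
    rw [LinearMap.smul_apply, smul_eq_mul]
  -- the key vector identity ∑_{β∈Φ} ⟨β,α∨⟩ β = c_α α
  set cst : V → ℚ := fun γ => (∑ β ∈ R.Φ, (R.coroot γ β) ^ 2) / 2 with hcst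
  have hL2 : ∀ γ ∈ R.Φ, ∑ β ∈ R.Φ, R.coroot γ β • β = cst γ • γ := by
    intro γ hγ
    have hcor : ∀ β : V, R.coroot γ (β - R.coroot γ β • γ) = -R.coroot γ β := by
      intro β
      rw [map_sub, map_smul, R.coroot_self γ hγ, smul_eq_mul]
      ring
    have hinv : ∀ β : V,
        (β - R.coroot γ β • γ) - R.coroot γ (β - R.coroot γ β • γ) • γ = β := by
      intro β
      rw [hcor β, neg_smul, sub_neg_eq_add, sub_add_cancel]
    have hre : ∑ β ∈ R.Φ, R.coroot γ β • β =
        ∑ β ∈ R.Φ, R.coroot γ (β - R.coroot γ β • γ) • (β - R.coroot γ β • γ) := by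
      refine Finset.sum_nbij' (fun β => β - R.coroot γ β • γ)
        (fun β => β - R.coroot γ β • γ) ?_ ?_ ?_ ?_ ?_
      · intro β hβ; exact R.reflect_root γ hγ β hβ
      · intro β hβ; exact R.reflect_root γ hγ β hβ
      · intro β _; exact hinv β
      · intro β _; exact hinv β
      · intro β _
        show R.coroot γ β • β = R.coroot γ ((β - R.coroot γ β • γ) -
            R.coroot γ (β - R.coroot γ β • γ) • γ) • ((β - R.coroot γ β • γ) -
            R.coroot γ (β - R.coroot γ β • γ) • γ)
        rw [hinv β]
    have hre2 : ∑ β ∈ R.Φ, R.coroot γ (β - R.coroot γ β • γ) • (β - R.coroot γ β • γ) =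
        -(∑ β ∈ R.Φ, R.coroot γ β • β) + (∑ β ∈ R.Φ, (R.coroot γ β) ^ 2) • γ := by
      have hterm : ∀ β : V, R.coroot γ (β - R.coroot γ β • γ) • (β - R.coroot γ β • γ) =
          -(R.coroot γ β • β) + ((R.coroot γ β) ^ 2) • γ := by
        intro β
        rw [hcor β, neg_smul, smul_sub, smul_smul, pow_two]
        abel
      rw [Finset.sum_congr rfl fun β _ => hterm β, Finset.sum_add_distrib,
        ← Finset.sum_neg_distrib, ← Finset.sum_smul]
    have h2 : (2 : ℚ) • (∑ β ∈ R.Φ, R.coroot γ β • β) =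
        (∑ β ∈ R.Φ, (R.coroot γ β) ^ 2) • γ := by
      have := hre.trans hre2
      rw [two_smul]
      linear_combination (norm := module) this
    have h5 := congrArg (fun x => (2 : ℚ)⁻¹ • x) h2
    simp only [smul_smul] at h5
    norm_num at h5
    rw [h5]
    simp only [hcst]
    congr 1
    ring
  have hcpos : ∀ γ ∈ R.Φ, 0 < cst γ := by
    intro γ hγ
    have h1 : (R.coroot γ γ) ^ 2 ≤ ∑ β ∈ R.Φ, (R.coroot γ β) ^ 2 :=
      Finset.single_le_sum (f := fun β => (R.coroot γ β) ^ 2)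
        (fun β _ => sq_nonneg _) hγ
    rw [R.coroot_self γ hγ] at h1
    rw [hcst]
    norm_num
    linarith
  -- scalar version (the invariant form)
  have hB : ∀ γ ∈ R.Φ, ∀ ξ : Module.Dual ℚ V,
      ∑ β ∈ R.Φ, R.coroot γ β * ξ β = cst γ * ξ γ := by
    intro γ hγ ξ
    have := congrArg ξ (hL2 γ hγ)
    rw [map_sum, map_smul, smul_eq_mul] at this
    rw [← this]
    refine Finset.sum_congr rfl fun β _ => ?_
    rw [map_smul, smul_eq_mul]
  -- positivity of coroots of positive roots on fundamental weights
  have hH : ∀ β ∈ R.pos, ∀ α ∈ R.Δ, 0 ≤ R.coroot β (ω α) := by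
    intro β hβ α hα
    have hβΦ := R.pos_sub hβ
    obtain ⟨e, he0, hes⟩ := (R.mem_pos_iff β hβΦ).mp hβ
    have key : cst β • β = ∑ δ ∈ R.Δ, (R.coroot β (ω δ) * cst δ) • δ := by
      calc cst β • β = ∑ γ ∈ R.Φ, R.coroot β γ • γ := (hL2 β hβΦ).symm
        _ = ∑ γ ∈ R.Φ, (∑ δ ∈ R.Δ, R.coroot β (ω δ) * R.coroot δ γ) • γ := by
            refine Finset.sum_congr rfl fun γ _ => ?_
            rw [← hrepr γ (R.coroot β)]
        _ = ∑ γ ∈ R.Φ, ∑ δ ∈ R.Δ, (R.coroot β (ω δ) * R.coroot δ γ) • γ := by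
            refine Finset.sum_congr rfl fun γ _ => ?_
            rw [Finset.sum_smul]
        _ = ∑ δ ∈ R.Δ, ∑ γ ∈ R.Φ, (R.coroot β (ω δ) * R.coroot δ γ) • γ :=
            Finset.sum_comm
        _ = ∑ δ ∈ R.Δ, R.coroot β (ω δ) • (∑ γ ∈ R.Φ, R.coroot δ γ • γ) := by
            refine Finset.sum_congr rfl fun δ _ => ?_
            rw [Finset.smul_sum]
            refine Finset.sum_congr rfl fun γ _ => ?_
            rw [smul_smul]
        _ = ∑ δ ∈ R.Δ, (R.coroot β (ω δ) * cst δ) • δ := by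
            refine Finset.sum_congr rfl fun δ hδ => ?_
            rw [hL2 δ (hΔΦ δ hδ), smul_smul]
    have key2 : ∑ δ ∈ R.Δ, (cst β * e δ - R.coroot β (ω δ) * cst δ) • δ = 0 := by
      simp only [sub_smul, Finset.sum_sub_distrib, ← key]
      have : ∑ δ ∈ R.Δ, (cst β * e δ) • δ = cst β • β := by
        rw [hes, Finset.smul_sum]
        refine Finset.sum_congr rfl fun δ _ => ?_
        rw [smul_smul]
      rw [this, sub_self]
    have h0 := hindep _ key2 α hα
    have h1 : R.coroot β (ω α) * cst α = cst β * e α := by linarith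
    have h2 : 0 ≤ cst β * e α := mul_nonneg (le_of_lt (hcpos β hβΦ)) (he0 α)
    have h3 := hcpos α (hΔΦ α hα)
    nlinarith
  -- le is characterized by coefficients along fundamental weights
  have hle_iff : ∀ ν₁ ν₂ : Module.Dual ℚ V,
      R.le ν₁ ν₂ ↔ ∀ α ∈ R.Δ, 0 ≤ (ν₂ - ν₁) (ω α) := by
    intro ν₁ ν₂
    constructor
    · rintro ⟨c, hc0, hcs⟩ α hα
      rw [hcs, LinearMap.sum_apply]
      refine Finset.sum_nonneg fun β hβ => ?_
      rw [LinearMap.smul_apply, smul_eq_mul]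
      exact mul_nonneg (hc0 β) (hH β hβ α hα)
    · intro h
      refine ⟨fun β => if β ∈ R.Δ then (ν₂ - ν₁) (ω β) else 0, ?_, ?_⟩
      · intro β
        dsimp only
        split
        · next hβ => exact h β hβ
        · exact le_refl 0
      · rw [← Finset.sum_subset (fun α hα => hΔpos α hα)]
        · conv_lhs => rw [hexp (ν₂ - ν₁)]
          refine Finset.sum_congr rfl fun α hα => ?_
          dsimp only
          rw [if_pos hα]
        · intro β _ hβ
          dsimp only
          rw [if_neg hβ, zero_smul]
  constructor
  · -- minimality implies the condition on fundamental weights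
    intro hmin α hα hνα
    by_contra hne
    have hd0 : 0 ≤ (ν - χ) (ω α) := (hle_iff χ ν).mp hχν α hα
    have hdpos : 0 < (ν - χ) (ω α) := lt_of_le_of_ne hd0 (Ne.symm hne)
    set t := min ((ν - χ) (ω α)) (ν α / 2) with ht
    have htpos : 0 < t := lt_min hdpos (by linarith)
    set ν' := ν - t • R.coroot α with hν'def
    have hdom' : R.IsDominant ν' := by
      intro β hβ
      have : ν' β = ν β - t * R.coroot α β := by
        rw [hν'def, LinearMap.sub_apply, LinearMap.smul_apply, smul_eq_mul]
      rw [this]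
      by_cases hba : β = α
      · subst hba
        rw [R.coroot_self β (hΔΦ β hβ)]
        have h1 : t ≤ ν β / 2 := min_le_right _ _
        linarith [hν β hβ]
      · have h1 := hneg α hα β hβ hba
        have h2 := hν β hβ
        nlinarith
    have hle' : R.le χ ν' := by
      rw [hle_iff]
      intro δ hδ
      have hexp' : (ν' - χ) (ω δ) = (ν - χ) (ω δ) - t * R.coroot α (ω δ) := by
        rw [hν'def]
        simp only [LinearMap.sub_apply, LinearMap.smul_apply, smul_eq_mul]
        ring
      rw [hexp']
      by_cases hda : δ = α
      · subst hda
        rw [hω1 δ hδ]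
        have := min_le_left ((ν - χ) (ω δ)) (ν δ / 2)
        linarith
      · rw [hω0 δ hδ α hα hda, mul_zero, sub_zero]
        exact (hle_iff χ ν).mp hχν δ hδ
    have hfin := (hle_iff ν ν').mp (hmin ν' hdom' hle') α hα
    have : (ν' - ν) (ω α) = -t := by
      rw [hν'def]
      simp only [LinearMap.sub_apply, LinearMap.smul_apply, smul_eq_mul]
      rw [hω1 α hα]
      ring
    rw [this] at hfin
    linarith
  · -- the condition implies minimality
    intro hcond ν' hdom' hle'
    rw [hle_iff]
    set d : V → ℚ := fun α => (ν' - ν) (ω α) with hd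
    by_contra hbad
    push_neg at hbad
    obtain ⟨α₀, hα₀, hdα₀⟩ := hbad
    set J := R.Δ.filter (fun α => d α < 0) with hJ
    have hJΔ : J ⊆ R.Δ := Finset.filter_subset _ _
    have hα₀J : α₀ ∈ J := Finset.mem_filter.mpr ⟨hα₀, by simpa [hd] using hdα₀⟩
    have hνJ : ∀ α ∈ J, ν α = 0 := by
      intro α hαJ
      rcases Finset.mem_filter.mp hαJ with ⟨hαΔ, hdα⟩
      by_contra h
      have hp : 0 < ν α := lt_of_le_of_ne (hν α hαΔ) (Ne.symm h)
      have h1 := hcond α hαΔ hp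
      have h2 := (hle_iff χ ν').mp hle' α hαΔ
      have h3 : d α = (ν' - χ) (ω α) - (ν - χ) (ω α) := by
        simp only [hd, LinearMap.sub_apply]
        ring
      rw [h1, sub_zero] at h3
      rw [h3] at hdα
      linarith
    set μm : Module.Dual ℚ V := ∑ α ∈ J, (-(d α)) • R.coroot α with hμm
    set μp : Module.Dual ℚ V := ∑ α ∈ R.Δ \ J, d α • R.coroot α with hμp
    have hsplit : ∀ w : V, (ν' - ν) w = μp w - μm w := by
      intro w
      have h1 : (ν' - ν) w = ∑ α ∈ R.Δ, d α * R.coroot α w := hrepr w (ν' - ν)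
      have h2 : ∑ α ∈ R.Δ, d α * R.coroot α w =
          (∑ α ∈ R.Δ \ J, d α * R.coroot α w) + ∑ α ∈ J, d α * R.coroot α w :=
        (Finset.sum_sdiff hJΔ).symm
      rw [h1, h2, hμp, hμm]
      simp only [LinearMap.sum_apply, LinearMap.smul_apply, smul_eq_mul, neg_mul,
        Finset.sum_neg_distrib]
      ring
    -- B(μm, ξ) computations
    have hBμm : ∀ ξ : Module.Dual ℚ V,
        ∑ β ∈ R.Φ, μm β * ξ β = ∑ α ∈ J, (-(d α)) * (cst α * ξ α) := by
      intro ξ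
      have h1 : ∀ β : V, μm β = ∑ α ∈ J, (-(d α)) * R.coroot α β := by
        intro β
        rw [hμm]
        simp only [LinearMap.sum_apply, LinearMap.smul_apply, smul_eq_mul]
      calc ∑ β ∈ R.Φ, μm β * ξ β
          = ∑ β ∈ R.Φ, ∑ α ∈ J, (-(d α)) * R.coroot α β * ξ β := by
            refine Finset.sum_congr rfl fun β _ => ?_
            rw [h1, Finset.sum_mul]
        _ = ∑ α ∈ J, ∑ β ∈ R.Φ, (-(d α)) * R.coroot α β * ξ β := Finset.sum_comm
        _ = ∑ α ∈ J, (-(d α)) * (cst α * ξ α) := by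
            refine Finset.sum_congr rfl fun α hα => ?_
            rw [← hB α (hΔΦ α (hJΔ hα)) ξ, Finset.mul_sum]
            refine Finset.sum_congr rfl fun β _ => ?_
            ring
    have h1 : 0 ≤ ∑ β ∈ R.Φ, μm β * μm β :=
      Finset.sum_nonneg fun β _ => mul_self_nonneg _
    have h2 : ∑ β ∈ R.Φ, μm β * μm β =
        (∑ β ∈ R.Φ, μm β * μp β) - ∑ β ∈ R.Φ, μm β * (ν' - ν) β := by
      rw [← Finset.sum_sub_distrib]
      refine Finset.sum_congr rfl fun β _ => ?_
      rw [hsplit β]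
      ring
    have h3 : 0 ≤ ∑ β ∈ R.Φ, μm β * (ν' - ν) β := by
      rw [hBμm (ν' - ν)]
      refine Finset.sum_nonneg fun α hαJ => ?_
      have hdα := (Finset.mem_filter.mp hαJ).2
      have hc := hcpos α (hΔΦ α (hJΔ hαJ))
      have hμ : 0 ≤ (ν' - ν) α := by
        rw [LinearMap.sub_apply, hνJ α hαJ, sub_zero]
        exact hdom' α (hJΔ hαJ)
      have : 0 < -(d α) := by simpa using hdα
      exact mul_nonneg this.le (mul_nonneg hc.le hμ)
    have h4 : ∑ β ∈ R.Φ, μm β * μp β ≤ 0 := by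
      rw [hBμm μp]
      refine Finset.sum_nonpos fun α hαJ => ?_
      have hμpα : μp α ≤ 0 := by
        rw [hμp]
        simp only [LinearMap.sum_apply, LinearMap.smul_apply, smul_eq_mul]
        refine Finset.sum_nonpos fun β hβ => ?_
        rcases Finset.mem_sdiff.mp hβ with ⟨hβΔ, hβJ⟩
        have hdβ : 0 ≤ d β := by
          by_contra h
          exact hβJ (Finset.mem_filter.mpr ⟨hβΔ, by push_neg at h; simpa [hd] using h⟩)
        have hne : α ≠ β := fun h => hβJ (h ▸ hαJ)
        have hco := hneg β hβΔ α (hJΔ hαJ) hne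
        exact mul_nonpos_of_nonneg_of_nonpos hdβ hco
      have hdα := (Finset.mem_filter.mp hαJ).2
      have hc := hcpos α (hΔΦ α (hJΔ hαJ))
      exact mul_nonpos_of_nonneg_of_nonpos (by linarith)
        (mul_nonpos_of_nonneg_of_nonpos hc.le hμpα)
    have hzero : ∑ β ∈ R.Φ, μm β * μm β = 0 := le_antisymm (by linarith) h1
    have hμmΦ : ∀ β ∈ R.Φ, μm β = 0 := by
      intro β hβ
      have := (Finset.sum_eq_zero_iff_of_nonneg
        (fun β _ => mul_self_nonneg (μm β))).mp hzero β hβ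
      exact mul_self_eq_zero.mp this
    have hμm0 : μm = 0 := LinearMap.ext_on R.span_Φ (fun x hx => hμmΦ x hx)
    have heval : μm (ω α₀) = -(d α₀) := by
      rw [hμm]
      simp only [LinearMap.sum_apply, LinearMap.smul_apply, smul_eq_mul]
      rw [Finset.sum_eq_single α₀]
      · rw [hω1 α₀ hα₀, mul_one]
      · intro α hαJ hne
        rw [hω0 α₀ hα₀ α (hJΔ hαJ) (fun h => hne h.symm), mul_zero]
      · intro h
        exact absurd hα₀J h
    rw [hμm0] at heval
    simp at heval
    have hdα₀' := (Finset.mem_filter.mp hα₀J).2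
    rw [heval] at hdα₀'
    exact absurd hdα₀' (lt_irrefl 0)
end

section
/- Let Δ_M ⊆ Δ and let ρ ∈ V be half the sum of the positive roots. Let ν, λ ∈ V∨ be such that λ − ν is a non-negative rational linear combination of {α∨ : α ∈ Δ_M}. Let w ∈ W be such that w(α∨) is a positive coroot for every α ∈ Δ_M, and such that w(ν) is dominant. Then ⟨ρ, λ − ν⟩ ≤ ⟨ρ, λ_dom − w(ν)⟩, where λ_dom denotes the unique dominant element in the Weyl group orbit of λ. (Inequality chain established at the end of the proof of Theorem 7.13 of the paper.) -/
open Module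

namespace RootSystemData

variable {V : Type} [AddCommGroup V] [Module ℚ V] [FiniteDimensional ℚ V] (R : RootSystemData V)

lemma coeff_zero (e : V → ℚ) (h : ∑ α ∈ R.Δ, e α • α = 0) : ∀ α ∈ R.Δ, e α = 0 := by
  have h2 : ∑ i : {x // x ∈ R.Δ}, e i.val • i.val = 0 := by
    rw [Finset.sum_coe_sort R.Δ (fun α => e α • α)]; exact h
  have := linearIndependent_iff'.1 R.Δ_indep Finset.univ (fun i => e i.val) h2
  intro α hα
  exact this ⟨α, hα⟩ (Finset.mem_univ _)

lemma not_both_pos {β : V} (h1 : β ∈ R.pos) (h2 : -β ∈ R.pos) : False := by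
  obtain ⟨c, hc, hce⟩ := (R.mem_pos_iff β (R.pos_sub h1)).1 h1
  obtain ⟨d, hd, hde⟩ := (R.mem_pos_iff (-β) (R.pos_sub h2)).1 h2
  have hsum : ∑ α ∈ R.Δ, (c α + d α) • α = 0 := by
    calc ∑ α ∈ R.Δ, (c α + d α) • α
        = (∑ α ∈ R.Δ, c α • α) + ∑ α ∈ R.Δ, d α • α := by
          rw [← Finset.sum_add_distrib]
          exact Finset.sum_congr rfl fun α _ => by rw [add_smul]
      _ = β + -β := by rw [← hce, ← hde]
      _ = 0 := by abel
  have hz := R.coeff_zero _ hsum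
  have hβ0 : β = 0 := by
    rw [hce]
    apply Finset.sum_eq_zero
    intro α hα
    have h0 : c α = 0 := le_antisymm (by linarith [hd α, hz α hα]) (hc α)
    rw [h0, zero_smul]
  exact R.zero_notin (hβ0 ▸ R.pos_sub h1)

lemma simple_mem_pos_s7 {α : V} (hα : α ∈ R.Δ) : α ∈ R.pos := by
  classical
  refine (R.mem_pos_iff α (R.Δ_sub hα)).2 ⟨fun γ => if γ = α then 1 else 0, ?_, ?_⟩
  · intro γ; by_cases h : γ = α <;> simp [h]
  · rw [eq_comm]
    have h1 : ∀ γ ∈ R.Δ, (if γ = α then (1:ℚ) else 0) • γ = if γ = α then γ else 0 := by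
      intro γ _; split <;> simp
    rw [Finset.sum_congr rfl h1, Finset.sum_ite_eq' R.Δ α (fun γ => γ), if_pos hα]

lemma reflect_pos {α β : V} (hα : α ∈ R.Δ) (hβ : β ∈ R.pos) (hne : β ≠ α) :
    β - R.coroot α β • α ∈ R.pos := by
  classical
  have hαΦ := R.Δ_sub hα
  have hβΦ := R.pos_sub hβ
  have h1 : β - R.coroot α β • α ∈ R.Φ := R.reflect_root α hαΦ β hβΦ
  rcases R.pos_or_neg _ h1 with h | h
  · exact h
  exfalso
  obtain ⟨c, hc, hce⟩ := (R.mem_pos_iff β hβΦ).1 hβ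
  obtain ⟨d, hd, hde⟩ := (R.mem_pos_iff _ (R.pos_sub h)).1 h
  set k := R.coroot α β with hk
  have hsum : ∑ γ ∈ R.Δ, (c γ + d γ - if γ = α then k else 0) • γ = 0 := by
    have e1 : (∑ γ ∈ R.Δ, c γ • γ) + (∑ γ ∈ R.Δ, d γ • γ) = k • α := by
      rw [← hce, ← hde]; abel
    have e2 : ∑ γ ∈ R.Δ, (if γ = α then k else 0) • γ = k • α := by
      have h3 : ∀ γ ∈ R.Δ, (if γ = α then (k:ℚ) else 0) • γ = if γ = α then k • γ else 0 := by
        intro γ _; split <;> simp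
      rw [Finset.sum_congr rfl h3, Finset.sum_ite_eq' R.Δ α (fun γ => k • γ), if_pos hα]
    calc ∑ γ ∈ R.Δ, (c γ + d γ - if γ = α then k else 0) • γ
        = (∑ γ ∈ R.Δ, c γ • γ + ∑ γ ∈ R.Δ, d γ • γ) - ∑ γ ∈ R.Δ, (if γ = α then k else 0) • γ := by
          rw [← Finset.sum_add_distrib, ← Finset.sum_sub_distrib]
          exact Finset.sum_congr rfl fun γ _ => by rw [sub_smul, add_smul]
      _ = 0 := by rw [e2, e1]; abel
  have hz := R.coeff_zero _ hsum
  have hcγ : ∀ γ ∈ R.Δ, γ ≠ α → c γ = 0 := by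
    intro γ hγ hγα
    have h4 := hz γ hγ
    rw [if_neg hγα] at h4
    linarith [hc γ, hd γ]
  have hβα : β = c α • α := by
    rw [hce, Finset.sum_eq_single α]
    · intro γ hγ hγα; rw [hcγ γ hγ hγα, zero_smul]
    · intro hαn; exact absurd hα hαn
  rcases R.reduced α hαΦ (c α) (hβα ▸ hβΦ) with h1c | h1c
  · exact hne (by rw [hβα, h1c, one_smul])
  · linarith [hc α]

lemma coroot_rho_simple {ρ : V} (hρ : (2:ℚ) • ρ = ∑ β ∈ R.pos, β) {α : V} (hα : α ∈ R.Δ) :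
    R.coroot α ρ = 1 := by
  classical
  have hαΦ := R.Δ_sub hα
  have hαpos := R.simple_mem_pos_s7 hα
  have hα0 : α ≠ 0 := fun h => R.zero_notin (h ▸ hαΦ)
  set s : V → V := fun x => x - R.coroot α x • α with hs
  have hinv : ∀ x, s (s x) = x := by
    intro x
    have h5 : R.coroot α (s x) = - R.coroot α x := by
      simp only [hs, map_sub, map_smul, R.coroot_self α hαΦ, smul_eq_mul]
      ring
    simp only [hs] at h5 ⊢
    rw [h5]
    abel_nf
    simp
  have hsα : s α = -α := by
    simp only [hs, R.coroot_self α hαΦ]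
    rw [two_smul]; abel
  have hmap : ∀ β ∈ R.pos.erase α, s β ∈ R.pos.erase α := by
    intro β hβ
    have hβp := Finset.mem_of_mem_erase hβ
    have hβne := Finset.ne_of_mem_erase hβ
    refine Finset.mem_erase.2 ⟨?_, R.reflect_pos hα hβp hβne⟩
    intro hcon
    have h6 : β = s α := by rw [← hcon, hinv]
    rw [hsα] at h6
    exact R.not_both_pos (h6 ▸ hβp) (by rw [neg_neg]; exact hαpos)
  have hsum_erase : ∑ β ∈ R.pos.erase α, s β = ∑ β ∈ R.pos.erase α, β :=
    Finset.sum_nbij' (i := fun β => s β) (j := fun β => s β)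
      hmap hmap (fun β _ => hinv β) (fun β _ => hinv β) (fun β _ => rfl)
  have hsum : ∑ β ∈ R.pos, s β = (∑ β ∈ R.pos, β) - (2:ℚ) • α := by
    rw [← Finset.add_sum_erase _ s hαpos, ← Finset.add_sum_erase _ (fun β => β) hαpos,
      hsum_erase, hsα, two_smul]
    abel
  have hsum2 : ∑ β ∈ R.pos, s β
      = (∑ β ∈ R.pos, β) - R.coroot α (∑ β ∈ R.pos, β) • α := by
    simp only [hs]
    rw [Finset.sum_sub_distrib, ← Finset.sum_smul, map_sum]
  have key : (R.coroot α (∑ β ∈ R.pos, β) - 2) • α = 0 := by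
    have h7 := hsum2.symm.trans hsum
    have h8 : R.coroot α (∑ β ∈ R.pos, β) • α = (2:ℚ) • α := sub_right_injective h7
    rw [sub_smul, h8, sub_self]
  rcases smul_eq_zero.1 key with h9 | h9
  · have h10 : R.coroot α (∑ β ∈ R.pos, β) = 2 := by linarith [sub_eq_zero.1 h9]
    rw [← hρ, map_smul, smul_eq_mul] at h10
    linarith
  · exact absurd h9 hα0

lemma one_le_coroot_rho {ρ : V} (hρ : (2:ℚ) • ρ = ∑ β ∈ R.pos, β) {β : V} (hβ : β ∈ R.pos) :
    1 ≤ R.coroot β ρ := by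
  classical
  obtain ⟨β₀, hβ₀, hmin⟩ := R.pos.exists_min_image (fun b => R.coroot b ρ) ⟨β, hβ⟩
  have hsuff : 1 ≤ R.coroot β₀ ρ → 1 ≤ R.coroot β ρ := fun h => le_trans h (hmin β hβ)
  apply hsuff
  have hβ₀Φ := R.pos_sub hβ₀
  obtain ⟨c, hc, hce⟩ := (R.mem_pos_iff β₀ hβ₀Φ).1 hβ₀
  have h2 : ∑ γ ∈ R.Δ, c γ * R.coroot β₀ γ = 2 := by
    have := R.coroot_self β₀ hβ₀Φ
    nth_rewrite 2 [hce] at this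
    rw [map_sum] at this
    rw [← this]
    exact Finset.sum_congr rfl fun γ _ => by rw [map_smul, smul_eq_mul]
  have hex : ∃ γ ∈ R.Δ, 0 < c γ * R.coroot β₀ γ := by
    by_contra hcon
    push_neg at hcon
    have : ∑ γ ∈ R.Δ, c γ * R.coroot β₀ γ ≤ 0 := Finset.sum_nonpos hcon
    linarith
  obtain ⟨γ, hγΔ, hγpos⟩ := hex
  have hγΦ := R.Δ_sub hγΔ
  have hcγpos : 0 < R.coroot β₀ γ := by
    rcases lt_or_ge 0 (R.coroot β₀ γ) with h | h
    · exact h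
    · nlinarith [hc γ]
  have hint : 1 ≤ R.coroot β₀ γ := by
    obtain ⟨n, hn⟩ := R.crystallographic β₀ hβ₀Φ γ hγΦ
    rw [hn] at hcγpos ⊢
    exact_mod_cast Int.cast_pos.1 hcγpos
  by_cases hcase : β₀ = γ
  · rw [hcase, R.coroot_rho_simple hρ hγΔ]
  · exfalso
    have hβ' : β₀ - R.coroot γ β₀ • γ ∈ R.pos := R.reflect_pos hγΔ hβ₀ hcase
    have hval : R.coroot (β₀ - R.coroot γ β₀ • γ) ρ
        = R.coroot β₀ ρ - R.coroot γ ρ * R.coroot β₀ γ := by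
      rw [R.reflect_coroot γ hγΦ β₀ hβ₀Φ ρ, map_sub, map_smul, smul_eq_mul, mul_comm]
    rw [R.coroot_rho_simple hρ hγΔ, one_mul] at hval
    have := hmin _ hβ'
    rw [hval] at this
    linarith

lemma weyl_maps_roots : ∀ v ∈ R.W, ∀ β ∈ R.Φ, v β ∈ R.Φ := by
  classical
  intro v hv
  rw [R.weyl_gen] at hv
  induction hv using Subgroup.closure_induction with
  | mem x hx =>
      obtain ⟨α, hα, rfl⟩ := hx
      intro β hβ
      rw [Module.reflection_apply]
      exact R.reflect_root α hα β hβ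
  | one => intro β hβ; simpa using hβ
  | mul x y hx hy px py =>
      intro β hβ
      exact px _ (py β hβ)
  | inv x hx px =>
      intro β hβ
      have himg : R.Φ.image (fun γ => x γ) = R.Φ := by
        apply Finset.eq_of_subset_of_card_le
        · intro γ hγ
          obtain ⟨δ, hδ, rfl⟩ := Finset.mem_image.1 hγ
          exact px δ hδ
        · rw [Finset.card_image_of_injective _ x.injective]
      rw [← himg] at hβ
      obtain ⟨δ, hδ, hδe⟩ := Finset.mem_image.1 hβ
      have : (x⁻¹ : V ≃ₗ[ℚ] V) β = δ := by
        rw [← hδe]; exact x.symm_apply_apply δ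
      rw [this]; exact hδ

lemma dominant_nonneg {μ : Module.Dual ℚ V} (hμ : R.IsDominant μ) {β : V} (hβ : β ∈ R.pos) :
    0 ≤ μ β := by
  obtain ⟨c, hc, hce⟩ := (R.mem_pos_iff β (R.pos_sub hβ)).1 hβ
  rw [hce, map_sum]
  apply Finset.sum_nonneg
  intro γ hγ
  rw [map_smul, smul_eq_mul]
  exact mul_nonneg (hc γ) (hμ γ hγ)

lemma dominant_pairing_max {ρ : V} (hρ : (2:ℚ) • ρ = ∑ β ∈ R.pos, β)
    {μ : Module.Dual ℚ V} (hμ : R.IsDominant μ) {v : V ≃ₗ[ℚ] V} (hv : v ∈ R.W) :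
    μ (v ρ) ≤ μ ρ := by
  classical
  set S : Finset V := R.pos.image (fun β => v β) with hS
  have hSΦ : ∀ γ ∈ S, γ ∈ R.Φ := by
    intro γ hγ
    obtain ⟨δ, hδ, rfl⟩ := Finset.mem_image.1 hγ
    exact R.weyl_maps_roots v hv δ (R.pos_sub hδ)
  have hvinv : (v⁻¹ : V ≃ₗ[ℚ] V) ∈ R.W := inv_mem hv
  have himg : (R.pos \ S).image (fun x => -x) = S \ R.pos := by
    apply Finset.Subset.antisymm
    · intro γ hγ
      obtain ⟨β, hβ, rfl⟩ := Finset.mem_image.1 hγ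
      obtain ⟨hβpos, hβS⟩ := Finset.mem_sdiff.1 hβ
      refine Finset.mem_sdiff.2 ⟨?_, ?_⟩
      · -- -β ∈ S
        have h1 : v.symm β ∈ R.Φ := by
          have := R.weyl_maps_roots _ hvinv β (R.pos_sub hβpos)
          exact this
        have h2 : v.symm β ∉ R.pos := by
          intro hcon
          apply hβS
          exact Finset.mem_image.2 ⟨v.symm β, hcon, v.apply_symm_apply β⟩
        have h3 : -(v.symm β) ∈ R.pos := (R.pos_or_neg _ h1).resolve_left h2
        refine Finset.mem_image.2 ⟨-(v.symm β), h3, ?_⟩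
        rw [map_neg, v.apply_symm_apply]
      · intro hcon
        exact R.not_both_pos hβpos hcon
    · intro γ hγ
      obtain ⟨hγS, hγpos⟩ := Finset.mem_sdiff.1 hγ
      have hγΦ := hSΦ γ hγS
      have h3 : -γ ∈ R.pos := (R.pos_or_neg _ hγΦ).resolve_left hγpos
      refine Finset.mem_image.2 ⟨-γ, Finset.mem_sdiff.2 ⟨h3, ?_⟩, by rw [neg_neg]⟩
      intro hcon
      obtain ⟨δ, hδ, hδe⟩ := Finset.mem_image.1 hcon
      obtain ⟨δ', hδ', hδ'e⟩ := Finset.mem_image.1 hγS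
      have : δ = -δ' := by
        apply v.injective
        rw [hδe, map_neg, hδ'e]
      exact R.not_both_pos hδ' (by rwa [← this])
  have hsum_neg : ∑ γ ∈ S \ R.pos, μ γ = - ∑ β ∈ R.pos \ S, μ β := by
    rw [← himg, Finset.sum_image (by intro x _ y _ h; exact neg_injective h)]
    rw [← Finset.sum_neg_distrib]
    exact Finset.sum_congr rfl fun β _ => by rw [map_neg]
  have h1 : 2 * μ ρ = ∑ β ∈ R.pos, μ β := by
    have := congrArg μ hρ
    rwa [map_smul, smul_eq_mul, map_sum] at this
  have h2 : 2 * μ (v ρ) = ∑ γ ∈ S, μ γ := by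
    have h2a := congrArg (fun x => μ (v x)) hρ
    simp only [map_smul, smul_eq_mul, map_sum] at h2a
    rw [h2a, hS, Finset.sum_image (fun x _ y _ h => v.injective h)]
  have h3 : ∑ β ∈ R.pos, μ β = ∑ β ∈ R.pos ∩ S, μ β + ∑ β ∈ R.pos \ S, μ β :=
    (Finset.sum_inter_add_sum_sdiff _ _ _).symm
  have h4 : ∑ γ ∈ S, μ γ = ∑ γ ∈ S ∩ R.pos, μ γ + ∑ γ ∈ S \ R.pos, μ γ :=
    (Finset.sum_inter_add_sum_sdiff _ _ _).symm
  have h5 : R.pos ∩ S = S ∩ R.pos := Finset.inter_comm _ _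
  have h6 : 0 ≤ ∑ β ∈ R.pos \ S, μ β := by
    apply Finset.sum_nonneg
    intro β hβ
    exact R.dominant_nonneg hμ (Finset.mem_sdiff.1 hβ).1
  have : 2 * μ ρ - 2 * μ (v ρ) = 2 * ∑ β ∈ R.pos \ S, μ β := by
    rw [h1, h2, h3, h4, h5, hsum_neg]; ring
  linarith

end RootSystemData
/-- Inequality chain from the end of the proof of Theorem 7.13: let `Δ_M ⊆ Δ`, let `ρ`
be half the sum of the positive roots, let `λ − ν` be a non-negative rational linear
combination of `{α∨ : α ∈ Δ_M}`, and let `w ∈ W` be such that `w(α∨)` is a positive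
coroot for every `α ∈ Δ_M` and `w(ν)` is dominant. Then
`⟨ρ, λ − ν⟩ ≤ ⟨ρ, λ_dom − w(ν)⟩`, where `λ_dom` is the dominant element in the Weyl
group orbit of `λ`. -/
theorem rho_pairing_ineq {V : Type} [AddCommGroup V] [Module ℚ V]
    [FiniteDimensional ℚ V] (R : RootSystemData V)
    (ΔM : Finset V) (hM : ΔM ⊆ R.Δ)
    (ρ : V) (hρ : (2:ℚ) • ρ = ∑ β ∈ R.pos, β)
    (ν lam : Module.Dual ℚ V)
    (c : V → ℚ) (hc : ∀ α, 0 ≤ c α) (heq : lam - ν = ∑ α ∈ ΔM, c α • R.coroot α)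
    (w : V ≃ₗ[ℚ] V) (hw : w ∈ R.W)
    (hwpos : ∀ α ∈ ΔM, ∃ β ∈ R.pos, RootSystemData.dAct w (R.coroot α) = R.coroot β)
    (hwdom : R.IsDominant (RootSystemData.dAct w ν))
    (lamdom : Module.Dual ℚ V) (hld : R.IsDominant lamdom)
    (horb : ∃ u ∈ R.W, RootSystemData.dAct u lam = lamdom) :
    (lam - ν) ρ ≤ (lamdom - RootSystemData.dAct w ν) ρ := by
  classical
  choose! b hb hbe using hwpos
  obtain ⟨u, hu, hue⟩ := horb
  have expand : ∀ x : V, (lam - ν) x = ∑ α ∈ ΔM, c α * R.coroot α x := by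
    intro x
    have h := LinearMap.congr_fun heq x
    rw [h, LinearMap.sum_apply]
    exact Finset.sum_congr rfl fun α _ => by rw [LinearMap.smul_apply, smul_eq_mul]
  have h1 : (lam - ν) ρ = ∑ α ∈ ΔM, c α := by
    rw [expand ρ]
    exact Finset.sum_congr rfl fun α hα => by
      rw [R.coroot_rho_simple hρ (hM hα), mul_one]
  have h2 : (lam - ν) (w.symm ρ) = ∑ α ∈ ΔM, c α * R.coroot (b α) ρ := by
    rw [expand (w.symm ρ)]
    refine Finset.sum_congr rfl fun α hα => ?_
    have h2a : R.coroot α (w.symm ρ) = R.coroot (b α) ρ :=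
      congrArg (fun f : Module.Dual ℚ V => f ρ) (hbe α hα)
    rw [h2a]
  have h3 : ∑ α ∈ ΔM, c α ≤ ∑ α ∈ ΔM, c α * R.coroot (b α) ρ := by
    refine Finset.sum_le_sum fun α hα => ?_
    exact le_mul_of_one_le_right (hc α) (R.one_le_coroot_rho hρ (hb α hα))
  have h4 : lam (w.symm ρ) ≤ lamdom ρ := by
    have hlam : lam (w.symm ρ) = lamdom ((u * w⁻¹) ρ) := by
      rw [← hue]
      show lam (w.symm ρ) = lam (u.symm (u (w.symm ρ)))
      rw [u.symm_apply_apply]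
    rw [hlam]
    exact R.dominant_pairing_max hρ hld (mul_mem hu (inv_mem hw))
  have h5 : (lam - ν) (w.symm ρ) = lam (w.symm ρ) - ν (w.symm ρ) := rfl
  have h6 : (lamdom - RootSystemData.dAct w ν) ρ = lamdom ρ - ν (w.symm ρ) := rfl
  linarith
end

section
/- Let u ∈ U(L) be an upper triangular unipotent matrix, let λ ∈ ℤⁿ, and let μ ∈ ℤⁿ be dominant. If u·D(λ) ∈ K·D(μ)·K, then λ⁺ ≤ μ, where λ⁺ denotes the decreasing rearrangement of λ; in particular λ₁+⋯+λₙ = μ₁+⋯+μₙ. (GLₙ case of the claim in Remark 2.? of the paper that non-emptiness of S_λ ∩ Gr_{G,≤μ} implies λ_dom ≤ (−μ)_dom, i.e. the classical comparison of the Iwasawa and Cartan decompositions.) -/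
noncomputable section

/-- The subring `R = k⟦t⟧` of the field of Laurent series `L = k((t))`, i.e. the image
of the power series ring. -/
def Rsub (k : Type) [Field k] : Subring (LaurentSeries k) :=
  (HahnSeries.ofPowerSeries ℤ k).range

/-- The element `t ∈ k((t))`. -/
def tL (k : Type) [Field k] : LaurentSeries k := HahnSeries.single (1 : ℤ) 1

/-- The diagonal matrix `D(λ) = diag(t^{λ₁}, …, t^{λₙ}) ∈ GLₙ(k((t)))`. -/
def Dmat (k : Type) [Field k] (n : ℕ) (lam : Fin n → ℤ) :
    Matrix (Fin n) (Fin n) (LaurentSeries k) :=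
  Matrix.diagonal fun i => (tL k) ^ (lam i)

/-- `K = GLₙ(k⟦t⟧) ⊆ GLₙ(k((t)))`: matrices with entries in `k⟦t⟧` admitting a (two-sided)
inverse with entries in `k⟦t⟧`. -/
def Kset (k : Type) [Field k] (n : ℕ) : Set (Matrix (Fin n) (Fin n) (LaurentSeries k)) :=
  {A | ∃ B : Matrix (Fin n) (Fin n) (LaurentSeries k),
    (∀ i j, A i j ∈ Rsub k) ∧ (∀ i j, B i j ∈ Rsub k) ∧ A * B = 1 ∧ B * A = 1}

/-- `U(L)`: upper triangular matrices over `k((t))` with all diagonal entries equal to 1. -/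
def Uset (k : Type) [Field k] (n : ℕ) : Set (Matrix (Fin n) (Fin n) (LaurentSeries k)) :=
  {u | (∀ i, u i i = 1) ∧ ∀ i j : Fin n, j < i → u i j = 0}

/-- A tuple `μ ∈ ℤⁿ` is dominant if `μ₁ ≥ μ₂ ≥ ⋯ ≥ μₙ`. -/
def DominantT {n : ℕ} (μ : Fin n → ℤ) : Prop := ∀ i j : Fin n, i ≤ j → μ j ≤ μ i

/-- The dominance order on `ℤⁿ`: `λ ≤ μ` iff all proper partial sums of `λ` are at most
those of `μ` and the total sums agree. -/
def leT {n : ℕ} (lam μ : Fin n → ℤ) : Prop :=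
  (∀ j : Fin n, ∑ i ∈ Finset.univ.filter (· ≤ j), lam i ≤
    ∑ i ∈ Finset.univ.filter (· ≤ j), μ i) ∧
  ∑ i, lam i = ∑ i, μ i

variable {k : Type} [Field k]

theorem mem_Rsub_order {x : LaurentSeries k} (hx : x ∈ Rsub k) : x = 0 ∨ 0 ≤ x.order := by
  obtain ⟨φ, rfl⟩ := hx
  by_cases h : (HahnSeries.ofPowerSeries ℤ k) φ = 0
  · exact Or.inl h
  · right
    by_contra hneg
    push_neg at hneg
    have h1 := HahnSeries.coeff_order_eq_zero.not.2 h
    have h2 : ((HahnSeries.ofPowerSeries ℤ k) φ).coeff (((HahnSeries.ofPowerSeries ℤ k) φ).order) = 0 := by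
      rw [PowerSeries.coeff_coe, if_pos hneg]
    exact h1 h2

theorem single_zpow (m : ℤ) : (tL k) ^ m = HahnSeries.single m (1 : k) := by
  have hnat : ∀ N : ℕ, (tL k) ^ N = HahnSeries.single (N : ℤ) (1 : k) := by
    intro N
    rw [tL, HahnSeries.single_pow]
    simp
  obtain ⟨N, rfl | rfl⟩ := m.eq_nat_or_neg
  · rw [zpow_natCast, hnat]
  · rw [zpow_neg, zpow_natCast, hnat]
    refine inv_eq_of_mul_eq_one_left ?_
    rw [HahnSeries.single_mul_single]
    simp

theorem tzpow_ne_zero (m : ℤ) : (tL k) ^ m ≠ 0 := by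
  rw [single_zpow]
  exact HahnSeries.single_ne_zero one_ne_zero

theorem order_tzpow (m : ℤ) : ((tL k) ^ m).order = m := by
  rw [single_zpow]; exact HahnSeries.order_single one_ne_zero

theorem prod_tzpow {ι : Type} (s : Finset ι) (c : ι → ℤ) :
    (∏ i ∈ s, (tL k) ^ (c i)) = HahnSeries.single (∑ i ∈ s, c i) (1 : k) := by
  classical
  induction s using Finset.cons_induction with
  | empty => simp
  | cons a s ha ih =>
    rw [Finset.prod_cons, Finset.sum_cons, ih, single_zpow, HahnSeries.single_mul_single, one_mul]

theorem order_sum {ι : Type} [DecidableEq ι] (s : Finset ι) (x : ι → LaurentSeries k) (c : ℤ)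
    (h : ∀ i ∈ s, x i = 0 ∨ c ≤ (x i).order) :
    (∑ i ∈ s, x i) = 0 ∨ c ≤ (∑ i ∈ s, x i).order := by
  induction s using Finset.cons_induction with
  | empty => simp
  | cons a s ha ih =>
    rw [Finset.sum_cons]
    have h1 := h a (Finset.mem_cons_self a s)
    have h2 := ih (fun i hi => h i (Finset.mem_cons_of_mem hi))
    by_cases hz : x a + ∑ i ∈ s, x i = 0
    · exact Or.inl hz
    · right
      rcases h1 with h1 | h1
      · rcases h2 with h2 | h2
        · exact absurd (by rw [h1, h2, add_zero]) hz
        · rwa [h1, zero_add] at *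
      · rcases h2 with h2 | h2
        · rwa [h2, add_zero] at *
        · calc c ≤ min (x a).order (∑ i ∈ s, x i).order := le_min h1 h2
            _ ≤ _ := HahnSeries.min_order_le_order_add hz

theorem det_mem_Rsub {m : ℕ} {A : Matrix (Fin m) (Fin m) (LaurentSeries k)}
    (hA : ∀ i j, A i j ∈ Rsub k) : A.det ∈ Rsub k := by
  rw [Matrix.det_apply]
  exact Subring.sum_mem _ fun σ _ => Subring.zsmul_mem _
    (Subring.prod_mem _ fun i _ => hA _ _) _

theorem det_mul_expand {m N : ℕ} (A : Matrix (Fin m) (Fin N) (LaurentSeries k))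
    (B : Matrix (Fin N) (Fin m) (LaurentSeries k)) :
    (A * B).det = ∑ f : Fin m → Fin N,
      (∏ p, A p (f p)) * (B.submatrix f id).det := by
  have h1 : (A * B).det
      = Matrix.detRowAlternating (fun p => ∑ s : Fin N, A p s • B s) := by
    congr 1
    ext p q
    simp [Matrix.mul_apply]
  rw [h1]
  have h2 := (Matrix.detRowAlternating (R := LaurentSeries k) (n := Fin m)).toMultilinearMap.map_sum
    (g := fun p s => A p s • B s)
  rw [show ((Matrix.detRowAlternating (R := LaurentSeries k) (n := Fin m)).toMultilinearMap
      fun p => ∑ s : Fin N, A p s • B s)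
    = Matrix.detRowAlternating (fun p => ∑ s : Fin N, A p s • B s) from rfl] at h2
  rw [h2]
  refine Finset.sum_congr rfl fun f _ => ?_
  have := (Matrix.detRowAlternating (R := LaurentSeries k) (n := Fin m)).toMultilinearMap.map_smul_univ
    (fun p => A p (f p)) (fun p => B (f p))
  show Matrix.detRowAlternating (fun p => A p (f p) • B (f p)) = _
  rw [show ((Matrix.detRowAlternating (R := LaurentSeries k) (n := Fin m)).toMultilinearMap
      fun p => A p (f p) • B (f p)) = Matrix.detRowAlternating (fun p => A p (f p) • B (f p)) from rfl] at this
  rw [this, smul_eq_mul]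
  rfl

/-- Sum of the last `m` entries. -/
def botSum {n : ℕ} (μ : Fin n → ℤ) (m : ℕ) : ℤ :=
  ∑ i ∈ Finset.univ.filter (fun i : Fin n => n - m ≤ (i : ℕ)), μ i

theorem strictMono_le_apply {j n : ℕ} {g : Fin j → Fin n} (hg : StrictMono g) (i : Fin j) :
    (i : ℕ) ≤ (g i : ℕ) := by
  cases j with
  | zero => exact i.elim0
  | succ jj =>
    induction i using Fin.induction with
    | zero => exact Nat.zero_le _
    | succ i ih =>
      have h2 : (g i.castSucc : ℕ) < (g i.succ : ℕ) := hg (Fin.castSucc_lt_succ (i := i))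
      simp only [Fin.coe_castSucc] at ih
      simp only [Fin.val_succ]
      omega

theorem strictMono_apply_le {j n : ℕ} {g : Fin j → Fin n} (hg : StrictMono g) (hjn : j ≤ n)
    (i : Fin j) : (g i : ℕ) ≤ n - j + (i : ℕ) := by
  have hrev : StrictMono (fun i : Fin j => Fin.rev (g (Fin.rev i))) := by
    intro a b hab
    exact Fin.rev_lt_rev.mpr (hg (Fin.rev_lt_rev.mpr hab))
  have h1 := strictMono_le_apply hrev (Fin.rev i)
  simp only [Fin.rev_rev, Fin.val_rev] at h1
  have h2 : (g i : ℕ) < n := (g i).isLt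
  have h3 : (i : ℕ) < j := i.isLt
  omega

theorem botSum_eq {n : ℕ} (μ : Fin n → ℤ) (m : ℕ) (hm : m ≤ n) :
    botSum μ m = ∑ i : Fin m, μ ⟨n - m + (i : ℕ), by omega⟩ := by
  rw [botSum]
  refine (Finset.sum_nbij (fun i : Fin m => (⟨n - m + (i : ℕ), by omega⟩ : Fin n)) ?_ ?_ ?_ ?_).symm
  · intro a ha
    simp only [Finset.mem_filter, Finset.mem_univ, true_and]
    omega
  · intro a _ b _ hab
    simp only [Fin.mk.injEq] at hab
    exact Fin.ext (by omega)
  · intro x hx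
    have hx' : n - m ≤ (x : ℕ) := by
      simp only [Finset.coe_filter, Finset.mem_univ, true_and, Set.mem_setOf_eq] at hx
      exact hx
    have hxn : (x : ℕ) < n := x.isLt
    refine ⟨⟨(x : ℕ) - (n - m), by omega⟩, Finset.mem_coe.mpr (Finset.mem_univ _), ?_⟩
    exact Fin.ext (by simp only []; show n - m + ((x:ℕ) - (n - m)) = (x:ℕ); omega)
  · intro a _
    rfl

theorem botSum_le_sum {n : ℕ} {μ : Fin n → ℤ} (hμ : DominantT μ) (T : Finset (Fin n)) :
    botSum μ T.card ≤ ∑ i ∈ T, μ i := by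
  classical
  set m := T.card with hm
  have hmn : m ≤ n := by
    rw [hm]
    simpa using Finset.card_le_card (Finset.subset_univ T)
  have he : ∑ i ∈ T, μ i = ∑ i : Fin m, μ ((T.orderIsoOfFin hm.symm i : Fin n)) := by
    rw [← Finset.sum_coe_sort T μ]
    exact (Equiv.sum_comp (T.orderIsoOfFin hm.symm).toEquiv (fun x => μ (x : Fin n))).symm
  rw [he, botSum_eq μ m hmn]
  refine Finset.sum_le_sum fun i _ => ?_
  have hg : StrictMono (fun i : Fin m => ((T.orderIsoOfFin hm.symm i : Fin n))) := by
    intro a b hab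
    exact (T.orderIsoOfFin hm.symm).lt_iff_lt.mpr hab
  have h1 := strictMono_apply_le hg hmn i
  exact hμ _ _ (by rw [Fin.le_def]; exact h1)

theorem unipotent_det {m : ℕ} {w : Matrix (Fin m) (Fin m) (LaurentSeries k)}
    (h1 : ∀ i, w i i = 1) (h2 : ∀ i j : Fin m, j < i → w i j = 0) : w.det = 1 := by
  rw [Matrix.det_of_upperTriangular (fun i j hij => h2 i j hij)]
  simp [h1]

theorem cartan_minor {n j : ℕ} {u : Matrix (Fin n) (Fin n) (LaurentSeries k)}
    (hu : u ∈ Uset k n) (lam : Fin n → ℤ) {e : Fin j → Fin n} (he : StrictMono e) :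
    ((u * Dmat k n lam).submatrix e e).det
      = HahnSeries.single (∑ i, lam (e i)) (1 : k) := by
  have h1 : (u * Dmat k n lam).submatrix e e
      = u.submatrix e e * Matrix.diagonal (fun p => (tL k) ^ (lam (e p))) := by
    ext p q
    simp [Dmat, Matrix.mul_diagonal, Matrix.submatrix_apply]
  have hdet : (u.submatrix e e).det = 1 :=
    unipotent_det (w := u.submatrix e e) (fun i => hu.1 (e i))
      (fun p q hpq => hu.2 (e p) (e q) (he hpq))
  rw [h1, Matrix.det_mul, Matrix.det_diagonal, prod_tzpow, hdet, one_mul]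

theorem key_ineq {n : ℕ} {u : Matrix (Fin n) (Fin n) (LaurentSeries k)} (hu : u ∈ Uset k n)
    {lam μ : Fin n → ℤ} (hμ : DominantT μ)
    {k₁ k₂ : Matrix (Fin n) (Fin n) (LaurentSeries k)}
    (hk₁ : k₁ ∈ Kset k n) (hk₂ : k₂ ∈ Kset k n)
    (heq : u * Dmat k n lam = k₁ * Dmat k n μ * k₂) (T : Finset (Fin n)) :
    botSum μ T.card ≤ ∑ i ∈ T, lam i := by
  classical
  obtain ⟨B₁, hk₁R, hB₁R, hk₁B₁, hB₁k₁⟩ := hk₁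
  obtain ⟨B₂, hk₂R, hB₂R, hk₂B₂, hB₂k₂⟩ := hk₂
  set j := T.card with hj
  have hmn : j ≤ n := by rw [hj]; simpa using Finset.card_le_card (Finset.subset_univ T)
  set e : Fin j → Fin n := fun i => (T.orderIsoOfFin hj.symm i : Fin n) with he_def
  have he : StrictMono e := fun a b hab => (T.orderIsoOfFin hj.symm).lt_iff_lt.mpr hab
  have hsum : ∑ i ∈ T, lam i = ∑ i : Fin j, lam (e i) := by
    rw [← Finset.sum_coe_sort T lam]
    exact (Equiv.sum_comp (T.orderIsoOfFin hj.symm).toEquiv (fun x => lam (x : Fin n))).symm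
  have hL : ((u * Dmat k n lam).submatrix e e).det
      = HahnSeries.single (∑ i, lam (e i)) (1 : k) := cartan_minor ⟨hu.1, hu.2⟩ lam he
  set P := k₁.submatrix e (id : Fin n → Fin n) with hP
  set Q := (Dmat k n μ * k₂).submatrix (id : Fin n → Fin n) e with hQ
  have hPQ : (u * Dmat k n lam).submatrix e e = P * Q := by
    rw [heq, mul_assoc]
    ext p q
    simp [Matrix.mul_apply, Matrix.submatrix_apply, hP, hQ]
  have hterm : ∀ f ∈ (Finset.univ : Finset (Fin j → Fin n)),
      ((∏ p, P p (f p)) * (Q.submatrix f id).det) = 0 ∨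
        botSum μ j ≤ ((∏ p, P p (f p)) * (Q.submatrix f id).det).order := by
    intro f _
    have hQf : (Q.submatrix f id).det
        = (∏ p, (tL k) ^ (μ (f p))) * (k₂.submatrix f e).det := by
      have hh : Q.submatrix f id
          = Matrix.of (fun p q => (tL k) ^ (μ (f p)) * (k₂.submatrix f e) p q) := by
        ext p q
        simp [hQ, Dmat, Matrix.diagonal_mul, Matrix.submatrix_apply]
      rw [hh, Matrix.det_mul_column]
    by_cases hfi : Function.Injective f
    · set a := ∏ p, P p (f p) with hadef
      set d := (k₂.submatrix f e).det with hddef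
      have haR : a ∈ Rsub k := Subring.prod_mem _ (fun p _ => hk₁R _ _)
      have hdR : d ∈ Rsub k := det_mem_Rsub (fun p q => hk₂R _ _)
      by_cases ha : a = 0
      · left; rw [ha, zero_mul]
      by_cases hd : d = 0
      · left; rw [hQf, hd, mul_zero, mul_zero]
      right
      have hbs : (∏ p, (tL k) ^ (μ (f p)))
          = HahnSeries.single (∑ p, μ (f p)) (1 : k) := prod_tzpow _ _
      have hbne : (∏ p, (tL k) ^ (μ (f p))) ≠ 0 := by
        rw [hbs]; exact HahnSeries.single_ne_zero one_ne_zero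
      have horda : 0 ≤ a.order := (mem_Rsub_order haR).resolve_left ha
      have hordd : 0 ≤ d.order := (mem_Rsub_order hdR).resolve_left hd
      have hS : botSum μ j ≤ ∑ p, μ (f p) := by
        have h1 : ∑ p, μ (f p) = ∑ x ∈ Finset.univ.image f, μ x :=
          (Finset.sum_image (fun x _ y _ hxy => hfi hxy)).symm
        have h2 : (Finset.univ.image f).card = j := by
          rw [Finset.card_image_of_injective _ hfi, Finset.card_univ, Fintype.card_fin]
        calc botSum μ j = botSum μ (Finset.univ.image f).card := by rw [h2]
          _ ≤ ∑ x ∈ Finset.univ.image f, μ x := botSum_le_sum hμ _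
          _ = ∑ p, μ (f p) := h1.symm
      rw [hQf, HahnSeries.order_mul ha (mul_ne_zero hbne hd),
        HahnSeries.order_mul hbne hd, hbs, HahnSeries.order_single one_ne_zero]
      omega
    · left
      obtain ⟨p, p', hfpp, hne⟩ := Function.not_injective_iff.mp hfi
      have : (k₂.submatrix f e).det = 0 := by
        refine Matrix.det_zero_of_row_eq hne ?_
        funext q
        simp [Matrix.submatrix_apply, hfpp]
      rw [hQf, this, mul_zero, mul_zero]
  have horder := order_sum Finset.univ
    (fun f : Fin j → Fin n => (∏ p, P p (f p)) * (Q.submatrix f id).det) (botSum μ j) hterm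
  rw [← det_mul_expand P Q, ← hPQ, hL] at horder
  rcases horder with h0 | hord
  · exact absurd h0 (HahnSeries.single_ne_zero one_ne_zero)
  · rw [HahnSeries.order_single one_ne_zero] at hord
    rw [hsum]
    exact hord

theorem det_K_order {n : ℕ} {A : Matrix (Fin n) (Fin n) (LaurentSeries k)}
    (hA : A ∈ Kset k n) : A.det ≠ 0 ∧ A.det.order = 0 := by
  obtain ⟨B, hAR, hBR, hAB, hBA⟩ := hA
  have h1 : A.det * B.det = 1 := by rw [← Matrix.det_mul, hAB, Matrix.det_one]
  have hAne : A.det ≠ 0 := left_ne_zero_of_mul_eq_one h1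
  have hBne : B.det ≠ 0 := right_ne_zero_of_mul_eq_one h1
  have h2 : A.det.order + B.det.order = 0 := by
    rw [← HahnSeries.order_mul hAne hBne, h1, HahnSeries.order_one]
  have h3 := (mem_Rsub_order (det_mem_Rsub hAR)).resolve_left hAne
  have h4 := (mem_Rsub_order (det_mem_Rsub hBR)).resolve_left hBne
  exact ⟨hAne, by omega⟩

theorem total_sum_eq {n : ℕ} {u : Matrix (Fin n) (Fin n) (LaurentSeries k)} (hu : u ∈ Uset k n)
    {lam μ : Fin n → ℤ} {k₁ k₂ : Matrix (Fin n) (Fin n) (LaurentSeries k)}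
    (hk₁ : k₁ ∈ Kset k n) (hk₂ : k₂ ∈ Kset k n)
    (heq : u * Dmat k n lam = k₁ * Dmat k n μ * k₂) :
    ∑ i, lam i = ∑ i, μ i := by
  have hD : ∀ ν : Fin n → ℤ, (Dmat k n ν).det = HahnSeries.single (∑ i, ν i) (1 : k) := by
    intro ν
    rw [Dmat, Matrix.det_diagonal, prod_tzpow]
  have hLdet : (u * Dmat k n lam).det = HahnSeries.single (∑ i, lam i) (1 : k) := by
    rw [Matrix.det_mul, unipotent_det hu.1 hu.2, one_mul, hD]
  obtain ⟨h1ne, h1ord⟩ := det_K_order hk₁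
  obtain ⟨h2ne, h2ord⟩ := det_K_order hk₂
  have hμne : (Dmat k n μ).det ≠ 0 := by
    rw [hD]; exact HahnSeries.single_ne_zero one_ne_zero
  have hRdet : (k₁ * Dmat k n μ * k₂).det.order = ∑ i, μ i := by
    rw [Matrix.det_mul, Matrix.det_mul,
      HahnSeries.order_mul (mul_ne_zero h1ne hμne) h2ne,
      HahnSeries.order_mul h1ne hμne, h1ord, h2ord, hD,
      HahnSeries.order_single one_ne_zero]
    ring
  rw [← heq, hLdet, HahnSeries.order_single one_ne_zero] at hRdet
  exact hRdet

/-- Comparison of the Iwasawa and Cartan decompositions for `GLₙ(k((t)))`: if `u` is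
upper triangular unipotent, `μ` is dominant, and `u·D(λ) ∈ K·D(μ)·K`, then `λ⁺ ≤ μ`,
where `λ⁺` is the decreasing rearrangement of `λ` (in particular the entries of `λ` and
`μ` have the same sum). -/
theorem iwasawa_cartan_comparison {k : Type} [Field k] (n : ℕ)
    (u : Matrix (Fin n) (Fin n) (LaurentSeries k)) (hu : u ∈ Uset k n)
    (lam μ : Fin n → ℤ) (hμ : DominantT μ)
    (h : ∃ k₁ ∈ Kset k n, ∃ k₂ ∈ Kset k n, u * Dmat k n lam = k₁ * Dmat k n μ * k₂) :
    ∃ σ : Equiv.Perm (Fin n), DominantT (lam ∘ σ) ∧ leT (lam ∘ σ) μ := by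
  classical
  obtain ⟨k₁, hk₁, k₂, hk₂, heq⟩ := h
  have htot : ∑ i, lam i = ∑ i, μ i := total_sum_eq hu hk₁ hk₂ heq
  have hkey : ∀ T : Finset (Fin n), botSum μ T.card ≤ ∑ i ∈ T, lam i :=
    key_ineq hu hμ hk₁ hk₂ heq
  set σ : Equiv.Perm (Fin n) := (Fin.revPerm).trans (Tuple.sort lam) with hσ
  have hσtot : ∑ i, (lam ∘ σ) i = ∑ i, lam i := by
    exact Fintype.sum_equiv σ _ _ (fun i => rfl)
  refine ⟨σ, ?_, ?_, by rw [hσtot, htot]⟩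
  · intro i j hij
    have hm := Tuple.monotone_sort lam
    exact hm (Fin.rev_le_rev.mpr hij)
  · intro j
    set m := n - ((j : ℕ) + 1) with hm
    have hjn : (j : ℕ) < n := j.isLt
    have hfilter_eq : (Finset.univ.filter (fun i : Fin n => ¬ i ≤ j))
        = Finset.univ.filter (fun i : Fin n => n - m ≤ (i : ℕ)) := by
      ext i
      simp only [Finset.mem_filter, Finset.mem_univ, true_and, not_le, Fin.lt_def, hm]
      have : (i : ℕ) < n := i.isLt
      omega
    have hμside : ∑ i ∈ Finset.univ.filter (fun i : Fin n => ¬ i ≤ j), μ i = botSum μ m := by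
      rw [hfilter_eq, botSum]
    set S := (Finset.univ.filter (fun i : Fin n => ¬ i ≤ j)).image σ with hS
    have hcardfilter : (Finset.univ.filter (fun i : Fin n => ¬ i ≤ j)).card = m := by
      have h5 : Finset.univ.filter (fun i : Fin n => i ≤ j) = Finset.Iic j := by
        ext i; simp
      have hadd := Finset.card_filter_add_card_filter_not
        (s := (Finset.univ : Finset (Fin n))) (fun i : Fin n => i ≤ j)
      rw [h5, Fin.card_Iic, Finset.card_univ, Fintype.card_fin] at hadd
      omega
    have hcardS : S.card = m := by
      rw [hS, Finset.card_image_of_injective _ σ.injective, hcardfilter]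
    have hlamside : ∑ x ∈ S, lam x
        = ∑ i ∈ Finset.univ.filter (fun i : Fin n => ¬ i ≤ j), (lam ∘ σ) i := by
      rw [hS, Finset.sum_image (fun x _ y _ hxy => σ.injective hxy)]
      rfl
    have hk := hkey S
    rw [hcardS, hlamside] at hk
    have h1 := Finset.sum_filter_add_sum_filter_not Finset.univ (fun i : Fin n => i ≤ j) (lam ∘ σ)
    have h2 := Finset.sum_filter_add_sum_filter_not Finset.univ (fun i : Fin n => i ≤ j) μ
    rw [hσtot, htot] at h1
    omega

end
end
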